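/- arXiv:2112.05805 — 3 statements merged into one kernel-verified Lean document; each statement's English description precedes it below -/
import Mathlib

section
/- For every integer n ≥ 3: w_n(A_{0,j}) = A_{j,n} for all 1 ≤ j ≤ n-1, and w_n(A_{0,n}) = A_{0,n} z_n². -/
namespace Braids

/-- The braid relations on the generators `σ_1, …, σ_{n-1}` (indexed by `Fin (n-1)`). -/
def braidRels (n : ℕ) : Set (FreeGroup (Fin (n - 1))) :=
  {r | (∃ i j : Fin (n - 1), (i : ℕ) + 1 = (j : ℕ) ∧
          r = .of i * .of j * .of i * (.of j * .of i * .of j)⁻¹) ∨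
       (∃ i j : Fin (n - 1), (i : ℕ) + 2 ≤ (j : ℕ) ∧
          r = .of i * .of j * (.of j * .of i)⁻¹)}

/-- The Artin braid group on `n` strands, presented by generators and the braid relations. -/
abbrev BraidGroup (n : ℕ) := PresentedGroup (braidRels n)

/-- The Artin generator `σ_{i+1}` (0-indexed). -/
def σ {n : ℕ} (i : Fin (n - 1)) : BraidGroup n := PresentedGroup.of i

/-- The transposition `(i, i+1)` associated to the generator `σ`. -/
def swapGen (n : ℕ) (i : Fin (n - 1)) : Equiv.Perm (Fin n) :=
  Equiv.swap ⟨i.1, by have := i.2; omega⟩ ⟨i.1 + 1, by have := i.2; omega⟩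

private lemma swap_braid {α : Type*} [DecidableEq α] {a b c : α}
    (hab : a ≠ b) (hac : a ≠ c) (hbc : b ≠ c) :
    Equiv.swap a b * Equiv.swap b c * Equiv.swap a b =
      Equiv.swap b c * Equiv.swap a b * Equiv.swap b c := by
  have h1 := Equiv.swap_apply_apply (Equiv.swap a b) b c
  rw [Equiv.swap_apply_right, Equiv.swap_apply_of_ne_of_ne hac.symm hbc.symm,
    Equiv.swap_inv] at h1
  have h2 := Equiv.swap_apply_apply (Equiv.swap b c) a b
  rw [Equiv.swap_apply_of_ne_of_ne hab hac, Equiv.swap_apply_left, Equiv.swap_inv] at h2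
  rw [← h1, ← h2]

private lemma swap_commute {α : Type*} [DecidableEq α] {a b c d : α}
    (hca : c ≠ a) (hcb : c ≠ b) (hda : d ≠ a) (hdb : d ≠ b) :
    Equiv.swap a b * Equiv.swap c d = Equiv.swap c d * Equiv.swap a b := by
  have h := Equiv.swap_apply_apply (Equiv.swap a b) c d
  rw [Equiv.swap_apply_of_ne_of_ne hca hcb, Equiv.swap_apply_of_ne_of_ne hda hdb,
    Equiv.swap_inv] at h
  nth_rewrite 1 [h]
  rw [← mul_assoc, ← mul_assoc, Equiv.swap_mul_self, one_mul]

theorem braidRels_hold (n : ℕ) :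
    ∀ r ∈ braidRels n, FreeGroup.lift (swapGen n) r = 1 := by
  rintro r (⟨i, j, hij, rfl⟩ | ⟨i, j, hij, rfl⟩) <;>
    simp only [map_mul, map_inv, FreeGroup.lift_apply_of, mul_inv_eq_one]
  · have hj : swapGen n j =
        Equiv.swap (⟨i.1 + 1, by have := i.2; have := j.2; omega⟩ : Fin n)
          ⟨i.1 + 2, by have := j.2; omega⟩ := by
      unfold swapGen
      congr 1 <;> simp only [Fin.mk.injEq] <;> omega
    rw [hj]
    exact swap_braid (by simp only [ne_eq, Fin.mk.injEq]; omega)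
      (by simp only [ne_eq, Fin.mk.injEq]; omega) (by simp only [ne_eq, Fin.mk.injEq]; omega)
  · exact swap_commute (by simp only [ne_eq, Fin.mk.injEq]; omega)
      (by simp only [ne_eq, Fin.mk.injEq]; omega) (by simp only [ne_eq, Fin.mk.injEq]; omega)
      (by simp only [ne_eq, Fin.mk.injEq]; omega)

/-- The canonical projection from the braid group to the symmetric group,
sending `σ_i` to the transposition `(i, i+1)`. -/
def toPerm (n : ℕ) : BraidGroup n →* Equiv.Perm (Fin n) :=
  PresentedGroup.toGroup (braidRels_hold n)

/-- The pure braid group on `n` strands, as a subgroup of the braid group. -/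
def PureBraid (n : ℕ) : Subgroup (BraidGroup n) := (toPerm n).ker

/-- The pure braid group `P n` as a group. -/
abbrev P (n : ℕ) := ↥(PureBraid n)

/-- The generator `σ_k` (1-indexed, junk value `1` for out-of-range `k`). -/
def sig (n k : ℕ) : BraidGroup n :=
  if h : 1 ≤ k ∧ k ≤ n - 1 then σ ⟨k - 1, by omega⟩ else 1

/-- The conjugating word `σ_{j-1} σ_{j-2} ⋯ σ_{i+1}`. -/
def chain (n i j : ℕ) : BraidGroup n :=
  (((List.range (j - i - 1)).map (fun t => sig n (j - 1 - t))).prod)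

/-- The pure braid generator `A_{i,j} = σ_{j-1} ⋯ σ_{i+1} σ_i² σ_{i+1}⁻¹ ⋯ σ_{j-1}⁻¹`
(for `1 ≤ i < j ≤ n`; junk values otherwise), as an element of the braid group. -/
def Agen (n i j : ℕ) : BraidGroup n := chain n i j * (sig n i) ^ 2 * (chain n i j)⁻¹

theorem toPerm_sig_sq (n k : ℕ) : (toPerm n (sig n k)) ^ 2 = 1 := by
  unfold sig
  split
  · show (toPerm n (PresentedGroup.of _)) ^ 2 = 1
    rw [toPerm, PresentedGroup.toGroup.of]
    simp [swapGen, sq, Equiv.swap_mul_self]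
  · simp

theorem Agen_mem (n i j : ℕ) : Agen n i j ∈ PureBraid n := by
  have : toPerm n (Agen n i j) = 1 := by
    unfold Agen
    rw [map_mul, map_mul, map_inv, map_pow, toPerm_sig_sq, mul_one, mul_inv_cancel]
  exact this

/-- `A_{i,j}` extended symmetrically: `A_{j,i} := A_{i,j}` and `A_{i,i} := 1`. -/
def ASym (n i j : ℕ) : BraidGroup n := if i = j then 1 else Agen n (min i j) (max i j)

theorem ASym_mem (n i j : ℕ) : ASym n i j ∈ PureBraid n := by
  unfold ASym
  split
  · exact one_mem _
  · exact Agen_mem n _ _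

/-- `A_{0,j} := (A_{1,j} A_{2,j} ⋯ A_{n,j})⁻¹`, as an element of the braid group. -/
def A0gen (n j : ℕ) : BraidGroup n :=
  (((List.range n).map (fun t => ASym n (t + 1) j)).prod)⁻¹

theorem A0gen_mem (n j : ℕ) : A0gen n j ∈ PureBraid n := by
  refine inv_mem (list_prod_mem ?_)
  intro x hx
  simp only [List.mem_map] at hx
  obtain ⟨t, -, rfl⟩ := hx
  exact ASym_mem n _ _

/-- The pure braid generator `A_{i,j}` (with the conventions `A_{j,i} = A_{i,j}`, `A_{i,i} = 1`),
as an element of the pure braid group. -/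
def A (n i j : ℕ) : P n := ⟨ASym n i j, ASym_mem n i j⟩

/-- The element `A_{0,j} = (A_{1,j} A_{2,j} ⋯ A_{n,j})⁻¹` of the pure braid group. -/
def A₀ (n j : ℕ) : P n := ⟨A0gen n j, A0gen_mem n j⟩

/-- The full twist `z_n = A_{1,2} (A_{1,3} A_{2,3}) ⋯ (A_{1,n} A_{2,n} ⋯ A_{n-1,n})`. -/
def fullTwist (n : ℕ) : P n :=
  (((List.range (n - 1)).map
    (fun jt => ((List.range (jt + 1)).map (fun it => A n (it + 1) (jt + 2))).prod)).prod)

/-- The reindexing map associated with removing the `k`-th strand. -/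
def phi (k m : ℕ) : ℕ := if m < k then m else m - 1

/-- `d` is the `k`-th strand-removal homomorphism `P n → P (n-1)`: it is determined by
`d (A_{i,j}) = 1` if `k ∈ {i, j}`, and `d (A_{i,j}) = A_{φ(i),φ(j)}` otherwise. -/
def IsStrandRemoval (n k : ℕ) (d : P n →* P (n - 1)) : Prop :=
  ∀ i j : ℕ, 1 ≤ i → i < j → j ≤ n →
    d (A n i j) = if k = i ∨ k = j then 1 else A (n - 1) (phi k i) (phi k j)

/-- The Brunnian subgroup `Brun_n = ∩_{k=1}^n Ker (d_k)`, for a family `d` of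
strand-removal homomorphisms. -/
def Brunnian (n : ℕ) (d : ℕ → (P n →* P (n - 1))) : Subgroup (P n) :=
  ⨅ k ∈ Finset.Icc 1 n, (d k).ker

/-- `θ` is the automorphism `θ_n` of `P n`: it fixes `A_{i,j}` for `2 ≤ i < j ≤ n` and sends
`A_{1,j}` to `A_{1,j}⁻¹ A_{0,j} A_{1,j}`. -/
def IsTheta (n : ℕ) (θ : MulAut (P n)) : Prop :=
  (∀ i j : ℕ, 2 ≤ i → i < j → j ≤ n → θ (A n i j) = A n i j) ∧
  (∀ j : ℕ, 1 < j → j ≤ n → θ (A n 1 j) = (A n 1 j)⁻¹ * A₀ n j * A n 1 j)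

/-- The homomorphism `∂_n := d_1 ∘ θ_n : P n → P (n-1)`. -/
def del (n : ℕ) (d : ℕ → (P n →* P (n - 1))) (θ : MulAut (P n)) : P n →* P (n - 1) :=
  (d 1).comp θ.toMonoidHom

/-- `Z_n := Brun_n ∩ Ker ∂_n`. -/
def Zgrp (n : ℕ) (d : ℕ → (P n →* P (n - 1))) (θ : MulAut (P n)) : Subgroup (P n) :=
  Brunnian n d ⊓ (del n d θ).ker

/-- `Bd_n := ∂_{n+1}(Brun_{n+1})`, built from strand-removal data on `n+1` strands. -/
def Bd (n : ℕ) (D : ℕ → (P (n + 1) →* P n)) (Θ : MulAut (P (n + 1))) : Subgroup (P n) :=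
  Subgroup.map (del (n + 1) D Θ) (Brunnian (n + 1) D)

/-- `w` is the automorphism `w_n` of `P n`: it fixes `A_{i,j}` for `1 ≤ i < j ≤ n-1` and sends
`A_{i,n}` to `A_{i,n} A_{0,i} A_{i,n}⁻¹` for `1 ≤ i ≤ n-1`. -/
def IsW (n : ℕ) (w : MulAut (P n)) : Prop :=
  (∀ i j : ℕ, 1 ≤ i → i < j → j ≤ n - 1 → w (A n i j) = A n i j) ∧
  (∀ i : ℕ, 1 ≤ i → i ≤ n - 1 → w (A n i n) = A n i n * A₀ n i * (A n i n)⁻¹)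



namespace Work

open Braids

variable {n : ℕ}

lemma presented_rel {r : FreeGroup (Fin (n-1))} (h : r ∈ braidRels n) :
    (QuotientGroup.mk' (Subgroup.normalClosure (braidRels n))) r = (1 : BraidGroup n) := by
  refine (QuotientGroup.eq_one_iff r).mpr ?_
  exact Subgroup.subset_normalClosure h

lemma sigma_braid {i j : Fin (n-1)} (h : (i:ℕ)+1 = j) :
    σ i * σ j * σ i = σ j * σ i * σ j := by
  have h2 := presented_rel (n := n) (Or.inl ⟨i, j, h, rfl⟩)
  simp only [map_mul, map_inv, mul_inv_eq_one] at h2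
  exact mul_inv_eq_one.mp h2

lemma sigma_comm {i j : Fin (n-1)} (h : (i:ℕ)+2 ≤ j) :
    σ i * σ j = σ j * σ i := by
  have h2 := presented_rel (n := n) (Or.inr ⟨i, j, h, rfl⟩)
  simp only [map_mul, map_inv, mul_inv_eq_one] at h2
  exact mul_inv_eq_one.mp h2

lemma sig_eq_sigma {k : ℕ} (h1 : 1 ≤ k) (h2 : k ≤ n - 1) :
    sig n k = σ ⟨k - 1, by omega⟩ := by
  simp [sig, h1, h2]

lemma sig_out {k : ℕ} (h : ¬ (1 ≤ k ∧ k ≤ n - 1)) : sig n k = 1 := by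
  simp [sig, h]

lemma braid_rel {k : ℕ} (h1 : 1 ≤ k) (h2 : k + 1 ≤ n - 1) :
    sig n k * sig n (k+1) * sig n k = sig n (k+1) * sig n k * sig n (k+1) := by
  rw [sig_eq_sigma h1 (by omega), sig_eq_sigma (by omega : 1 ≤ k+1) h2]
  exact sigma_braid (by simp; omega)

lemma sig_comm {i j : ℕ} (h : i + 2 ≤ j) : Commute (sig n i) (sig n j) := by
  by_cases hi : 1 ≤ i ∧ i ≤ n - 1
  · by_cases hj : 1 ≤ j ∧ j ≤ n - 1
    · rw [sig_eq_sigma hi.1 hi.2, sig_eq_sigma hj.1 hj.2]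
      exact sigma_comm (by simp; omega)
    · rw [sig_out hj]; exact Commute.one_right _
  · rw [sig_out hi]; exact Commute.one_left _

/-- ascending chain `σ_a σ_{a+1} ⋯ σ_{a+k-1}` -/
def ascK (n a : ℕ) : ℕ → BraidGroup n
  | 0 => 1
  | k+1 => ascK n a k * sig n (a+k)

/-- descending chain `σ_b σ_{b-1} ⋯ σ_{b-k+1}` -/
def descK (n b : ℕ) : ℕ → BraidGroup n
  | 0 => 1
  | k+1 => descK n b k * sig n (b-k)

lemma ascK_zero (a : ℕ) : ascK n a 0 = 1 := rfl
lemma ascK_succ (a k : ℕ) : ascK n a (k+1) = ascK n a k * sig n (a+k) := rfl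
lemma descK_zero (b : ℕ) : descK n b 0 = 1 := rfl
lemma descK_succ (b k : ℕ) : descK n b (k+1) = descK n b k * sig n (b-k) := rfl

lemma ascK_first (a k : ℕ) : ascK n a (k+1) = sig n a * ascK n (a+1) k := by
  induction k with
  | zero => simp [ascK]
  | succ k ih =>
      have e : a + 1 + k = a + (k+1) := by omega
      rw [ascK_succ, ih, ascK_succ, e, mul_assoc]

lemma descK_first (b k : ℕ) (h : k ≤ b) :
    descK n (b+1) (k+1) = sig n (b+1) * descK n b k := by
  induction k with
  | zero => simp [descK]
  | succ k ih =>
      have e : b + 1 - (k + 1) = b - k := by omega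
      rw [descK_succ, ih (by omega), descK_succ, e, mul_assoc]

lemma comm_ascK {x : BraidGroup n} {a k : ℕ}
    (h : ∀ t, t < k → Commute x (sig n (a+t))) : Commute x (ascK n a k) := by
  induction k with
  | zero => exact Commute.one_right _
  | succ k ih => exact (ih (fun t ht => h t (by omega))).mul_right (h k (by omega))

lemma comm_descK {x : BraidGroup n} {b k : ℕ}
    (h : ∀ t, t < k → Commute x (sig n (b-t))) : Commute x (descK n b k) := by
  induction k with
  | zero => exact Commute.one_right _
  | succ k ih => exact (ih (fun t ht => h t (by omega))).mul_right (h k (by omega))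

lemma asc_shift {a k i : ℕ} (ha : 1 ≤ a) (hk : a + k ≤ n) (hi1 : a ≤ i)
    (hi2 : i + 2 ≤ a + k) :
    ascK n a k * sig n i = sig n (i+1) * ascK n a k := by
  induction k with
  | zero => omega
  | succ k ih =>
      rcases Nat.lt_or_ge (i+2) (a+k+1) with hc | hc
      · -- i + 2 ≤ a + k : commute with last letter, use ih
        rw [ascK_succ, mul_assoc, (sig_comm (by omega : i + 2 ≤ a + k)).symm.eq,
          ← mul_assoc, ih (by omega) (by omega), mul_assoc]
      · -- i + 1 = a + k
        have hik : i = a + k - 1 := by omega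
        obtain ⟨k', rfl⟩ : ∃ k', k = k' + 1 := ⟨k - 1, by omega⟩
        have hia : i = a + k' := by omega
        subst hia
        rw [ascK_succ, ascK_succ,
          show a + (k'+1) = a + k' + 1 from rfl]
        have hb : sig n (a+k') * sig n (a+k'+1) * sig n (a+k') =
            sig n (a+k'+1) * sig n (a+k') * sig n (a+k'+1) :=
          braid_rel (by omega) (by omega)
        have hcomm : (ascK n a k') * (sig n (a+k'+1)) = (sig n (a+k'+1)) * (ascK n a k') :=
          (comm_ascK (fun t (ht : t < k') => (sig_comm (by omega : a + t + 2 ≤ a + k' + 1)).symm)).symm.eq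
        calc ascK n a k' * sig n (a+k') * sig n (a+k'+1) * sig n (a+k')
            = ascK n a k' * (sig n (a+k') * sig n (a+k'+1) * sig n (a+k')) := by
              simp only [mul_assoc]
          _ = ascK n a k' * (sig n (a+k'+1) * (sig n (a+k') * sig n (a+k'+1))) := by
              rw [hb, mul_assoc]
          _ = sig n (a+k'+1) * (ascK n a k' * sig n (a+k') * sig n (a+k'+1)) := by
              rw [← mul_assoc, hcomm]; simp only [mul_assoc]

lemma desc_shift {b k i : ℕ} (hb : b + 1 ≤ n) (hkb : k ≤ b) (hi1 : i ≤ b)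
    (hi2 : b + 2 ≤ i + k) :
    descK n b k * sig n i = sig n (i-1) * descK n b k := by
  induction k with
  | zero => omega
  | succ k ih =>
      rcases Nat.lt_or_ge (b+2) (i+k+1) with hc | hc
      · rw [descK_succ, mul_assoc, (sig_comm (by omega : b - k + 2 ≤ i)).eq,
          ← mul_assoc, ih (by omega) (by omega), mul_assoc]
      · -- i = b - k + 1
        have hik : i = b - k + 1 := by omega
        obtain ⟨k', rfl⟩ : ∃ k', k = k' + 1 := ⟨k - 1, by omega⟩
        rw [descK_succ, descK_succ]
        have e1 : b - k' = i := by omega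
        have e2 : b - (k'+1) = i - 1 := by omega
        rw [e1, e2]
        have hb' : sig n (i-1) * sig n i * sig n (i-1) =
            sig n i * sig n (i-1) * sig n i := by
          have := braid_rel (n := n) (k := i-1) (by omega) (by omega)
          rwa [show i - 1 + 1 = i by omega] at this
        have hcomm : descK n b k' * sig n (i-1) = sig n (i-1) * descK n b k' :=
          (comm_descK (fun t (ht : t < k') => (sig_comm (by omega : i - 1 + 2 ≤ b - t)))).symm.eq
        calc descK n b k' * sig n i * sig n (i-1) * sig n i
            = descK n b k' * (sig n (i-1) * (sig n i * sig n (i-1))) := by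
              simp only [mul_assoc]; congr 1
              simpa [mul_assoc] using hb'.symm
          _ = sig n (i-1) * (descK n b k' * sig n i * sig n (i-1)) := by
              rw [← mul_assoc, hcomm]; simp only [mul_assoc]

end Work

namespace Work
open Braids
variable {n : ℕ}

/-- The half-twist staircase `Δ_m = (σ_1)(σ_2σ_1)⋯(σ_{m-1}⋯σ_1)`. -/
def DeltaW (n : ℕ) : ℕ → BraidGroup n
  | 0 => 1
  | m+1 => DeltaW n m * descK n m m

lemma DeltaW_succ (m : ℕ) : DeltaW n (m+1) = DeltaW n m * descK n m m := rfl

lemma comm_DeltaW {x : BraidGroup n} {m : ℕ}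
    (h : ∀ i, 1 ≤ i → i + 1 ≤ m → Commute x (sig n i)) : Commute x (DeltaW n m) := by
  induction m with
  | zero => exact Commute.one_right x
  | succ m ih =>
      refine (ih (fun i h1 h2 => h i h1 (by omega))).mul_right (comm_descK ?_)
      intro t (ht : t < m)
      exact h (m - t) (by omega) (by omega)

lemma sig_comm_DeltaW {j m : ℕ} (h : m + 1 ≤ j) :
    Commute (sig n j) (DeltaW n m) :=
  comm_DeltaW (fun i _ h2 => (sig_comm (by omega : i + 2 ≤ j)).symm)

lemma DeltaW_two : DeltaW n 2 = sig n 1 := by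
  show (1 : BraidGroup n) * 1 * ((1 : BraidGroup n) * 1 * sig n (1-0)) = sig n 1
  simp

lemma Delta_facts : ∀ m, m ≤ n →
    (∀ m', m = m' + 1 → DeltaW n m = ascK n 1 m' * DeltaW n m') ∧
    (∀ i, 1 ≤ i → i + 1 ≤ m → DeltaW n m * sig n i = sig n (m - i) * DeltaW n m) := by
  intro m
  induction m with
  | zero => exact fun _ => ⟨fun m' h => absurd h (by omega), fun i h1 h2 => absurd h2 (by omega)⟩
  | succ m ih =>
      intro hmn
      have ihm := ih (by omega)
      have factA : DeltaW n (m+1) = ascK n 1 m * DeltaW n m := by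
        match m with
        | 0 => show DeltaW n 0 * descK n 0 0 = ascK n 1 0 * DeltaW n 0; simp [DeltaW, descK, ascK]
        | Nat.succ m'' =>
          have hfa := ihm.1 m'' rfl
          have hdf : descK n (m''+1) (m''+1) = sig n (m''+1) * descK n m'' m'' :=
            descK_first m'' m'' (by omega)
          have hcomm : Commute (sig n (m''+1)) (DeltaW n m'') :=
            sig_comm_DeltaW (by omega)
          have e : 1 + m'' = m'' + 1 := by omega
          calc DeltaW n (m''+2)
              = (ascK n 1 m'' * DeltaW n m'') * (sig n (m''+1) * descK n m'' m'') := by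
                rw [DeltaW_succ, hfa, hdf]
            _ = ascK n 1 m'' * (sig n (m''+1) * (DeltaW n m'' * descK n m'' m'')) := by
                simp only [mul_assoc]; rw [← mul_assoc (DeltaW n m''), ← hcomm.eq, mul_assoc]
            _ = ascK n 1 (m''+1) * DeltaW n (m''+1) := by
                rw [ascK_succ, e, DeltaW_succ]; simp only [mul_assoc]
      constructor
      · intro m' hm'
        obtain rfl : m' = m := by omega
        exact factA
      intro i hi1 hi2
      rcases Nat.lt_or_ge i 2 with hc | hc
      · -- i = 1
        have hi : i = 1 := by omega
        subst hi
        match m, hi2 with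
        | 1, _ =>
          rw [show (1+1-1 : ℕ) = 1 by omega, DeltaW_two]
        | Nat.succ (Nat.succ m''), _ =>
          set m := m'' + 2 with hm
          have hconj := ihm.2 1 le_rfl (by omega)
          have hshift : ascK n 1 m * sig n (m - 1) = sig n m * ascK n 1 m := by
            have := asc_shift (n := n) (a := 1) (k := m) (i := m - 1)
              le_rfl (by omega) (by omega) (by omega)
            rwa [show m - 1 + 1 = m by omega] at this
          rw [show m + 1 - 1 = m by omega, factA, mul_assoc, hconj, ← mul_assoc,
            hshift, mul_assoc, ← factA]
      · -- 2 ≤ i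
        have hds : descK n m m * sig n i = sig n (i-1) * descK n m m :=
          desc_shift (by omega) le_rfl (by omega) (by omega)
        have hconj := ihm.2 (i-1) (by omega) (by omega)
        rw [DeltaW_succ, mul_assoc, hds, ← mul_assoc, hconj,
          show m - (i-1) = m + 1 - i by omega, mul_assoc]

lemma Delta_factA {m : ℕ} (h : m + 1 ≤ n) :
    DeltaW n (m+1) = ascK n 1 m * DeltaW n m :=
  (Delta_facts (m+1) h).1 m rfl

lemma Delta_conj {m i : ℕ} (hm : m ≤ n) (h1 : 1 ≤ i) (h2 : i + 1 ≤ m) :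
    DeltaW n m * sig n i = sig n (m - i) * DeltaW n m :=
  (Delta_facts m hm).2 i h1 h2

lemma Delta_chain {m : ℕ} (hm : m ≤ n) : ∀ k, k + 1 ≤ m →
    DeltaW n m * ascK n 1 k = descK n (m-1) k * DeltaW n m := by
  intro k
  induction k with
  | zero => intro _; show DeltaW n m * 1 = 1 * DeltaW n m; simp
  | succ k ih =>
      intro hk
      rw [ascK_succ, ← mul_assoc, ih (by omega), mul_assoc,
        Delta_conj hm (by omega) (by omega), descK_succ,
        show m - 1 - k = m - (1+k) by omega, mul_assoc]

lemma chain_listProd (b : ℕ) : ∀ k, ((List.range k).map (fun t => sig n (b - t))).prod = descK n b k := by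
  intro k
  induction k with
  | zero => rfl
  | succ k ih => rw [List.range_succ, List.map_append, List.prod_append, ih]; simp [descK_succ]

lemma Agen_eq (i j : ℕ) :
    Agen n i j = descK n (j-1) (j-1-i) * (sig n i)^2 * (descK n (j-1) (j-1-i))⁻¹ := by
  rw [Agen, chain, show j - i - 1 = j - 1 - i by omega, chain_listProd]

lemma braid_sq {j : ℕ} (h1 : 1 ≤ j) (h2 : j + 2 ≤ n) :
    sig n (j+1) * (sig n j)^2 * (sig n (j+1))⁻¹ = (sig n j)⁻¹ * (sig n (j+1))^2 * sig n j := by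
  have h := braid_rel (n := n) (k := j) h1 (by omega)
  set a := sig n j
  set b := sig n (j+1)
  have key : b * a * b⁻¹ = a⁻¹ * b * a := by
    have h3 : a * (b * a * b⁻¹) * b = a * (a⁻¹ * b * a) * b := by
      calc a * (b * a * b⁻¹) * b = a * b * a := by group
        _ = b * a * b := h
        _ = a * (a⁻¹ * b * a) * b := by group
    have h4 := mul_right_cancel h3
    exact mul_left_cancel h4
  calc b * a^2 * b⁻¹ = (b * a * b⁻¹) * (b * a * b⁻¹) := by rw [pow_two]; group
    _ = (a⁻¹ * b * a) * (a⁻¹ * b * a) := by rw [key]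
    _ = a⁻¹ * b^2 * a := by rw [pow_two]; group

lemma Agen_dual : ∀ d t, 1 ≤ t → t + 1 + d ≤ n →
    Agen n t (t+1+d) = (descK n (t+d-1) d)⁻¹ * (sig n (t+d))^2 * descK n (t+d-1) d := by
  intro d
  induction d with
  | zero =>
      intro t ht htn
      rw [Agen_eq, show t + 1 + 0 - 1 - t = 0 by omega, show t + 1 + 0 - 1 = t by omega,
        show t + 0 = t from rfl]
      show 1 * (sig n t)^2 * 1⁻¹ = 1⁻¹ * (sig n t)^2 * 1
      simp
  | succ d ih =>
      intro t ht htn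
      have hAe : Agen n t (t+1+(d+1)) =
          descK n (t+d+1) (d+1) * (sig n t)^2 * (descK n (t+d+1) (d+1))⁻¹ := by
        rw [Agen_eq, show t+1+(d+1)-1-t = d+1 by omega, show t+1+(d+1)-1 = t+d+1 by omega]
      have hdf : descK n (t+d+1) (d+1) = sig n (t+d+1) * descK n (t+d) d :=
        descK_first (t+d) d (by omega)
      have hback : descK n (t+d) d * (sig n t)^2 * (descK n (t+d) d)⁻¹ = Agen n t (t+1+d) := by
        rw [Agen_eq, show t+1+d-1-t = d by omega, show t+1+d-1 = t+d by omega]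
      have hIH := ih t ht (by omega)
      have hcomm : Commute (sig n (t+d+1)) (descK n (t+d-1) d) :=
        comm_descK (fun u (hu : u < d) => (sig_comm (by omega : t+d-1-u + 2 ≤ t+d+1)).symm)
      have hbs : sig n (t+d+1) * (sig n (t+d))^2 * (sig n (t+d+1))⁻¹
          = (sig n (t+d))⁻¹ * (sig n (t+d+1))^2 * sig n (t+d) :=
        braid_sq (n := n) (j := t+d) (by omega) (by omega)
      have hpack : sig n (t+d) * descK n (t+d-1) d = descK n (t+d) (d+1) := by
        have h5 := descK_first (n := n) (t+d-1) d (by omega)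
        rw [show t+d-1+1 = t+d by omega] at h5
        exact h5.symm
      calc Agen n t (t+1+(d+1))
          = sig n (t+d+1) * (descK n (t+d) d * (sig n t)^2 * (descK n (t+d) d)⁻¹) *
            (sig n (t+d+1))⁻¹ := by
            rw [hAe, hdf]; group
        _ = sig n (t+d+1) * ((descK n (t+d-1) d)⁻¹ * (sig n (t+d))^2 * descK n (t+d-1) d) *
            (sig n (t+d+1))⁻¹ := by rw [hback, hIH]
        _ = (descK n (t+d-1) d)⁻¹ * (sig n (t+d+1) * (sig n (t+d))^2 * (sig n (t+d+1))⁻¹) *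
            descK n (t+d-1) d := by
            simp only [mul_assoc]
            rw [hcomm.symm.inv_right.eq, ← mul_assoc, hcomm.inv_right.eq, mul_assoc]
        _ = (descK n (t+d-1) d)⁻¹ * ((sig n (t+d))⁻¹ * (sig n (t+d+1))^2 * sig n (t+d)) *
            descK n (t+d-1) d := by rw [hbs]
        _ = (descK n (t+d) (d+1))⁻¹ * (sig n (t+d+1))^2 * descK n (t+d) (d+1) := by
            rw [← hpack]; group

end Work

namespace Work
open Braids
variable {n : ℕ}

/-- `A_{p,m} A_{p+1,m} ⋯ A_{p+l-1,m}` -/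
def UpK (n m p : ℕ) : ℕ → BraidGroup n
  | 0 => 1
  | l+1 => UpK n m p l * Agen n (p+l) m

/-- partial full twist `z_m` -/
def ZtW (n : ℕ) : ℕ → BraidGroup n
  | 0 => 1
  | m+1 => ZtW n m * UpK n (m+1) 1 m

lemma UpK_zero (m p : ℕ) : UpK n m p 0 = 1 := rfl
lemma UpK_succ (m p l : ℕ) : UpK n m p (l+1) = UpK n m p l * Agen n (p+l) m := rfl
lemma ZtW_succ (m : ℕ) : ZtW n (m+1) = ZtW n m * UpK n (m+1) 1 m := rfl

lemma UpK_first (m p : ℕ) : ∀ l, UpK n m p (l+1) = Agen n p m * UpK n m (p+1) l := by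
  intro l
  induction l with
  | zero => show UpK n m p 0 * Agen n (p+0) m = Agen n p m * 1; simp [UpK_zero]
  | succ l ih =>
      rw [UpK_succ, ih, UpK_succ, mul_assoc, show p+(l+1) = p+1+l by omega]

lemma comm_UpK {x : BraidGroup n} {m p l : ℕ}
    (h : ∀ i, p ≤ i → i < p + l → Commute x (Agen n i m)) : Commute x (UpK n m p l) := by
  induction l with
  | zero => exact Commute.one_right x
  | succ l ih =>
      exact (ih (fun i h1 h2 => h i h1 (by omega))).mul_right (h (p+l) (by omega) (by omega))

lemma UpK_closed {m : ℕ} (hm : m ≤ n) : ∀ k, k + 1 ≤ m →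
    UpK n m 1 k = descK n (m-1) (m-1) * ascK n 1 k * (descK n (m-1) (m-1-k))⁻¹ := by
  intro k
  induction k with
  | zero =>
      intro _
      show (1 : BraidGroup n) = descK n (m-1) (m-1) * 1 * (descK n (m-1) (m-1-0))⁻¹
      rw [show m-1-0 = m-1 from rfl]; simp
  | succ k ih =>
      intro hk
      have hAe : Agen n (1+k) m =
          descK n (m-1) (m-2-k) * (sig n (k+1))^2 * (descK n (m-1) (m-2-k))⁻¹ := by
        rw [Agen_eq, show m-1-(1+k) = m-2-k by omega, show (1+k) = k+1 by omega]
      have hsplit : descK n (m-1) (m-1-k) = descK n (m-1) (m-2-k) * sig n (k+1) := by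
        have h5 := descK_succ (n := n) (m-1) (m-2-k)
        rw [show m-2-k+1 = m-1-k by omega, show m-1-(m-2-k) = k+1 by omega] at h5
        exact h5
      have hasc : ascK n 1 (k+1) = ascK n 1 k * sig n (k+1) := by
        rw [ascK_succ, show 1+k = k+1 by omega]
      rw [UpK_succ, ih (by omega), hAe, hsplit, hasc, show m-1-(k+1) = m-2-k by omega]
      group

lemma ZtW_eq_Delta_sq : ∀ m, m ≤ n → ZtW n m = (DeltaW n m)^2 := by
  intro m
  induction m with
  | zero => intro _; simp [ZtW, DeltaW]
  | succ m ih =>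
      intro hm
      have hU : UpK n (m+1) 1 m = descK n m m * ascK n 1 m := by
        have h5 := UpK_closed (m := m+1) (n := n) hm m (by omega)
        rw [show m+1-1 = m from rfl, show m - m = 0 by omega] at h5
        rw [h5, descK_zero]; simp
      have hchain : DeltaW n (m+1) * ascK n 1 m = descK n m m * DeltaW n (m+1) := by
        have h5 := Delta_chain (m := m+1) (n := n) hm m (by omega)
        rwa [show m+1-1 = m from rfl] at h5
      rw [ZtW_succ, ih (by omega), hU]
      calc (DeltaW n m)^2 * (descK n m m * ascK n 1 m)
          = DeltaW n m * (DeltaW n (m+1) * ascK n 1 m) := by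
            rw [DeltaW_succ, pow_two]; group
        _ = DeltaW n m * (descK n m m * DeltaW n (m+1)) := by rw [hchain]
        _ = (DeltaW n (m+1))^2 := by rw [DeltaW_succ, pow_two]; group

lemma sig_comm_ZtW {i m : ℕ} (h1 : 1 ≤ i) (h2 : i + 1 ≤ m) (hm : m ≤ n) :
    Commute (sig n i) (ZtW n m) := by
  rw [ZtW_eq_Delta_sq m hm]
  have c1 := Delta_conj (n := n) hm h1 h2
  have c2 := Delta_conj (n := n) hm (i := m - i) (by omega) (by omega)
  rw [show m - (m-i) = i by omega] at c2
  show _ = _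
  calc sig n i * (DeltaW n m)^2 = (sig n i * DeltaW n m) * DeltaW n m := by
        rw [pow_two]; group
    _ = DeltaW n m * (sig n (m-i) * DeltaW n m) := by rw [← c2]; group
    _ = (DeltaW n m)^2 * sig n i := by rw [← c1, pow_two]; group

/-- the full loop `A_{0,t}⁻¹` of strand `t` among the first `m` strands -/
def gW (n m t : ℕ) : BraidGroup n :=
  descK n (t-1) (t-1) * ascK n 1 (m-1) * descK n (m-1) (m-t)

lemma sig_comm_gW {m t k : ℕ} (h1 : 1 ≤ t) (h2 : t+1 ≤ k) (h3 : k+1 ≤ m) (h4 : m ≤ n) :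
    Commute (sig n k) (gW n m t) := by
  have c1 : Commute (sig n k) (descK n (t-1) (t-1)) :=
    comm_descK (fun u (hu : u < t-1) => (sig_comm (by omega : t-1-u+2 ≤ k)).symm)
  have a_shift : sig n k * ascK n 1 (m-1) = ascK n 1 (m-1) * sig n (k-1) := by
    have h5 := asc_shift (n := n) (a := 1) (k := m-1) (i := k-1)
      le_rfl (by omega) (by omega) (by omega)
    rw [show k-1+1 = k by omega] at h5
    exact h5.symm
  have d_shift : sig n (k-1) * descK n (m-1) (m-t) = descK n (m-1) (m-t) * sig n k := by
    have h5 := desc_shift (n := n) (b := m-1) (k := m-t) (i := k)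
      (by omega) (by omega) (by omega) (by omega)
    exact h5.symm
  show sig n k * gW n m t = gW n m t * sig n k
  rw [gW, ← mul_assoc, ← mul_assoc, c1.eq, mul_assoc (descK n (t-1) (t-1)), a_shift,
    ← mul_assoc, mul_assoc (descK n (t-1) (t-1) * ascK n 1 (m-1)), d_shift, ← mul_assoc]

lemma gW_rec {m t : ℕ} (h1 : 1 ≤ t) (h2 : t+1 ≤ m) (h3 : m ≤ n) :
    gW n m t = gW n (m-1) t * Agen n t m := by
  obtain ⟨d, rfl⟩ : ∃ d, m = t+1+d := ⟨m-t-1, by omega⟩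
  have hAd := Agen_dual d t h1 h3
  have e1 : t+1+d-1 = t+d := by omega
  have e2 : t+1+d-t = d+1 := by omega
  have hpack : descK n (t+d) (d+1) = sig n (t+d) * descK n (t+d-1) d := by
    have h5 := descK_first (n := n) (t+d-1) d (by omega)
    rwa [show t+d-1+1 = t+d by omega] at h5
  have hasc : ascK n 1 (t+d) = ascK n 1 (t+d-1) * sig n (t+d) := by
    have h5 := ascK_succ (n := n) 1 (t+d-1)
    rwa [show t+d-1+1 = t+d by omega, show 1+(t+d-1) = t+d by omega] at h5
  rw [gW, gW, e1, e2, show t+d-t = d by omega, hAd, hpack, hasc, pow_two]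
  group

lemma comm_Agen {x : BraidGroup n} {s m : ℕ}
    (h : ∀ i, s ≤ i → i + 1 ≤ m → Commute x (sig n i)) (hs : 1 ≤ s) (hm : s + 1 ≤ m) :
    Commute x (Agen n s m) := by
  rw [Agen_eq]
  have hd : Commute x (descK n (m-1) (m-1-s)) :=
    comm_descK (fun u (hu : u < m-1-s) => h (m-1-u) (by omega) (by omega))
  exact (hd.mul_right ((h s le_rfl hm).pow_right 2)).mul_right hd.inv_right

lemma Ta_comm {t s m : ℕ} (ht : 1 ≤ t) (hts : t+1 ≤ s) (hsm : s+1 ≤ m) (hmn : m ≤ n) :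
    Commute (gW n m t) (Agen n s m) :=
  comm_Agen (fun i hi1 hi2 => (sig_comm_gW ht (by omega) (by omega) hmn).symm)
    (by omega) hsm

end Work

namespace Work
open Braids
variable {n : ℕ}

/-- `H_k = g(m,k) g(m,k-1) ⋯ g(m,1)` -/
def HkW (n m : ℕ) : ℕ → BraidGroup n
  | 0 => 1
  | k+1 => gW n m (k+1) * HkW n m k

lemma HkW_succ (m k : ℕ) : HkW n m (k+1) = gW n m (k+1) * HkW n m k := rfl

lemma Vlem {m : ℕ} (hm : m ≤ n) : ∀ j l kk, kk = j + l + 1 → kk + 1 ≤ m →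
    UpK n m (j+1) l * Agen n kk m * (UpK n m (j+1) l)⁻¹ * HkW n (m-1) j
    = HkW n (m-1) j * (UpK n m 1 (j+l) * Agen n kk m * (UpK n m 1 (j+l))⁻¹) := by
  intro j
  induction j with
  | zero =>
      intro l kk hkk hm2
      show _ * HkW n (m-1) 0 = HkW n (m-1) 0 * _
      rw [show HkW n (m-1) 0 = 1 from rfl, show (0+1 : ℕ) = 1 from rfl,
        show 0+l = l by omega, mul_one, one_mul]
  | succ j ih =>
      intro l kk hkk hm2
      have hgrec : gW n m (j+1) = gW n (m-1) (j+1) * Agen n (j+1) m :=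
        gW_rec (by omega) (by omega) hm
      have hY : Commute (gW n m (j+1))
          (UpK n m (j+2) l * Agen n kk m * (UpK n m (j+2) l)⁻¹) := by
        have hU : Commute (gW n m (j+1)) (UpK n m (j+2) l) :=
          comm_UpK (fun i hi1 hi2 => Ta_comm (by omega) (by omega) (by omega) hm)
        exact (hU.mul_right (Ta_comm (by omega) (by omega) (by omega) hm)).mul_right
          hU.inv_right
      set Y := UpK n m (j+2) l * Agen n kk m * (UpK n m (j+2) l)⁻¹ with hYdef
      have hfirst : UpK n m (j+1) (l+1) = Agen n (j+1) m * UpK n m (j+2) l :=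
        UpK_first m (j+1) l
      have hkey : Y * gW n (m-1) (j+1) = gW n (m-1) (j+1) *
          (UpK n m (j+1) (l+1) * Agen n kk m * (UpK n m (j+1) (l+1))⁻¹) := by
        have h6 : Y * gW n m (j+1) = gW n m (j+1) * Y := hY.symm.eq
        rw [hgrec] at h6
        -- h6 : Y * (g' * x) = (g' * x) * Y
        have h7 : Y * gW n (m-1) (j+1) =
            gW n (m-1) (j+1) * (Agen n (j+1) m * Y * (Agen n (j+1) m)⁻¹) := by
          have := congrArg (fun w => w * (Agen n (j+1) m)⁻¹) h6
          simp only [mul_assoc, mul_inv_cancel, mul_one] at this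
          rw [this]; group
        rw [h7, hfirst, hYdef]
        group
      calc Y * HkW n (m-1) (j+1)
          = Y * gW n (m-1) (j+1) * HkW n (m-1) j := by rw [HkW_succ]; group
        _ = gW n (m-1) (j+1) *
              (UpK n m (j+1) (l+1) * Agen n kk m * (UpK n m (j+1) (l+1))⁻¹ *
                HkW n (m-1) j) := by rw [hkey]; group
        _ = gW n (m-1) (j+1) * (HkW n (m-1) j *
              (UpK n m 1 (j+(l+1)) * Agen n kk m * (UpK n m 1 (j+(l+1)))⁻¹)) := by
            rw [ih (l+1) kk (by omega) hm2]
        _ = HkW n (m-1) (j+1) *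
              (UpK n m 1 (j+1+l) * Agen n kk m * (UpK n m 1 (j+1+l))⁻¹) := by
            rw [HkW_succ, show j+1+l = j+(l+1) by omega]; group

lemma SIlem {m : ℕ} (hm : m ≤ n) : ∀ k, k + 1 ≤ m →
    HkW n m k = HkW n (m-1) k * UpK n m 1 k := by
  intro k
  induction k with
  | zero => intro _; show (1 : BraidGroup n) = 1 * 1; simp
  | succ k ih =>
      intro hk
      have hV := Vlem hm k 0 (k+1) (by omega) (by omega)
      rw [show UpK n m (k+1) 0 = 1 from rfl, show k + 0 = k from rfl] at hV
      simp only [one_mul, mul_one, inv_one] at hV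
      -- hV : Agen n (k+1) m * HkW n (m-1) k
      --      = HkW n (m-1) k * (UpK n m 1 k * Agen n (k+1) m * (UpK n m 1 k)⁻¹)
      have hup : UpK n m 1 (k+1) = UpK n m 1 k * Agen n (k+1) m := by
        rw [UpK_succ, show 1+k = k+1 by omega]
      calc HkW n m (k+1)
          = gW n (m-1) (k+1) * (Agen n (k+1) m * HkW n m k) := by
            rw [HkW_succ, gW_rec (by omega) (by omega) hm]; group
        _ = gW n (m-1) (k+1) * (Agen n (k+1) m * HkW n (m-1) k * UpK n m 1 k) := by
            rw [ih (by omega)]; group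
        _ = gW n (m-1) (k+1) * (HkW n (m-1) k *
              (UpK n m 1 k * Agen n (k+1) m * (UpK n m 1 k)⁻¹) * UpK n m 1 k) := by
            rw [hV]
        _ = HkW n (m-1) (k+1) * UpK n m 1 (k+1) := by
            rw [HkW_succ, hup]; group

lemma comm_ZtW {x : BraidGroup n} {m : ℕ} (hm : m ≤ n)
    (h : ∀ i, 1 ≤ i → i + 1 ≤ m → Commute x (sig n i)) : Commute x (ZtW n m) := by
  induction m with
  | zero => exact Commute.one_right x
  | succ m ih =>
      refine (ih (by omega) (fun i h1 h2 => h i h1 (by omega))).mul_right ?_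
      have hU := UpK_closed (m := m+1) (n := n) hm m (by omega)
      rw [show m+1-1 = m from rfl, show m - m = 0 by omega, descK_zero] at hU
      rw [hU]
      have hd : Commute x (descK n m m) :=
        comm_descK (fun t (ht : t < m) => h (m-t) (by omega) (by omega))
      have ha : Commute x (ascK n 1 m) :=
        comm_ascK (fun t (ht : t < m) => h (1+t) (by omega) (by omega))
      exact (hd.mul_right ha).mul_right (Commute.one_right x).inv_right

lemma Jm : ∀ m, 2 ≤ m → m ≤ n → (ZtW n m)^2 = HkW n m m := by
  intro m
  induction m with
  | zero => omega
  | succ m ih =>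
      intro h2 hm
      rcases Nat.lt_or_ge m 2 with hc | hc
      · -- m + 1 = 2
        obtain rfl : m = 1 := by omega
        have hZ : ZtW n 2 = Agen n 1 2 := by
          show (1 : BraidGroup n) * ((1 : BraidGroup n) * Agen n (1+0) 2) = Agen n 1 2
          simp
        have hchain : chain n 1 2 = 1 := by
          rw [chain, show (2 : ℕ) - 1 - 1 = 0 from rfl]
          rfl
        have hA : Agen n 1 2 = (sig n 1)^2 := by
          rw [Agen, hchain]; simp
        have hg22 : gW n 2 2 = sig n 1 * sig n 1 := by
          rw [gW]
          show descK n 1 1 * ascK n 1 1 * descK n 1 0 = _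
          rw [descK_zero, descK_succ, descK_zero, ascK_succ, ascK_zero]
          simp
        have hg21 : gW n 2 1 = sig n 1 * sig n 1 := by
          rw [gW]
          show descK n 0 0 * ascK n 1 1 * descK n 1 1 = _
          rw [descK_zero, descK_succ, descK_zero, ascK_succ, ascK_zero]
          simp
        have hH : HkW n 2 2 = gW n 2 2 * (gW n 2 1 * 1) := rfl
        rw [hZ, hA, hH, hg22, hg21]
        simp [pow_two, mul_assoc]
      · -- 2 ≤ m
        have hIH := ih hc (by omega)
        have hZZ : Commute (ZtW n m) (ZtW n (m+1)) :=
          (comm_ZtW (m := m) (by omega)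
            (fun i h1 h2 => (sig_comm_ZtW h1 (by omega) hm).symm)).symm
        have hcommZU : Commute (ZtW n m) (UpK n (m+1) 1 m) := by
          have h5 : UpK n (m+1) 1 m = (ZtW n m)⁻¹ * ZtW n (m+1) := by
            rw [ZtW_succ]; group
          rw [h5]
          exact ((Commute.refl _).inv_right).mul_right hZZ
        have hU := UpK_closed (m := m+1) (n := n) hm m (by omega)
        rw [show m+1-1 = m from rfl, show m - m = 0 by omega, descK_zero] at hU
        have hgtop : gW n (m+1) (m+1) = UpK n (m+1) 1 m := by
          rw [gW, hU, show m+1-1 = m from rfl, show m+1-(m+1) = 0 by omega, descK_zero]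
          simp
        have hSI := SIlem (m := m+1) hm m (by omega)
        rw [show m+1-1 = m from rfl] at hSI
        calc (ZtW n (m+1))^2
            = ZtW n m * (UpK n (m+1) 1 m * ZtW n m) * UpK n (m+1) 1 m := by
              rw [ZtW_succ, pow_two]; group
          _ = ZtW n m * (ZtW n m * UpK n (m+1) 1 m) * UpK n (m+1) 1 m := by
              rw [← hcommZU.eq]
          _ = (ZtW n m * ZtW n m) * UpK n (m+1) 1 m * UpK n (m+1) 1 m := by group
          _ = UpK n (m+1) 1 m * (ZtW n m * ZtW n m) * UpK n (m+1) 1 m := by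
              rw [(hcommZU.mul_left hcommZU).eq]
          _ = UpK n (m+1) 1 m * ((ZtW n m)^2 * UpK n (m+1) 1 m) := by
              rw [pow_two]; group
          _ = gW n (m+1) (m+1) * (HkW n m m * UpK n (m+1) 1 m) := by
              rw [hgtop, hIH]
          _ = HkW n (m+1) (m+1) := by rw [HkW_succ, hSI]

lemma ASym_diag (i : ℕ) : ASym n i i = 1 := by rw [ASym, if_pos rfl]

lemma ASym_lt {i j : ℕ} (h : i < j) : ASym n i j = Agen n i j := by
  rw [ASym, if_neg (by omega), min_eq_left (by omega), max_eq_right (by omega)]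

lemma ASym_gt {i j : ℕ} (h : j < i) : ASym n i j = Agen n j i := by
  rw [ASym, if_neg (by omega), min_eq_right (by omega), max_eq_left (by omega)]

lemma ASym_listProd {j : ℕ} (hj : 1 ≤ j) : ∀ k, k ≤ j - 1 →
    ((List.range k).map (fun t => ASym n (t+1) j)).prod = UpK n j 1 k := by
  intro k
  induction k with
  | zero => intro _; rfl
  | succ k ih =>
      intro hk
      rw [List.range_succ, List.map_append, List.prod_append, ih (by omega)]
      simp only [List.map_cons, List.map_nil, List.prod_cons, List.prod_nil, mul_one]
      rw [ASym_lt (by omega), UpK_succ, show 1+k = k+1 by omega]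

lemma A0prod_gW : ∀ d j, 1 ≤ j → j + d ≤ n →
    ((List.range (j+d)).map (fun t => ASym n (t+1) j)).prod = gW n (j+d) j := by
  intro d
  induction d with
  | zero =>
      intro j hj hjn
      obtain ⟨j', rfl⟩ : ∃ j', j = j' + 1 := ⟨j-1, by omega⟩
      rw [show j'+1+0 = j'+1 from rfl, List.range_succ, List.map_append, List.prod_append,
        ASym_listProd (by omega) j' (by omega)]
      simp only [List.map_cons, List.map_nil, List.prod_cons, List.prod_nil, mul_one]
      rw [ASym_diag, mul_one]
      have hU := UpK_closed (m := j'+1) (n := n) (by omega) j' (by omega)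
      rw [show j'+1-1 = j' from rfl, show j' - j' = 0 by omega, descK_zero] at hU
      rw [hU, gW, show j'+1-1 = j' from rfl, show j'+1-(j'+1) = 0 by omega, descK_zero]
      simp
  | succ d ih =>
      intro j hj hjn
      rw [show j+(d+1) = (j+d)+1 from rfl, List.range_succ, List.map_append,
        List.prod_append, ih j hj (by omega)]
      simp only [List.map_cons, List.map_nil, List.prod_cons, List.prod_nil, mul_one]
      rw [ASym_gt (by omega)]
      have := gW_rec (n := n) (m := j+d+1) (t := j) hj (by omega) (by omega)
      rw [show j+d+1-1 = j+d from rfl] at this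
      rw [← this]

lemma A0gen_eq_gW {j : ℕ} (hj : 1 ≤ j) (hjn : j ≤ n) : A0gen n j = (gW n n j)⁻¹ := by
  rw [A0gen]
  obtain ⟨d, rfl⟩ : ∃ d, n = j + d := ⟨n - j, by omega⟩
  rw [A0prod_gW d j hj le_rfl]

lemma gWinv_listProd : ∀ k, ((List.range k).map (fun t => (gW n n (t+1))⁻¹)).prod
    = (HkW n n k)⁻¹ := by
  intro k
  induction k with
  | zero => simp [HkW]
  | succ k ih =>
      rw [List.range_succ, List.map_append, List.prod_append, ih]
      simp only [List.map_cons, List.map_nil, List.prod_cons, List.prod_nil, mul_one]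
      rw [HkW_succ, mul_inv_rev]

lemma UpK_listProd_Zt : ∀ k, ((List.range k).map (fun jt => UpK n (jt+2) 1 (jt+1))).prod
    = ZtW n (k+1) := by
  intro k
  induction k with
  | zero => show (1 : BraidGroup n) = 1 * 1; simp
  | succ k ih =>
      rw [List.range_succ, List.map_append, List.prod_append, ih]
      simp only [List.map_cons, List.map_nil, List.prod_cons, List.prod_nil, mul_one]
      rfl

lemma sig_fin (i : Fin (n-1)) : σ i = sig n (i.1+1) := by
  rw [sig_eq_sigma (by omega) (by have := i.isLt; omega : i.1+1 ≤ n-1)]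
  have e : (⟨i.1+1-1, by have := i.isLt; omega⟩ : Fin (n-1)) = i := Fin.ext (by simp)
  rw [e]

lemma comm_all {z : BraidGroup n} (h : ∀ i : Fin (n-1), Commute z (σ i)) :
    ∀ x : BraidGroup n, Commute z x := by
  intro x
  induction x using PresentedGroup.induction_on with
  | _ f =>
    induction f using FreeGroup.induction_on with
    | C1 => rw [map_one]; exact Commute.one_right z
    | of i => exact h i
    | inv_of i hi => rw [map_inv]; exact Commute.inv_right hi
    | mul a b ha hb => rw [map_mul]; exact ha.mul_right hb

end Work

namespace Work
open Braids
variable {n : ℕ}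

lemma range_split (k : ℕ) (hk : 1 ≤ k) : List.range k = List.range (k-1) ++ [k-1] := by
  obtain ⟨k', rfl⟩ : ∃ k', k = k' + 1 := ⟨k-1, by omega⟩
  rw [List.range_succ]
  simp

lemma ASym_symm (i j : ℕ) : ASym n i j = ASym n j i := by
  rcases lt_trichotomy i j with h | h | h
  · rw [ASym_lt h, ASym_gt h]
  · subst h; rfl
  · rw [ASym_gt h, ASym_lt h]

lemma A_diag (i : ℕ) : A n i i = 1 := Subtype.ext (ASym_diag i)

lemma A_symm (i j : ℕ) : A n i j = A n j i := Subtype.ext (ASym_symm i j)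

/-- coercion of a product of a list in the pure braid group -/
lemma coe_prod (l : List (P n)) : (l.prod : P n).1 = (l.map (fun x => x.1)).prod := by
  induction l with
  | nil => rfl
  | cons a l ih => simp [ih]

lemma A0_eq (j : ℕ) :
    A₀ n j = (((List.range n).map (fun t => A n (t+1) j)).prod)⁻¹ := by
  apply Subtype.ext
  show A0gen n j = _
  rw [A0gen]
  have : ((((List.range n).map (fun t => A n (t+1) j)).prod)⁻¹ : P n).1
      = ((((List.range n).map (fun t => A n (t+1) j)).prod : P n).1)⁻¹ := rfl
  rw [this, coe_prod, List.map_map]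
  rfl

lemma mulaut_prod (w : MulAut (P n)) (l : List (P n)) : w l.prod = (l.map w).prod := by
  induction l with
  | nil => exact map_one w
  | cons a l ih => simp [map_mul, ih]

/-- Part (i) of the theorem -/
lemma w_A0_low (w : MulAut (P n)) (hw : IsW n w) {j : ℕ}
    (h1 : 1 ≤ j) (h2 : j ≤ n - 1) : w (A₀ n j) = A n j n := by
  have hn1 : 1 ≤ n := by omega
  have hfix : ∀ t, t < n-1 → w (A n (t+1) j) = A n (t+1) j := by
    intro t ht
    rcases lt_trichotomy (t+1) j with hc | hc | hc
    · exact hw.1 (t+1) j (by omega) hc h2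
    · rw [← hc, A_diag, map_one]
    · rw [A_symm, hw.1 j (t+1) h1 hc (by omega), ← A_symm]
  have hsplit : ((List.range n).map (fun t => A n (t+1) j)).prod
      = ((List.range (n-1)).map (fun t => A n (t+1) j)).prod * A n n j := by
    rw [range_split n hn1, List.map_append, List.prod_append]
    simp only [List.map_cons, List.map_nil, List.prod_cons, List.prod_nil, mul_one]
    rw [show n-1+1 = n by omega]
  have hA0 := A0_eq (n := n) j
  set Q := ((List.range (n-1)).map (fun t => A n (t+1) j)).prod with hQ
  have hQval : Q = (A₀ n j)⁻¹ * (A n j n)⁻¹ := by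
    rw [hA0, hsplit, A_symm (n := n) n j]
    group
  have hwQ : w Q = Q := by
    rw [hQ, mulaut_prod, List.map_map]
    congr 1
    apply List.map_congr_left
    intro t ht
    simp only [List.mem_range] at ht
    exact hfix t ht
  have hwlast : w (A n n j) = A n j n * A₀ n j * (A n j n)⁻¹ := by
    rw [A_symm]
    exact hw.2 j h1 h2
  have : w (A₀ n j) = (w Q * w (A n n j))⁻¹ := by
    rw [hA0, map_inv, hsplit, map_mul]
  rw [this, hwQ, hwlast, hQval]
  group

/-- The pure-braid-level product identity (J). -/
lemma JP (hn : 3 ≤ n) :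
    ((List.range n).map (fun t => A₀ n (t+1))).prod = ((fullTwist n)^2)⁻¹ := by
  apply Subtype.ext
  have hcz : ((fullTwist n : P n) : BraidGroup n) = ZtW n n := by
    rw [fullTwist, coe_prod, List.map_map]
    have hmap : (List.range (n-1)).map
        ((fun (x : P n) => x.1) ∘ fun jt => ((List.range (jt+1)).map
          (fun it => A n (it+1) (jt+2))).prod)
        = (List.range (n-1)).map (fun jt => UpK n (jt+2) 1 (jt+1)) := by
      apply List.map_congr_left
      intro jt hjt
      simp only [Function.comp_apply]
      rw [coe_prod, List.map_map]
      have : (List.range (jt+1)).map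
          ((fun (x : P n) => x.1) ∘ fun it => A n (it+1) (jt+2))
          = (List.range (jt+1)).map (fun it => ASym n (it+1) (jt+2)) := rfl
      rw [this, ASym_listProd (by omega) (jt+1) (by omega)]
    rw [hmap, UpK_listProd_Zt (n-1), show n-1+1 = n by omega]
  have hlhs : (((List.range n).map (fun t => A₀ n (t+1))).prod : P n).1
      = (HkW n n n)⁻¹ := by
    rw [coe_prod, List.map_map]
    have hmap : (List.range n).map ((fun (x : P n) => x.1) ∘ fun t => A₀ n (t+1))
        = (List.range n).map (fun t => (gW n n (t+1))⁻¹) := by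
      apply List.map_congr_left
      intro t ht
      simp only [Function.comp_apply, List.mem_range] at *
      show A0gen n (t+1) = (gW n n (t+1))⁻¹
      exact A0gen_eq_gW (by omega) (by omega)
    rw [hmap, gWinv_listProd n]
  rw [hlhs]
  have : ((((fullTwist n)^2)⁻¹ : P n) : BraidGroup n)
      = (((fullTwist n : P n) : BraidGroup n)^2)⁻¹ := rfl
  rw [this, hcz, Jm n (by omega) le_rfl]

lemma fullTwist_central (hn : 3 ≤ n) (x : P n) : Commute (fullTwist n) x := by
  have hcz : ((fullTwist n : P n) : BraidGroup n) = ZtW n n := by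
    have h := JP hn  -- dummy; recompute below
    clear h
    rw [fullTwist, coe_prod, List.map_map]
    have hmap : (List.range (n-1)).map
        ((fun (x : P n) => x.1) ∘ fun jt => ((List.range (jt+1)).map
          (fun it => A n (it+1) (jt+2))).prod)
        = (List.range (n-1)).map (fun jt => UpK n (jt+2) 1 (jt+1)) := by
      apply List.map_congr_left
      intro jt hjt
      simp only [Function.comp_apply]
      rw [coe_prod, List.map_map]
      have : (List.range (jt+1)).map
          ((fun (x : P n) => x.1) ∘ fun it => A n (it+1) (jt+2))
          = (List.range (jt+1)).map (fun it => ASym n (it+1) (jt+2)) := rfl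
      rw [this, ASym_listProd (by omega) (jt+1) (by omega)]
    rw [hmap, UpK_listProd_Zt (n-1), show n-1+1 = n by omega]
  have hZc : ∀ b : BraidGroup n, Commute (ZtW n n) b := by
    apply comm_all
    intro i
    rw [sig_fin i]
    exact (sig_comm_ZtW (by omega) (by have := i.isLt; omega) le_rfl).symm
  apply Subtype.ext
  show ((fullTwist n * x : P n) : BraidGroup n) = ((x * fullTwist n : P n) : BraidGroup n)
  have h1 : ((fullTwist n * x : P n) : BraidGroup n) = ZtW n n * (x : BraidGroup n) := by
    rw [show ((fullTwist n * x : P n) : BraidGroup n)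
      = ((fullTwist n : P n) : BraidGroup n) * (x : BraidGroup n) from rfl, hcz]
  have h2 : ((x * fullTwist n : P n) : BraidGroup n) = (x : BraidGroup n) * ZtW n n := by
    rw [show ((x * fullTwist n : P n) : BraidGroup n)
      = (x : BraidGroup n) * ((fullTwist n : P n) : BraidGroup n) from rfl, hcz]
  rw [h1, h2, (hZc x).eq]

end Work

open Work in
/-- For `n ≥ 3`: `w_n (A_{0,j}) = A_{j,n}` for `1 ≤ j ≤ n-1`, and
`w_n (A_{0,n}) = A_{0,n} z_n²`. -/
theorem w_apply_A0 (n : ℕ) (hn : 3 ≤ n) (w : MulAut (P n)) (hw : IsW n w) :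
    (∀ j : ℕ, 1 ≤ j → j ≤ n - 1 → w (A₀ n j) = A n j n) ∧
      w (A₀ n n) = A₀ n n * (fullTwist n) ^ 2 := by
  refine ⟨fun j h1 h2 => w_A0_low w hw h1 h2, ?_⟩
  set z := fullTwist n with hz
  set u := w z with hu
  set y := w (A₀ n n) with hy
  set A0 := A₀ n n with hA0def
  -- Ublist and its product equals (A₀ n n)⁻¹
  set Ub := ((List.range (n-1)).map (fun t => A n (t+1) n)).prod with hUb
  have hUbA0 : Ub = A0⁻¹ := by
    have hsplit : ((List.range n).map (fun t => A n (t+1) n)).prod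
        = Ub * A n n n := by
      rw [hUb, range_split n (by omega), List.map_append, List.prod_append]
      simp only [List.map_cons, List.map_nil, List.prod_cons, List.prod_nil, mul_one]
      rw [show n-1+1 = n by omega]
    rw [hA0def, A0_eq n, hsplit, A_diag, mul_one]
    group
  -- split of fullTwist
  set Fpre := ((List.range (n-2)).map (fun jt => ((List.range (jt+1)).map
      (fun it => A n (it+1) (jt+2))).prod)).prod with hFpre
  have hzsplit : z = Fpre * Ub := by
    rw [hz, fullTwist, range_split (n-1) (by omega), List.map_append, List.prod_append,
      show n-1-1 = n-2 by omega]
    congr 1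
    simp only [List.map_cons, List.map_nil, List.prod_cons, List.prod_nil, mul_one]
    rw [hUb, show n-2+2 = n by omega, show n-2+1 = n-1 by omega]
  have hwFpre : w Fpre = Fpre := by
    rw [hFpre, mulaut_prod, List.map_map]
    congr 1
    apply List.map_congr_left
    intro jt hjt
    simp only [List.mem_range, Function.comp_apply] at *
    rw [mulaut_prod, List.map_map]
    congr 1
    apply List.map_congr_left
    intro it hit
    simp only [List.mem_range, Function.comp_apply] at *
    exact hw.1 (it+1) (jt+2) (by omega) (by omega) (by omega)
  have hwUb : w Ub = y⁻¹ := by rw [hUbA0, map_inv, ← hy]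
  have hE2 : u = Fpre * y⁻¹ := by rw [hu, hzsplit, map_mul, hwFpre, hwUb]
  -- E1 from J
  have hJ := JP (n := n) hn
  have hwJ : A0⁻¹ * y = (u^2)⁻¹ := by
    have := congrArg w hJ
    rw [mulaut_prod, List.map_map] at this
    have hmap : (List.range n).map (w ∘ fun t => A₀ n (t+1))
        = ((List.range (n-1)).map (fun t => A n (t+1) n)) ++ [y] := by
      rw [range_split n (by omega), List.map_append]
      congr 1
      · apply List.map_congr_left
        intro t ht
        simp only [List.mem_range, Function.comp_apply] at *
        exact w_A0_low w hw (by omega) (by omega)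
      · simp only [List.map_cons, List.map_nil, Function.comp_apply]
        rw [show n-1+1 = n by omega]
    rw [hmap, List.prod_append] at this
    simp only [List.prod_cons, List.prod_nil, mul_one] at this
    rw [← hUb, hUbA0] at this
    rw [this, map_inv, map_pow, ← hu]
  -- centrality of u
  have hucen : ∀ x : P n, Commute u x := by
    intro x
    have h5 := fullTwist_central hn (w.symm x)
    have : u * x = x * u := by
      rw [hu, show x = w (w.symm x) from (w.apply_symm_apply x).symm, ← map_mul, ← map_mul,
        h5.eq]
    exact this
  have hFz : Fpre = z * A0 := by
    rw [hzsplit, hUbA0]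
    group
  -- solve for u
  have hyval : y = A0 * (u^2)⁻¹ := by
    rw [← hwJ]; group
  have huz : u = z * u^2 := by
    have hcom : u^2 * A0⁻¹ = A0⁻¹ * u^2 := ((hucen A0).pow_left 2).inv_right.eq
    calc u = z * A0 * (u^2 * A0⁻¹) := by
          conv_lhs => rw [hE2]
          rw [hFz, hyval]; group
      _ = z * A0 * (A0⁻¹ * u^2) := by rw [hcom]
      _ = z * u^2 := by group
  have huinv : u = z⁻¹ := by
    have h6 : u * u⁻¹ = (z * u^2) * u⁻¹ := by rw [← huz]
    rw [mul_inv_cancel, pow_two] at h6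
    have h7 : z * u = 1 := by
      have h8 : z * u = z * (u * u) * u⁻¹ := by group
      rw [h8, ← h6]
    exact eq_inv_of_mul_eq_one_right h7
  rw [hyval, huinv]
  group

end Braids
end

section
/- For every integer n ≥ 3, the identity A_{0,1} A_{0,2} A_{0,3} ⋯ A_{0,n} = z_n^{-2} holds in the pure braid group P_n. -/
namespace Braids

variable {n : ℕ}

lemma rel_one_of_mem {r : FreeGroup (Fin (n-1))} (h : r ∈ braidRels n) :
    PresentedGroup.mk (braidRels n) r = 1 := by
  have : r ∈ Subgroup.normalClosure (braidRels n) := Subgroup.subset_normalClosure h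
  exact (QuotientGroup.eq_one_iff r).mpr this

lemma sigma_braid (i j : Fin (n-1)) (hij : (i:ℕ) + 1 = j) :
    σ (n := n) i * σ j * σ i = σ j * σ i * σ j := by
  have h := rel_one_of_mem (n := n) (Or.inl ⟨i, j, hij, rfl⟩)
  simp only [map_mul, map_inv, mul_inv_eq_one] at h
  exact h

lemma sigma_comm (i j : Fin (n-1)) (hij : (i:ℕ) + 2 ≤ j) :
    σ (n := n) i * σ j = σ j * σ i := by
  have h := rel_one_of_mem (n := n) (Or.inr ⟨i, j, hij, rfl⟩)
  simp only [map_mul, map_inv, mul_inv_eq_one] at h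
  exact h

lemma sig_junk {k : ℕ} (h : k = 0 ∨ n - 1 < k) : sig n k = 1 := by
  unfold sig; rw [dif_neg]; omega

lemma rel1 {k : ℕ} (h1 : 1 ≤ k) (h2 : k + 1 ≤ n - 1) :
    sig n k * sig n (k+1) * sig n k = sig n (k+1) * sig n k * sig n (k+1) := by
  unfold sig
  rw [dif_pos ⟨h1, by omega⟩, dif_pos ⟨by omega, h2⟩]
  exact sigma_braid _ _ (by simp; omega)

lemma sig_comm {i j : ℕ} (h : i + 2 ≤ j) : Commute (sig n i) (sig n j) := by
  rcases Nat.eq_zero_or_pos i with hi | hi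
  · subst hi; rw [sig_junk (Or.inl rfl)]; exact Commute.one_left _
  rcases le_or_gt j (n-1) with hj | hj
  · unfold Commute SemiconjBy
    unfold sig
    rw [dif_pos ⟨by omega, by omega⟩, dif_pos ⟨by omega, by omega⟩]
    exact sigma_comm _ _ (by simp; omega)
  · rw [sig_junk (Or.inr hj)]; exact Commute.one_right _

def asc (n a b : ℕ) : BraidGroup n :=
  ((List.range (b + 1 - a)).map (fun t => sig n (a + t))).prod

def dsc (n a b : ℕ) : BraidGroup n :=
  ((List.range (b + 1 - a)).map (fun t => sig n (b - t))).prod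

lemma asc_nil {a b : ℕ} (h : b + 1 ≤ a) : asc n a b = 1 := by
  unfold asc; rw [show b + 1 - a = 0 by omega]; simp

lemma dsc_nil {a b : ℕ} (h : b + 1 ≤ a) : dsc n a b = 1 := by
  unfold dsc; rw [show b + 1 - a = 0 by omega]; simp

lemma asc_single (a : ℕ) : asc n a a = sig n a := by
  unfold asc; rw [show a + 1 - a = 1 by omega, show List.range 1 = [0] from rfl]; simp

lemma dsc_single (a : ℕ) : dsc n a a = sig n a := by
  unfold dsc; rw [show a + 1 - a = 1 by omega, show List.range 1 = [0] from rfl]; simp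

lemma asc_head {a b : ℕ} (h : a ≤ b) : asc n a b = sig n a * asc n (a+1) b := by
  unfold asc
  rw [show b + 1 - a = (b - a) + 1 by omega, List.range_succ_eq_map]
  rw [List.map_cons, List.prod_cons, List.map_map, show b + 1 - (a+1) = b - a by omega]
  simp only [Nat.add_zero]
  have : ((fun t => sig n (a + t)) ∘ Nat.succ) = (fun t => sig n (a + 1 + t)) := by
    funext t; simp only [Function.comp_apply]; congr 1; omega
  rw [this]

lemma dsc_headsucc {a b : ℕ} (h : a ≤ b + 1) : dsc n a (b+1) = sig n (b+1) * dsc n a b := by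
  unfold dsc
  rw [show b + 1 + 1 - a = (b + 1 - a) + 1 by omega, List.range_succ_eq_map]
  rw [List.map_cons, List.prod_cons, List.map_map]
  simp only [Nat.sub_zero]
  have : ((fun t => sig n (b + 1 - t)) ∘ Nat.succ) = (fun t => sig n (b - t)) := by
    funext t; simp only [Function.comp_apply]; congr 1; omega
  rw [this]

lemma dsc_head {a b : ℕ} (h1 : a ≤ b) (h2 : 1 ≤ b) : dsc n a b = sig n b * dsc n a (b-1) := by
  obtain ⟨b', rfl⟩ : ∃ b', b = b' + 1 := ⟨b - 1, by omega⟩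
  rw [Nat.add_sub_cancel]; exact dsc_headsucc (by omega)

lemma asc_succ {a b : ℕ} (h : a ≤ b + 1) : asc n a (b+1) = asc n a b * sig n (b+1) := by
  unfold asc
  rw [show b + 1 + 1 - a = (b + 1 - a) + 1 by omega, List.range_succ, List.map_append,
    List.prod_append]
  congr 1
  simp only [List.map_cons, List.map_nil, List.prod_cons, List.prod_nil, mul_one]
  congr 1; omega

lemma asc_last {a b : ℕ} (h1 : a ≤ b) (h2 : 1 ≤ b) : asc n a b = asc n a (b-1) * sig n b := by
  obtain ⟨b', rfl⟩ : ∃ b', b = b' + 1 := ⟨b - 1, by omega⟩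
  rw [Nat.add_sub_cancel]; exact asc_succ (by omega)

lemma dsc_last {a b : ℕ} (h : a ≤ b) : dsc n a b = dsc n (a+1) b * sig n a := by
  unfold dsc
  rw [show b + 1 - a = (b - a) + 1 by omega, List.range_succ, List.map_append, List.prod_append]
  congr 1
  · rw [show b + 1 - (a+1) = b - a by omega]
  · simp only [List.map_cons, List.map_nil, List.prod_cons, List.prod_nil, mul_one]
    congr 1; omega

lemma asc_append {a b c : ℕ} (h1 : a ≤ c + 1) (h2 : c ≤ b) :
    asc n a b = asc n a c * asc n (c+1) b := by
  induction b, h2 using Nat.le_induction with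
  | base => rw [asc_nil (le_refl _), mul_one]
  | succ b hb ih =>
      rw [asc_succ (by omega), ih, asc_succ (by omega), mul_assoc]

lemma dsc_append {a b c : ℕ} (h1 : a ≤ c + 1) (h2 : c ≤ b) :
    dsc n a b = dsc n (c+1) b * dsc n a c := by
  obtain ⟨f, hf⟩ : ∃ f, c + 1 - a = f := ⟨_, rfl⟩
  induction f generalizing a with
  | zero =>
      have : a = c + 1 := by omega
      subst this
      rw [dsc_nil (le_refl _), mul_one]
  | succ f ih =>
      have hac : a ≤ c := by omega
      rw [dsc_last (le_trans hac h2), dsc_last hac, ih (by omega) (by omega), mul_assoc]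

lemma commute_sig_asc {k a b : ℕ} (h : ∀ t, a ≤ t → t ≤ b → Commute (sig n k) (sig n t)) :
    Commute (sig n k) (asc n a b) := by
  apply Commute.list_prod_right
  intro x hx
  simp only [List.mem_map, List.mem_range] at hx
  obtain ⟨t, ht, rfl⟩ := hx
  exact h _ (by omega) (by omega)

lemma commute_sig_dsc {k a b : ℕ} (h : ∀ t, a ≤ t → t ≤ b → Commute (sig n k) (sig n t)) :
    Commute (sig n k) (dsc n a b) := by
  apply Commute.list_prod_right
  intro x hx
  simp only [List.mem_map, List.mem_range] at hx
  obtain ⟨t, ht, rfl⟩ := hx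
  exact h _ (by omega) (by omega)

lemma commute_sig_asc_big {k a b : ℕ} (h : b + 2 ≤ k) : Commute (sig n k) (asc n a b) :=
  commute_sig_asc (fun t _ h2 => (sig_comm (by omega)).symm)

lemma commute_sig_asc_small {k a b : ℕ} (h : k + 2 ≤ a) : Commute (sig n k) (asc n a b) :=
  commute_sig_asc (fun t h1 _ => sig_comm (by omega))

lemma commute_sig_dsc_big {k a b : ℕ} (h : b + 2 ≤ k) : Commute (sig n k) (dsc n a b) :=
  commute_sig_dsc (fun t _ h2 => (sig_comm (by omega)).symm)

lemma commute_sig_dsc_small {k a b : ℕ} (h : k + 2 ≤ a) : Commute (sig n k) (dsc n a b) :=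
  commute_sig_dsc (fun t h1 _ => sig_comm (by omega))

lemma asc_pair {k : ℕ} (h : k + 1 ≥ 1) : asc n k (k+1) = sig n k * sig n (k+1) := by
  rw [asc_head (by omega), asc_single]

lemma asc_shift {a b k : ℕ} (h1 : 1 ≤ a) (h2 : a ≤ k) (h3 : k + 1 ≤ b) (h4 : b ≤ n - 1) :
    asc n a b * sig n k = sig n (k+1) * asc n a b := by
  have hsplit : asc n a b = asc n a (k+1) * asc n (k+2) b := asc_append (by omega) (by omega)
  have hcomm : Commute (sig n k) (asc n (k+2) b) := commute_sig_asc_small (by omega)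
  have hsplit2 : asc n a (k+1) = asc n a (k-1) * (sig n k * sig n (k+1)) := by
    rcases Nat.lt_or_ge (k-1) a with hc | hc
    · rw [asc_nil (a := a) (b := k-1) (by omega), one_mul, ← asc_pair (by omega)]
      congr 1; omega
    · rw [asc_append (c := k-1) (by omega) (by omega), ← asc_pair (by omega)]
      congr 2 <;> omega
  have hcomm2 : Commute (sig n (k+1)) (asc n a (k-1)) := commute_sig_asc_big (by omega)
  have key : asc n a (k+1) * sig n k = sig n (k+1) * asc n a (k+1) := by
    rw [hsplit2]
    calc asc n a (k-1) * (sig n k * sig n (k+1)) * sig n k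
        = asc n a (k-1) * (sig n k * sig n (k+1) * sig n k) := by group
      _ = asc n a (k-1) * (sig n (k+1) * sig n k * sig n (k+1)) := by
          rw [rel1 (by omega) (by omega)]
      _ = asc n a (k-1) * sig n (k+1) * (sig n k * sig n (k+1)) := by group
      _ = sig n (k+1) * asc n a (k-1) * (sig n k * sig n (k+1)) := by rw [← hcomm2.eq]
      _ = sig n (k+1) * (asc n a (k-1) * (sig n k * sig n (k+1))) := by group
  calc asc n a b * sig n k
      = asc n a (k+1) * (asc n (k+2) b * sig n k) := by rw [hsplit]; group
    _ = asc n a (k+1) * (sig n k * asc n (k+2) b) := by rw [hcomm.eq]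
    _ = (asc n a (k+1) * sig n k) * asc n (k+2) b := by group
    _ = sig n (k+1) * (asc n a (k+1) * asc n (k+2) b) := by rw [key]; group
    _ = sig n (k+1) * asc n a b := by rw [← hsplit]

lemma dsc_pairrev {k : ℕ} : dsc n k (k+1) = sig n (k+1) * sig n k := by
  rw [dsc_headsucc (by omega), dsc_single]

lemma dsc_shift {a b k : ℕ} (h1 : 1 ≤ a) (h2 : a ≤ k) (h3 : k + 1 ≤ b) (h4 : b ≤ n - 1) :
    dsc n a b * sig n (k+1) = sig n k * dsc n a b := by
  have hsplit : dsc n a b = dsc n k b * dsc n a (k-1) := by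
    rcases Nat.lt_or_ge (k-1) a with hc | hc
    · rw [dsc_nil (a := a) (b := k-1) (by omega), mul_one]; congr 1; omega
    · rw [dsc_append (c := k-1) (by omega) (by omega)]; congr 2 <;> omega
  have hsplit2 : dsc n k b = dsc n (k+2) b * (sig n (k+1) * sig n k) := by
    rw [dsc_append (c := k+1) (by omega) (by omega), dsc_pairrev]
  have hcomm : Commute (sig n (k+1)) (dsc n a (k-1)) := commute_sig_dsc_big (by omega)
  have hcomm2 : Commute (sig n k) (dsc n (k+2) b) := commute_sig_dsc_small (by omega)
  have key : dsc n k b * sig n (k+1) = sig n k * dsc n k b := by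
    rw [hsplit2]
    calc dsc n (k+2) b * (sig n (k+1) * sig n k) * sig n (k+1)
        = dsc n (k+2) b * (sig n (k+1) * sig n k * sig n (k+1)) := by group
      _ = dsc n (k+2) b * (sig n k * sig n (k+1) * sig n k) := by
          rw [← rel1 (by omega) (by omega)]
      _ = dsc n (k+2) b * sig n k * (sig n (k+1) * sig n k) := by group
      _ = sig n k * dsc n (k+2) b * (sig n (k+1) * sig n k) := by rw [← hcomm2.eq]
      _ = sig n k * (dsc n (k+2) b * (sig n (k+1) * sig n k)) := by group
  calc dsc n a b * sig n (k+1)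
      = dsc n k b * (dsc n a (k-1) * sig n (k+1)) := by rw [hsplit]; group
    _ = dsc n k b * (sig n (k+1) * dsc n a (k-1)) := by rw [← hcomm.eq]
    _ = (dsc n k b * sig n (k+1)) * dsc n a (k-1) := by group
    _ = sig n k * (dsc n k b * dsc n a (k-1)) := by rw [key]; group
    _ = sig n k * dsc n a b := by rw [← hsplit]

/-- moving `asc 1 m` left across a descending word shifts it up. -/
lemma ascm_dsc {m c d : ℕ} (hm : m ≤ n - 1) (h1 : 1 ≤ c) (h2 : d ≤ m - 1) :
    asc n 1 m * dsc n c d = dsc n (c+1) (d+1) * asc n 1 m := by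
  rcases Nat.lt_or_ge d c with hc | hc
  · rw [dsc_nil (a := c) (b := d) (by omega), dsc_nil (a := c+1) (b := d+1) (by omega),
      mul_one, one_mul]
  obtain ⟨f, hf⟩ : ∃ f, d - c = f := ⟨_, rfl⟩
  induction f generalizing c with
  | zero =>
      have : d = c := by omega
      subst this
      rw [dsc_single, dsc_single]
      exact asc_shift le_rfl h1 (by omega) hm
  | succ f ih =>
      have hcd : c < d := by omega
      calc asc n 1 m * dsc n c d
          = (asc n 1 m * dsc n (c+1) d) * sig n c := by
            rw [dsc_last (a := c) (b := d) (by omega)]; group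
        _ = dsc n (c+2) (d+1) * (asc n 1 m * sig n c) := by
            rw [ih (by omega) (by omega) (by omega)]; group
        _ = dsc n (c+2) (d+1) * sig n (c+1) * asc n 1 m := by
            rw [asc_shift le_rfl h1 (by omega) hm]; group
        _ = dsc n (c+1) (d+1) * asc n 1 m := by rw [← dsc_last (a := c+1) (by omega)]

/-- moving `asc 1 m` left across an ascending word shifts it up. -/
lemma ascm_asc {m c d : ℕ} (hm : m ≤ n - 1) (h1 : 1 ≤ c) (h2 : d ≤ m - 1) :
    asc n 1 m * asc n c d = asc n (c+1) (d+1) * asc n 1 m := by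
  rcases Nat.lt_or_ge d c with hc | hc
  · rw [asc_nil (a := c) (b := d) (by omega), asc_nil (a := c+1) (b := d+1) (by omega),
      mul_one, one_mul]
  obtain ⟨f, hf⟩ : ∃ f, d - c = f := ⟨_, rfl⟩
  induction f generalizing c with
  | zero =>
      have : d = c := by omega
      subst this
      rw [asc_single, asc_single]
      exact asc_shift le_rfl h1 (by omega) hm
  | succ f ih =>
      have hcd : c < d := by omega
      calc asc n 1 m * asc n c d
          = (asc n 1 m * sig n c) * asc n (c+1) d := by
            rw [asc_head (a := c) (b := d) (by omega)]; group
        _ = sig n (c+1) * (asc n 1 m * asc n (c+1) d) := by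
            rw [asc_shift le_rfl h1 (by omega) hm]; group
        _ = sig n (c+1) * asc n (c+2) (d+1) * asc n 1 m := by
            rw [ih (by omega) (by omega) (by omega)]; group
        _ = asc n (c+1) (d+1) * asc n 1 m := by rw [← asc_head (a := c+1) (by omega)]

/-- moving `dsc 1 m` left across an ascending word shifts it down. -/
lemma dscm_asc {m c d : ℕ} (hm : m ≤ n - 1) (h1 : 1 ≤ c) (h2 : d + 1 ≤ m) :
    dsc n 1 m * asc n (c+1) (d+1) = asc n c d * dsc n 1 m := by
  rcases Nat.lt_or_ge d c with hc | hc
  · rw [asc_nil (a := c+1) (b := d+1) (by omega), asc_nil (a := c) (b := d) (by omega),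
      mul_one, one_mul]
  obtain ⟨f, hf⟩ : ∃ f, d - c = f := ⟨_, rfl⟩
  induction f generalizing c with
  | zero =>
      have : d = c := by omega
      subst this
      rw [asc_single, asc_single]
      exact dsc_shift le_rfl h1 (by omega) hm
  | succ f ih =>
      have hcd : c < d := by omega
      calc dsc n 1 m * asc n (c+1) (d+1)
          = (dsc n 1 m * sig n (c+1)) * asc n (c+2) (d+1) := by
            rw [asc_head (a := c+1) (b := d+1) (by omega)]; group
        _ = sig n c * (dsc n 1 m * asc n (c+2) (d+1)) := by
            rw [dsc_shift le_rfl h1 (by omega) hm]; group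
        _ = sig n c * asc n (c+1) d * dsc n 1 m := by
            rw [ih (by omega) (by omega) (by omega)]; group
        _ = asc n c d * dsc n 1 m := by rw [← asc_head (a := c) (by omega)]

lemma spec1 {m : ℕ} (h2 : 2 ≤ m) (hm : m ≤ n - 1) :
    sig n m * asc n 1 m = asc n 1 (m-1) * (sig n m * sig n (m-1)) := by
  have e1 : asc n 1 m = asc n 1 (m-1) * sig n m := asc_last (by omega) (by omega)
  have e2 : asc n 1 (m-1) = asc n 1 (m-2) * sig n (m-1) := by
    rw [asc_last (a := 1) (b := m-1) (by omega) (by omega)]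
    congr 2 <;> omega
  have hc : Commute (sig n m) (asc n 1 (m-2)) := commute_sig_asc_big (by omega)
  have hb : sig n (m-1) * sig n m * sig n (m-1) = sig n m * sig n (m-1) * sig n m := by
    have := rel1 (n := n) (k := m-1) (by omega) (by omega)
    rw [show m - 1 + 1 = m by omega] at this
    exact this
  calc sig n m * asc n 1 m
      = sig n m * asc n 1 (m-2) * (sig n (m-1) * sig n m) := by rw [e1, e2]; group
    _ = asc n 1 (m-2) * (sig n m * sig n (m-1) * sig n m) := by rw [hc.eq]; group
    _ = asc n 1 (m-2) * (sig n (m-1) * sig n m * sig n (m-1)) := by rw [hb]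
    _ = asc n 1 (m-1) * (sig n m * sig n (m-1)) := by rw [e2]; group

lemma p1_step {m k : ℕ} (hk : k + 1 ≤ m) (hm : m ≤ n - 1) :
    dsc n (m-k+1) m * asc n 1 m = asc n 1 (m-1) * dsc n (m-k) m := by
  rcases Nat.eq_zero_or_pos k with hk0 | hk0
  · subst hk0
    rw [dsc_nil (by omega), one_mul, show m - 0 = m by omega, dsc_single]
    exact asc_last (by omega) (by omega)
  · have hm2 : 2 ≤ m := by omega
    have e1 : dsc n (m-k+1) m = sig n m * dsc n (m-k+1) (m-1) :=
      dsc_head (by omega) (by omega)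
    have e2 : dsc n (m-k+1) (m-1) * asc n 1 m = asc n 1 m * dsc n (m-k) (m-2) := by
      have := ascm_dsc (n := n) (m := m) (c := m-k) (d := m-2) hm (by omega) (by omega)
      rw [show m - k + 1 = m - k + 1 from rfl, show m - 2 + 1 = m - 1 by omega] at this
      exact this.symm
    have e3 : dsc n (m-k) m = sig n m * (sig n (m-1) * dsc n (m-k) (m-2)) := by
      rw [dsc_head (a := m-k) (b := m) (by omega) (by omega),
        dsc_head (a := m-k) (b := m-1) (by omega) (by omega)]
      congr 3 <;> omega
    calc dsc n (m-k+1) m * asc n 1 m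
        = sig n m * (dsc n (m-k+1) (m-1) * asc n 1 m) := by rw [e1]; group
      _ = (sig n m * asc n 1 m) * dsc n (m-k) (m-2) := by rw [e2]; group
      _ = asc n 1 (m-1) * (sig n m * sig n (m-1)) * dsc n (m-k) (m-2) := by
          rw [spec1 hm2 hm]
      _ = asc n 1 (m-1) * dsc n (m-k) m := by rw [e3]; group

lemma p1 {m k : ℕ} (hk : k ≤ m) (hm : m ≤ n - 1) :
    (asc n 1 m)^k = (asc n 1 (m-1))^k * dsc n (m-k+1) m := by
  induction k with
  | zero => rw [pow_zero, pow_zero, dsc_nil (by omega), one_mul]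
  | succ k ih =>
      have hk' : k ≤ m := by omega
      calc (asc n 1 m)^(k+1)
          = (asc n 1 (m-1))^k * (dsc n (m-k+1) m * asc n 1 m) := by
            rw [pow_succ, ih hk']; group
        _ = (asc n 1 (m-1))^k * (asc n 1 (m-1) * dsc n (m-k) m) := by
            rw [p1_step hk hm]
        _ = (asc n 1 (m-1))^(k+1) * dsc n (m-(k+1)+1) m := by
            rw [pow_succ, show m - (k+1) + 1 = m - k by omega]; group

lemma spec2 {m : ℕ} (h2 : 2 ≤ m) (hm : m ≤ n - 1) :
    dsc n 1 m * sig n m = sig n (m-1) * (sig n m * dsc n 1 (m-1)) := by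
  have e1 : dsc n 1 m = sig n m * dsc n 1 (m-1) := dsc_head (by omega) (by omega)
  have e2 : dsc n 1 (m-1) = sig n (m-1) * dsc n 1 (m-2) := by
    rw [dsc_head (a := 1) (b := m-1) (by omega) (by omega)]
    congr 2 <;> omega
  have hc : Commute (sig n m) (dsc n 1 (m-2)) := commute_sig_dsc_big (by omega)
  have hb : sig n (m-1) * sig n m * sig n (m-1) = sig n m * sig n (m-1) * sig n m := by
    have := rel1 (n := n) (k := m-1) (by omega) (by omega)
    rw [show m - 1 + 1 = m by omega] at this
    exact this
  calc dsc n 1 m * sig n m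
      = sig n m * sig n (m-1) * (dsc n 1 (m-2) * sig n m) := by rw [e1, e2]; group
    _ = sig n m * sig n (m-1) * sig n m * dsc n 1 (m-2) := by rw [← hc.eq]; group
    _ = sig n (m-1) * sig n m * sig n (m-1) * dsc n 1 (m-2) := by rw [← hb]
    _ = sig n (m-1) * (sig n m * dsc n 1 (m-1)) := by rw [e2]; group

lemma q1_step {m k : ℕ} (hk : k + 1 ≤ m) (hm : m ≤ n - 1) :
    dsc n 1 m * asc n (m-k+1) m = asc n (m-k) m * dsc n 1 (m-1) := by
  rcases Nat.eq_zero_or_pos k with hk0 | hk0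
  · subst hk0
    rw [asc_nil (by omega), mul_one, show m - 0 = m by omega, asc_single]
    exact dsc_head (by omega) (by omega)
  · have hm2 : 2 ≤ m := by omega
    have e1 : asc n (m-k+1) m = asc n (m-k+1) (m-1) * sig n m := asc_last (by omega) (by omega)
    have e2 : dsc n 1 m * asc n (m-k+1) (m-1) = asc n (m-k) (m-2) * dsc n 1 m := by
      have := dscm_asc (n := n) (m := m) (c := m-k) (d := m-2) hm (by omega) (by omega)
      rw [show m - 2 + 1 = m - 1 by omega] at this
      exact this
    have e3 : asc n (m-k) m = asc n (m-k) (m-2) * sig n (m-1) * sig n m := by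
      rw [asc_last (a := m-k) (b := m) (by omega) (by omega),
        asc_last (a := m-k) (b := m-1) (by omega) (by omega)]
      congr 3 <;> omega
    calc dsc n 1 m * asc n (m-k+1) m
        = (dsc n 1 m * asc n (m-k+1) (m-1)) * sig n m := by rw [e1]; group
      _ = asc n (m-k) (m-2) * (dsc n 1 m * sig n m) := by rw [e2]; group
      _ = asc n (m-k) (m-2) * (sig n (m-1) * (sig n m * dsc n 1 (m-1))) := by
          rw [spec2 hm2 hm]
      _ = asc n (m-k) m * dsc n 1 (m-1) := by rw [e3]; group

lemma q1 {m k : ℕ} (hk : k ≤ m) (hm : m ≤ n - 1) :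
    (dsc n 1 m)^k = asc n (m-k+1) m * (dsc n 1 (m-1))^k := by
  induction k with
  | zero => rw [pow_zero, pow_zero, asc_nil (by omega), mul_one]
  | succ k ih =>
      have hk' : k ≤ m := by omega
      calc (dsc n 1 m)^(k+1)
          = (dsc n 1 m * asc n (m-k+1) m) * (dsc n 1 (m-1))^k := by
            rw [pow_succ', ih hk']; group
        _ = asc n (m-k) m * ((dsc n 1 (m-1)) * (dsc n 1 (m-1))^k) := by
            rw [q1_step hk hm]; group
        _ = asc n (m-(k+1)+1) m * (dsc n 1 (m-1))^(k+1) := by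
            rw [← pow_succ', show m - (k+1) + 1 = m - k by omega]

lemma lpal_comm {m k : ℕ} (h1 : 1 ≤ k) (h2 : k ≤ m - 1) (hm : m ≤ n - 1) :
    Commute (dsc n 1 m * asc n 1 m) (sig n k) := by
  unfold Commute SemiconjBy
  calc dsc n 1 m * asc n 1 m * sig n k
      = dsc n 1 m * (asc n 1 m * sig n k) := by group
    _ = (dsc n 1 m * sig n (k+1)) * asc n 1 m := by
        rw [asc_shift le_rfl h1 (by omega) hm]; group
    _ = sig n k * (dsc n 1 m * asc n 1 m) := by
        rw [dsc_shift le_rfl h1 (by omega) hm]; group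

lemma lpal_comm_pow {m j : ℕ} (hm : m ≤ n - 1) :
    Commute (dsc n 1 m * asc n 1 m) ((asc n 1 (m-1))^j) := by
  apply Commute.pow_right
  apply Commute.list_prod_right
  intro x hx
  simp only [List.mem_map, List.mem_range] at hx
  obtain ⟨t, ht, rfl⟩ := hx
  exact lpal_comm (by omega) (by omega) hm

lemma zbar {m : ℕ} (h1 : 1 ≤ m) (hm : m ≤ n) :
    (dsc n 1 (m-1))^m = (asc n 1 (m-1))^m := by
  induction m, h1 using Nat.le_induction with
  | base =>
      rw [show (1 : ℕ) - 1 = 0 from rfl, dsc_nil (by omega), asc_nil (by omega)]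
  | succ m hm1 ih =>
      have hmn : m ≤ n - 1 := by omega
      rw [show m + 1 - 1 = m by omega]
      have hq : (dsc n 1 m)^m = asc n 1 m * (dsc n 1 (m-1))^m := by
        have := q1 (n := n) (m := m) (k := m) le_rfl hmn
        rw [show m - m + 1 = 1 by omega] at this
        exact this
      have hp : (asc n 1 m)^m = (asc n 1 (m-1))^m * dsc n 1 m := by
        have := p1 (n := n) (m := m) (k := m) le_rfl hmn
        rw [show m - m + 1 = 1 by omega] at this
        exact this
      calc (dsc n 1 m)^(m+1)
          = dsc n 1 m * (asc n 1 m * (dsc n 1 (m-1))^m) := by rw [pow_succ', hq]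
        _ = dsc n 1 m * asc n 1 m * (asc n 1 (m-1))^m := by rw [ih (by omega)]; group
        _ = (asc n 1 (m-1))^m * (dsc n 1 m * asc n 1 m) := by
            rw [(lpal_comm_pow hmn).eq]
        _ = ((asc n 1 (m-1))^m * dsc n 1 m) * asc n 1 m := by group
        _ = (asc n 1 m)^(m+1) := by rw [← hp, pow_succ]

lemma cen (hn : 3 ≤ n) :
    asc n 1 (n-1) ^ 2 * sig n (n-1) = sig n 1 * asc n 1 (n-1) ^ 2 := by
  have hdelta : asc n 1 (n-1) = asc n 1 (n-2) * sig n (n-1) := by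
    rw [asc_last (a := 1) (b := n-1) (by omega) (by omega)]
    congr 2 <;> omega
  have hp1 : (asc n 1 (n-1))^2 = (asc n 1 (n-2))^2 * dsc n (n-2) (n-1) := by
    have := p1 (n := n) (m := n-1) (k := 2) (by omega) (by omega)
    rw [show n - 1 - 1 = n - 2 by omega, show n - 1 - 2 + 1 = n - 2 by omega] at this
    exact this
  have hdsc : dsc n (n-2) (n-1) = sig n (n-1) * sig n (n-2) := by
    rw [dsc_head (a := n-2) (b := n-1) (by omega) (by omega),
      show n - 1 - 1 = n - 2 by omega, dsc_single]
  have hs : sig n (n-1) * asc n 1 (n-2) = asc n 1 (n-3) * (sig n (n-1) * sig n (n-2)) := by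
    have e : asc n 1 (n-2) = asc n 1 (n-3) * sig n (n-2) := by
      rw [asc_last (a := 1) (b := n-2) (by omega) (by omega)]
      congr 2 <;> omega
    have hc : Commute (sig n (n-1)) (asc n 1 (n-3)) := commute_sig_asc_big (by omega)
    rw [e, ← mul_assoc, hc.eq]; group
  have hshift : asc n 1 (n-2) * asc n 1 (n-3) = asc n 2 (n-2) * asc n 1 (n-2) := by
    have := ascm_asc (n := n) (m := n-2) (c := 1) (d := n-3) (by omega) le_rfl (by omega)
    rw [show n - 3 + 1 = n - 2 by omega] at this
    exact this
  have hhead : sig n 1 * asc n 2 (n-2) = asc n 1 (n-2) := (asc_head (by omega)).symm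
  have key : sig n 1 * (asc n 1 (n-2) * sig n (n-1) * asc n 1 (n-2)) = (asc n 1 (n-1))^2 := by
    calc sig n 1 * (asc n 1 (n-2) * sig n (n-1) * asc n 1 (n-2))
        = sig n 1 * (asc n 1 (n-2) * asc n 1 (n-3) * (sig n (n-1) * sig n (n-2))) := by
          rw [mul_assoc (asc n 1 (n-2)), hs]; group
      _ = (sig n 1 * asc n 2 (n-2)) * asc n 1 (n-2) * (sig n (n-1) * sig n (n-2)) := by
          rw [hshift]; group
      _ = asc n 1 (n-2) * asc n 1 (n-2) * dsc n (n-2) (n-1) := by rw [hhead, hdsc]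
      _ = (asc n 1 (n-1))^2 := by rw [hp1, sq]
  calc asc n 1 (n-1) ^ 2 * sig n (n-1)
      = sig n 1 * (asc n 1 (n-2) * sig n (n-1) * asc n 1 (n-2)) * sig n (n-1) := by rw [key]
    _ = sig n 1 * ((asc n 1 (n-2) * sig n (n-1)) * (asc n 1 (n-2) * sig n (n-1))) := by group
    _ = sig n 1 * asc n 1 (n-1) ^ 2 := by rw [← hdelta, sq]

lemma chain_eq {i j : ℕ} (h : i < j) : chain n i j = dsc n (i+1) (j-1) := by
  unfold chain dsc
  rw [show j - 1 + 1 - (i+1) = j - i - 1 by omega]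

lemma ASym_lt {i j : ℕ} (h : i < j) : ASym n i j = Agen n i j := by
  unfold ASym
  rw [if_neg (by omega), min_eq_left h.le, max_eq_right h.le]

lemma ASym_gt {i j : ℕ} (h : j < i) : ASym n i j = Agen n j i := by
  unfold ASym
  rw [if_neg (by omega), min_eq_right h.le, max_eq_left h.le]

lemma Agen_succ {j k : ℕ} (h1 : j + 1 ≤ k) :
    Agen n j (k+1) = sig n k * Agen n j k * (sig n k)⁻¹ := by
  have hc : chain n j (k+1) = sig n k * chain n j k := by
    rw [chain_eq (by omega), chain_eq (by omega), show k + 1 - 1 = k by omega]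
    exact dsc_head (by omega) (by omega)
  unfold Agen
  rw [hc]; group

lemma sig_braid_conj {k : ℕ} (h1 : 2 ≤ k) (h2 : k ≤ n - 1) :
    sig n k * (sig n (k-1))^2 * (sig n k)⁻¹ =
      (sig n (k-1))⁻¹ * (sig n k)^2 * sig n (k-1) := by
  have hb : sig n (k-1) * sig n k * sig n (k-1) = sig n k * sig n (k-1) * sig n k := by
    have := rel1 (n := n) (k := k-1) (by omega) (by omega)
    rw [show k - 1 + 1 = k by omega] at this
    exact this
  have h2' : sig n k * sig n (k-1) * (sig n k)⁻¹ = (sig n (k-1))⁻¹ * sig n k * sig n (k-1) := by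
    calc sig n k * sig n (k-1) * (sig n k)⁻¹
        = (sig n (k-1))⁻¹ * (sig n (k-1) * sig n k * sig n (k-1)) * (sig n k)⁻¹ := by group
      _ = (sig n (k-1))⁻¹ * (sig n k * sig n (k-1) * sig n k) * (sig n k)⁻¹ := by rw [hb]
      _ = (sig n (k-1))⁻¹ * sig n k * sig n (k-1) := by group
  calc sig n k * (sig n (k-1))^2 * (sig n k)⁻¹
      = (sig n k * sig n (k-1) * (sig n k)⁻¹) * (sig n k * sig n (k-1) * (sig n k)⁻¹) := by
        rw [sq]; group
    _ = ((sig n (k-1))⁻¹ * sig n k * sig n (k-1)) * ((sig n (k-1))⁻¹ * sig n k * sig n (k-1)) := by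
        rw [h2']
    _ = (sig n (k-1))⁻¹ * (sig n k)^2 * sig n (k-1) := by rw [sq]; group

lemma alt {j k : ℕ} (h1 : 1 ≤ j) (h2 : j < k) (h3 : k ≤ n) :
    Agen n j k = (dsc n j (k-2))⁻¹ * (sig n (k-1))^2 * dsc n j (k-2) := by
  induction k, h2 using Nat.le_induction with
  | base =>
      unfold Agen
      rw [chain_eq (by omega), show j + 1 - 1 = j by omega, dsc_nil (by omega),
        dsc_nil (a := j) (b := j+1-2) (by omega)]
      group
  | succ k hk ih =>
      have hkn : k ≤ n - 1 := by omega
      have hcomm : Commute (sig n k) ((dsc n j (k-2))⁻¹) :=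
        (commute_sig_dsc_big (by omega)).inv_right
      have hcomm2 : Commute ((sig n k)⁻¹) (dsc n j (k-2)) :=
        (commute_sig_dsc_big (a := j) (b := k-2) (by omega)).inv_left
      have e : dsc n j (k-1) = sig n (k-1) * dsc n j (k-2) := dsc_head (by omega) (by omega)
      calc Agen n j (k+1)
          = sig n k * Agen n j k * (sig n k)⁻¹ := Agen_succ (by omega)
        _ = sig n k * ((dsc n j (k-2))⁻¹ * (sig n (k-1))^2 * dsc n j (k-2)) * (sig n k)⁻¹ := by
            rw [ih (by omega)]
        _ = (dsc n j (k-2))⁻¹ * (sig n k * (sig n (k-1))^2 * (sig n k)⁻¹) * dsc n j (k-2) := by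
            rw [← mul_assoc, ← mul_assoc, hcomm.eq]
            rw [mul_assoc _ (dsc n j (k-2)) ((sig n k)⁻¹), ← hcomm2.eq]
            group
        _ = (dsc n j (k-2))⁻¹ * ((sig n (k-1))⁻¹ * (sig n k)^2 * sig n (k-1)) * dsc n j (k-2) := by
            rw [sig_braid_conj (by omega) (by omega)]
        _ = (sig n (k-1) * dsc n j (k-2))⁻¹ * (sig n k)^2 * (sig n (k-1) * dsc n j (k-2)) := by
            group
        _ = (dsc n j (k+1-2))⁻¹ * (sig n (k+1-1))^2 * dsc n j (k+1-2) := by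
            rw [show k + 1 - 2 = k - 1 by omega, show k + 1 - 1 = k by omega, e]

lemma col_aux (d : ℕ) : ∀ r, 1 ≤ r → r + d ≤ n →
    ((List.range d).map (fun t => Agen n (r+t) (r+d))).prod
      = dsc n r (r+d-1) * asc n r (r+d-1) := by
  induction d with
  | zero =>
      intro r h1 h2
      simp only [List.range_zero, List.map_nil, List.prod_nil]
      rw [dsc_nil (by omega), asc_nil (by omega), one_mul]
  | succ d ih =>
      intro r h1 h2
      rw [List.range_succ_eq_map, List.map_cons, List.prod_cons, List.map_map]
      have hfun : ((fun t => Agen n (r+t) (r+(d+1))) ∘ Nat.succ)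
          = fun t => Agen n ((r+1)+t) ((r+1)+d) := by
        funext t; simp only [Function.comp_apply]; congr 1 <;> omega
      rw [hfun, ih (r+1) (by omega) (by omega)]
      have hA : Agen n (r+0) (r+(d+1)) = dsc n (r+1) (r+d) * (sig n r)^2 * (dsc n (r+1) (r+d))⁻¹ := by
        unfold Agen
        rw [chain_eq (by omega), show r + 0 = r from rfl, show r+(d+1)-1 = r+d by omega]
      have e1 : dsc n r (r+d) = dsc n (r+1) (r+d) * sig n r := dsc_last (by omega)
      have e2 : asc n r (r+d) = sig n r * asc n (r+1) (r+d) := asc_head (by omega)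
      calc Agen n (r+0) (r+(d+1)) * (dsc n (r+1) ((r+1)+d-1) * asc n (r+1) ((r+1)+d-1))
          = dsc n (r+1) (r+d) * (sig n r)^2 * (dsc n (r+1) (r+d))⁻¹ *
              (dsc n (r+1) (r+d) * asc n (r+1) (r+d)) := by
            rw [hA, show (r+1)+d-1 = r+d by omega]
        _ = (dsc n (r+1) (r+d) * sig n r) * (sig n r * asc n (r+1) (r+d)) := by rw [sq]; group
        _ = dsc n r (r+(d+1)-1) * asc n r (r+(d+1)-1) := by
            rw [show r+(d+1)-1 = r+d by omega, e1, e2]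

lemma row_aux {j : ℕ} (h1 : 1 ≤ j) : ∀ r, j ≤ r → r ≤ n →
    ((List.range (r - j)).map (fun t => Agen n j (j+1+t))).prod
      = asc n j (r-1) * dsc n j (r-1) := by
  intro r hr hrn
  induction r, hr using Nat.le_induction with
  | base =>
      rw [show j - j = 0 by omega]
      simp only [List.range_zero, List.map_nil, List.prod_nil]
      rw [asc_nil (by omega), dsc_nil (by omega), one_mul]
  | succ r hr ih =>
      rw [show r + 1 - j = (r - j) + 1 by omega, List.range_succ, List.map_append,
        List.prod_append]
      rw [ih (by omega)]
      simp only [List.map_cons, List.map_nil, List.prod_cons, List.prod_nil, mul_one]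
      have hA : Agen n j (j+1+(r-j)) = (dsc n j (r-1))⁻¹ * (sig n r)^2 * dsc n j (r-1) := by
        rw [show j+1+(r-j) = r+1 by omega]
        have := alt (n := n) (j := j) (k := r+1) h1 (by omega) (by omega)
        rw [show r + 1 - 2 = r - 1 by omega, show r + 1 - 1 = r by omega] at this
        exact this
      have e1 : asc n j r = asc n j (r-1) * sig n r := asc_last (by omega) (by omega)
      have e2 : dsc n j r = sig n r * dsc n j (r-1) := dsc_head (by omega) (by omega)
      calc asc n j (r-1) * dsc n j (r-1) * Agen n j (j+1+(r-j))
          = asc n j (r-1) * dsc n j (r-1) * ((dsc n j (r-1))⁻¹ * (sig n r)^2 * dsc n j (r-1)) := by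
            rw [hA]
        _ = (asc n j (r-1) * sig n r) * (sig n r * dsc n j (r-1)) := by rw [sq]; group
        _ = asc n j (r+1-1) * dsc n j (r+1-1) := by
            rw [show r + 1 - 1 = r by omega, e1, e2]

/-- the value of the full column product `A_{1,j} A_{2,j} ⋯ A_{n,j}`. -/
def Cval (n j : ℕ) : BraidGroup n :=
  ((List.range n).map (fun t => ASym n (t+1) j)).prod

lemma cfull {j : ℕ} (h1 : 1 ≤ j) (h2 : j ≤ n) :
    Cval n j = dsc n 1 (j-1) * asc n 1 (n-1) * dsc n j (n-1) := by
  unfold Cval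
  have hrange : List.range n
      = (List.range (j-1) ++ [j-1]) ++ (List.range (n-j)).map (fun t => j + t) := by
    have h4 : List.range j = List.range (j-1) ++ [j-1] := by
      conv_lhs => rw [show j = (j-1)+1 by omega]
      exact List.range_succ
    conv_lhs => rw [show n = j + (n-j) by omega]
    rw [List.range_add, h4]
  rw [hrange, List.map_append, List.map_append, List.prod_append, List.prod_append]
  have hmid : (([j-1]).map (fun t => ASym n (t+1) j)).prod = 1 := by
    simp only [List.map_cons, List.map_nil, List.prod_cons, List.prod_nil, mul_one]
    unfold ASym
    rw [if_pos (by omega)]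
  have hcol : ((List.range (j-1)).map (fun t => ASym n (t+1) j)).prod
      = dsc n 1 (j-1) * asc n 1 (j-1) := by
    have hfun : ∀ t ∈ List.range (j-1), ASym n (t+1) j = Agen n (1+t) (1+(j-1)) := by
      intro t ht
      simp only [List.mem_range] at ht
      rw [ASym_lt (by omega)]
      congr 1 <;> omega
    rw [List.map_congr_left hfun, col_aux (j-1) 1 le_rfl (by omega),
      show 1 + (j-1) - 1 = j - 1 by omega]
  have hrow : (((List.range (n-j)).map (fun t => j + t)).map (fun t => ASym n (t+1) j)).prod
      = asc n j (n-1) * dsc n j (n-1) := by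
    rw [List.map_map]
    have hfun : ((fun t => ASym n (t+1) j) ∘ (fun t => j + t))
        = fun t => Agen n j (j+1+t) := by
      funext t
      simp only [Function.comp_apply]
      rw [ASym_gt (by omega)]
      congr 1 <;> omega
    rw [hfun]
    exact row_aux (n := n) (j := j) h1 n (by omega) le_rfl
  rw [hcol, hmid, hrow, mul_one]
  have hasc : asc n 1 (j-1) * asc n j (n-1) = asc n 1 (n-1) := by
    rcases Nat.eq_or_lt_of_le h2 with he | hlt
    · rw [he, asc_nil (a := n) (b := n-1) (by omega), mul_one]
    · have := asc_append (n := n) (a := 1) (b := n-1) (c := j-1) (by omega) (by omega)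
      rw [show j - 1 + 1 = j by omega] at this
      exact this.symm
  calc dsc n 1 (j-1) * asc n 1 (j-1) * (asc n j (n-1) * dsc n j (n-1))
      = dsc n 1 (j-1) * (asc n 1 (j-1) * asc n j (n-1)) * dsc n j (n-1) := by group
    _ = dsc n 1 (j-1) * asc n 1 (n-1) * dsc n j (n-1) := by rw [hasc]

lemma rot (hn : 3 ≤ n) {j : ℕ} (h1 : 1 ≤ j) (h2 : j ≤ n - 1) :
    asc n 1 (n-1) * Cval n j = Cval n (j+1) * asc n 1 (n-1) := by
  set δ := asc n 1 (n-1) with hδ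
  have e1 : δ * dsc n 1 (j-1) = dsc n 2 j * δ := by
    rcases Nat.eq_or_lt_of_le h1 with he | hlt
    · rw [← he, dsc_nil (by omega), dsc_nil (a := 2) (b := 1) (by omega), mul_one, one_mul]
    · have := ascm_dsc (n := n) (m := n-1) (c := 1) (d := j-1) le_rfl le_rfl (by omega)
      rw [show j - 1 + 1 = j by omega] at this
      exact this
  have e2 : dsc n j (n-1) = sig n (n-1) * dsc n j (n-2) := by
    rw [dsc_head (a := j) (b := n-1) (by omega) (by omega)]
    congr 2 <;> omega
  have e3 : δ * dsc n j (n-2) = dsc n (j+1) (n-1) * δ := by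
    have := ascm_dsc (n := n) (m := n-1) (c := j) (d := n-2) le_rfl h1 (by omega)
    rw [show n - 2 + 1 = n - 1 by omega] at this
    exact this
  have e4 : dsc n 2 j * sig n 1 = dsc n 1 j := (dsc_last (by omega)).symm
  calc δ * Cval n j
      = δ * dsc n 1 (j-1) * δ * dsc n j (n-1) := by rw [cfull h1 (by omega), ← hδ]; group
    _ = dsc n 2 j * (δ^2 * sig n (n-1)) * dsc n j (n-2) := by rw [e1, e2, sq]; group
    _ = dsc n 2 j * (sig n 1 * δ^2) * dsc n j (n-2) := by rw [cen hn]
    _ = dsc n 1 j * δ * (δ * dsc n j (n-2)) := by rw [← e4, sq]; group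
    _ = dsc n 1 j * δ * dsc n (j+1) (n-1) * δ := by rw [e3]; group
    _ = Cval n (j+1) * δ := by
        rw [cfull (j := j+1) (by omega) (by omega), show j + 1 - 1 = j by omega, ← hδ]

lemma rotpow (hn : 3 ≤ n) {m : ℕ} (hm : m ≤ n - 1) :
    Cval n (m+1) * (asc n 1 (n-1))^m = (asc n 1 (n-1))^m * Cval n 1 := by
  induction m with
  | zero => simp
  | succ m ih =>
      calc Cval n (m+2) * (asc n 1 (n-1))^(m+1)
          = (Cval n (m+2) * asc n 1 (n-1)) * (asc n 1 (n-1))^m := by rw [pow_succ']; group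
        _ = asc n 1 (n-1) * (Cval n (m+1) * (asc n 1 (n-1))^m) := by
            rw [← rot hn (by omega) (by omega)]; group
        _ = asc n 1 (n-1) * ((asc n 1 (n-1))^m * Cval n 1) := by rw [ih (by omega)]
        _ = (asc n 1 (n-1))^(m+1) * Cval n 1 := by rw [pow_succ']; group

lemma zcol {jt : ℕ} (h : jt + 2 ≤ n) :
    ((List.range (jt+1)).map (fun it => ASym n (it+1) (jt+2))).prod
      = dsc n 1 (jt+1) * asc n 1 (jt+1) := by
  have hfun : ∀ it ∈ List.range (jt+1), ASym n (it+1) (jt+2) = Agen n (1+it) (1+(jt+1)) := by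
    intro it hit
    simp only [List.mem_range] at hit
    rw [ASym_lt (by omega)]
    congr 1 <;> omega
  rw [List.map_congr_left hfun, col_aux (jt+1) 1 le_rfl (by omega),
    show 1 + (jt+1) - 1 = jt + 1 by omega]

lemma zeq_aux : ∀ m, 1 ≤ m → m ≤ n →
    ((List.range (m-1)).map (fun jt =>
      ((List.range (jt+1)).map (fun it => ASym n (it+1) (jt+2))).prod)).prod
      = (asc n 1 (m-1))^m := by
  intro m h1 hm
  induction m, h1 using Nat.le_induction with
  | base =>
      rw [show (1:ℕ) - 1 = 0 from rfl]
      simp only [List.range_zero, List.map_nil, List.prod_nil]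
      rw [asc_nil (by omega), one_pow]
  | succ m hm1 ih =>
      rw [show m + 1 - 1 = m by omega]
      have hr : List.range m = List.range (m-1) ++ [m-1] := by
        conv_lhs => rw [show m = (m-1)+1 by omega]
        exact List.range_succ
      rw [hr, List.map_append, List.prod_append, ih (by omega)]
      have hlast : (([m-1]).map (fun jt =>
          ((List.range (jt+1)).map (fun it => ASym n (it+1) (jt+2))).prod)).prod
          = dsc n 1 m * asc n 1 m := by
        simp only [List.map_cons, List.map_nil, List.prod_cons, List.prod_nil, mul_one]
        rw [zcol (n := n) (jt := m-1) (by omega), show m - 1 + 1 = m by omega]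
      rw [hlast]
      have hp : (asc n 1 m)^m = (asc n 1 (m-1))^m * dsc n 1 m := by
        have := p1 (n := n) (m := m) (k := m) le_rfl (by omega)
        rw [show m - m + 1 = 1 by omega] at this
        exact this
      calc (asc n 1 (m-1))^m * (dsc n 1 m * asc n 1 m)
          = ((asc n 1 (m-1))^m * dsc n 1 m) * asc n 1 m := by group
        _ = (asc n 1 m)^m * asc n 1 m := by rw [← hp]
        _ = (asc n 1 m)^(m+1) := by rw [pow_succ]

lemma inv_aux (hn : 3 ≤ n) : ∀ m, m ≤ n →
    ((List.range m).map (fun t => (Cval n (t+1))⁻¹)).prod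
      = ((asc n 1 (n-1))^m * (dsc n 1 (n-1))^m)⁻¹ := by
  intro m hm
  induction m with
  | zero => simp
  | succ m ih =>
      rw [List.range_succ, List.map_append, List.prod_append, ih (by omega)]
      simp only [List.map_cons, List.map_nil, List.prod_cons, List.prod_nil, mul_one]
      have hc1 : Cval n 1 = asc n 1 (n-1) * dsc n 1 (n-1) := by
        rw [cfull (j := 1) le_rfl (by omega), show (1:ℕ) - 1 = 0 from rfl,
          dsc_nil (a := 1) (b := 0) (by omega), one_mul]
      have hrot : Cval n (m+1) * (asc n 1 (n-1))^m = (asc n 1 (n-1))^m * Cval n 1 :=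
        rotpow hn (by omega)
      calc ((asc n 1 (n-1))^m * (dsc n 1 (n-1))^m)⁻¹ * (Cval n (m+1))⁻¹
          = (Cval n (m+1) * ((asc n 1 (n-1))^m * (dsc n 1 (n-1))^m))⁻¹ := by group
        _ = ((Cval n (m+1) * (asc n 1 (n-1))^m) * (dsc n 1 (n-1))^m)⁻¹ := by group
        _ = ((asc n 1 (n-1))^m * (asc n 1 (n-1) * dsc n 1 (n-1)) * (dsc n 1 (n-1))^m)⁻¹ := by
            rw [hrot, hc1]
        _ = ((asc n 1 (n-1))^(m+1) * (dsc n 1 (n-1))^(m+1))⁻¹ := by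
            rw [pow_succ, pow_succ']; group

lemma main_braid (hn : 3 ≤ n) :
    ((List.range n).map (fun t => (Cval n (t+1))⁻¹)).prod
      = ((((List.range (n-1)).map (fun jt =>
          ((List.range (jt+1)).map (fun it => ASym n (it+1) (jt+2))).prod)).prod) ^ 2)⁻¹ := by
  rw [inv_aux hn n le_rfl, zeq_aux n (by omega) le_rfl]
  have hbar : (dsc n 1 (n-1))^n = (asc n 1 (n-1))^n := zbar (by omega) le_rfl
  rw [hbar, ← pow_add, ← pow_mul, show n * 2 = n + n by omega]


lemma coe_listprod {G : Type*} [Group G] {H : Subgroup G} (l : List H) :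
    (l.prod : H).val = (l.map Subtype.val).prod := by
  induction l with
  | nil => rfl
  | cons a l ih => simp [ih]

lemma fullTwist_coe : (fullTwist n : P n).val
    = ((List.range (n-1)).map (fun jt =>
        ((List.range (jt+1)).map (fun it => ASym n (it+1) (jt+2))).prod)).prod := by
  unfold fullTwist
  rw [coe_listprod, List.map_map]
  refine congrArg List.prod (List.map_congr_left ?_)
  intro jt _
  simp only [Function.comp_apply]
  rw [coe_listprod, List.map_map]
  rfl

/-- For `n ≥ 3`, the identity `A_{0,1} A_{0,2} ⋯ A_{0,n} = z_n⁻²` holds in `P n`. -/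
theorem prod_A0_eq_fullTwist_neg_two (n : ℕ) (hn : 3 ≤ n) :
    ((List.range n).map (fun t => A₀ n (t + 1))).prod = (fullTwist n ^ 2)⁻¹ := by
  apply Subtype.ext
  rw [coe_listprod, List.map_map]
  have h1 : (Subtype.val ∘ fun t => A₀ n (t+1))
      = fun t => (Cval n (t+1))⁻¹ := rfl
  have h2 : ((fullTwist n ^ 2)⁻¹ : P n).val
      = ((fullTwist n : P n).val ^ 2)⁻¹ := by
    push_cast
    rfl
  rw [h1, h2, fullTwist_coe]
  exact main_braid hn

end Braids
end

section
/- For every integer n ≥ 2 and every β ∈ P_{n+1} with d_{n+1}(β) = 1, one has ∂_n(∂_{n+1}(β)) = ∂_n(d_1(β)). (This is the key identity making the collection 𝒢_n := Ker(d_{n+1} : P_{n+1} → P_n), with face maps d_0 := ∂ and d_i := d_i, a Delta-group; in contrast, the identity ∂_{n-1} ∘ ∂_n = ∂_{n-1} ∘ d_1 fails on all of P_n.) -/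
namespace Braids

/-! ### Part 1: relations, runs, chains -/

theorem rel_one {m : ℕ} {r : FreeGroup (Fin (m-1))} (hr : r ∈ braidRels m) :
    PresentedGroup.mk (braidRels m) r = 1 := by
  have : r ∈ Subgroup.normalClosure (braidRels m) := Subgroup.subset_normalClosure hr
  exact (QuotientGroup.eq_one_iff r).mpr this

theorem braid_rel {m : ℕ} (i j : Fin (m-1)) (hij : (i : ℕ) + 1 = (j : ℕ)) :
    (σ i) * (σ j) * (σ i) = (σ j) * (σ i) * (σ j) := by
  have h := rel_one (m := m) (r := .of i * .of j * .of i * (.of j * .of i * .of j)⁻¹)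
    (Or.inl ⟨i, j, hij, rfl⟩)
  have h2 : (PresentedGroup.mk (braidRels m)) (FreeGroup.of i * FreeGroup.of j * FreeGroup.of i *
      (FreeGroup.of j * FreeGroup.of i * FreeGroup.of j)⁻¹) =
      (σ i) * (σ j) * (σ i) * ((σ j) * (σ i) * (σ j))⁻¹ := by
    simp only [map_mul, map_inv]; rfl
  rw [h2] at h
  exact mul_inv_eq_one.mp h

theorem comm_rel {m : ℕ} (i j : Fin (m-1)) (hij : (i : ℕ) + 2 ≤ (j : ℕ)) :
    (σ i) * (σ j) = (σ j) * (σ i) := by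
  have h := rel_one (m := m) (r := .of i * .of j * (.of j * .of i)⁻¹)
    (Or.inr ⟨i, j, hij, rfl⟩)
  have h2 : (PresentedGroup.mk (braidRels m)) (FreeGroup.of i * FreeGroup.of j *
      (FreeGroup.of j * FreeGroup.of i)⁻¹) =
      (σ i) * (σ j) * ((σ j) * (σ i))⁻¹ := by
    simp only [map_mul, map_inv]; rfl
  rw [h2] at h
  exact mul_inv_eq_one.mp h

theorem sig_braid {m k : ℕ} (hk : 1 ≤ k) (hk2 : k + 2 ≤ m) :
    sig m k * sig m (k+1) * sig m k = sig m (k+1) * sig m k * sig m (k+1) := by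
  have h1 : (1 ≤ k ∧ k ≤ m - 1) := ⟨hk, by omega⟩
  have h2 : (1 ≤ k + 1 ∧ k + 1 ≤ m - 1) := ⟨by omega, by omega⟩
  rw [sig, sig, dif_pos h1, dif_pos h2]
  exact braid_rel _ _ (by simp; omega)

theorem sig_comm_s15 {m k l : ℕ} (h : k + 2 ≤ l) : Commute (sig m k) (sig m l) := by
  by_cases h1 : 1 ≤ k ∧ k ≤ m - 1
  · by_cases h2 : 1 ≤ l ∧ l ≤ m - 1
    · rw [sig, sig, dif_pos h1, dif_pos h2]
      exact comm_rel _ _ (by simp; omega)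
    · have e : sig m l = 1 := by rw [sig, dif_neg h2]
      rw [e]; exact Commute.one_right _
  · have e : sig m k = 1 := by rw [sig, dif_neg h1]
    rw [e]; exact Commute.one_left _

/-- Descending run `g a * g (a-1) * ⋯ * g b`. -/
def runP {G : Type*} [Group G] (g : ℕ → G) (a b : ℕ) : G :=
  ((List.range (a + 1 - b)).map (fun t => g (a - t))).prod

section runP
variable {G : Type*} [Group G] {g : ℕ → G} {a b k : ℕ}

theorem runP_of_lt (h : a < b) : runP g a b = 1 := by
  rw [runP]
  have : a + 1 - b = 0 := by omega
  rw [this]; rfl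

theorem runP_top (h : b ≤ a) (ha : 1 ≤ a) : runP g a b = g a * runP g (a-1) b := by
  rw [runP, runP]
  have h1 : a + 1 - b = (a - b) + 1 := by omega
  have h2 : a - 1 + 1 - b = a - b := by omega
  have h3 : ((fun t => g (a - t)) ∘ Nat.succ) = (fun t => g (a - 1 - t)) := by
    funext t; simp only [Function.comp_apply]; congr 1; omega
  rw [h1, h2, List.range_succ_eq_map, List.map_cons, List.prod_cons, List.map_map, Nat.sub_zero,
    h3]

theorem runP_bot (h : b ≤ a) : runP g a b = runP g a (b+1) * g b := by
  rw [runP, runP]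
  have h1 : a + 1 - b = (a - b) + 1 := by omega
  have h2 : a + 1 - (b + 1) = a - b := by omega
  rw [h1, h2, List.range_succ, List.map_append, List.prod_append]
  simp only [List.map_cons, List.map_nil, List.prod_cons, List.prod_nil, mul_one]
  congr 2
  omega

theorem commute_runP {x : G} (hx : ∀ p, b ≤ p → p ≤ a → Commute x (g p)) :
    Commute x (runP g a b) := by
  rw [runP]
  apply Commute.list_prod_right
  intro y hy
  simp only [List.mem_map, List.mem_range] at hy
  obtain ⟨t, ht, rfl⟩ := hy
  exact hx (a - t) (by omega) (by omega)

theorem runP_slide (hcm : ∀ p q, p + 2 ≤ q → Commute (g p) (g q))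
    (hbr : g k * g (k+1) * g k = g (k+1) * g k * g (k+1))
    (hk : 1 ≤ k) (hb : b ≤ k) (ha : k < a) :
    g k * runP g a b = runP g a b * g (k+1) := by
  induction a, ha using Nat.le_induction with
  | base =>
    rw [runP_top (show b ≤ k + 1 by omega) (by omega), Nat.add_sub_cancel,
      runP_top (show b ≤ k by omega) (by omega)]
    have hc : Commute (g (k+1)) (runP g (k-1) b) := by
      apply commute_runP
      intro p hp1 hp2
      exact (hcm p (k+1) (by omega)).symm
    calc g k * (g (k+1) * (g k * runP g (k-1) b))
        = (g k * g (k+1) * g k) * runP g (k-1) b := by group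
      _ = (g (k+1) * g k * g (k+1)) * runP g (k-1) b := by rw [hbr]
      _ = (g (k+1) * g k) * (g (k+1) * runP g (k-1) b) := by group
      _ = (g (k+1) * g k) * (runP g (k-1) b * g (k+1)) := by rw [hc.eq]
      _ = g (k+1) * (g k * runP g (k-1) b) * g (k+1) := by group
  | succ a ha ih =>
    rw [runP_top (show b ≤ a + 1 by omega) (by omega), Nat.add_sub_cancel]
    calc g k * (g (a+1) * runP g a b) = (g k * g (a+1)) * runP g a b := by group
      _ = (g (a+1) * g k) * runP g a b := by rw [(hcm k (a+1) (by omega)).eq]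
      _ = g (a+1) * (g k * runP g a b) := by group
      _ = g (a+1) * (runP g a b * g (k+1)) := by rw [ih]
      _ = g (a+1) * runP g a b * g (k+1) := by group

end runP

theorem chain_eq_runP (m i j : ℕ) : chain m i j = runP (sig m) (j-1) (i+1) := by
  rw [chain, runP]
  have : j - i - 1 = (j - 1) + 1 - (i + 1) := by omega
  rw [this]

theorem chain_of_le {m i j : ℕ} (h : j ≤ i + 1) : chain m i j = 1 := by
  rw [chain_eq_runP]; exact runP_of_lt (by omega)

theorem chain_succ {m i j : ℕ} (h : i < j) : chain m i (j+1) = sig m j * chain m i j := by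
  rw [chain_eq_runP, chain_eq_runP]
  have e : j + 1 - 1 = j := by omega
  rw [e, runP_top (by omega) (by omega)]

theorem chain_peel {m i j : ℕ} (h : i + 1 < j) :
    chain m i j = chain m (i+1) j * sig m (i+1) := by
  rw [chain_eq_runP, chain_eq_runP]
  exact runP_bot (by omega)

theorem sig_comm_chain_lt {m k i j : ℕ} (h : k + 1 ≤ i) :
    Commute (sig m k) (chain m i j) := by
  rw [chain_eq_runP]
  exact commute_runP (fun p hp1 _ => sig_comm_s15 (by omega))

theorem sig_comm_chain_gt {m k i j : ℕ} (h : j + 1 ≤ k) :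
    Commute (sig m k) (chain m i j) := by
  rw [chain_eq_runP]
  exact commute_runP (fun p _ hp2 => (sig_comm_s15 (by omega)).symm)

theorem sig_chain_slide {m k i j : ℕ} (h1 : i < k) (h2 : k + 2 ≤ j) (hm : j ≤ m) :
    sig m k * chain m i j = chain m i j * sig m (k+1) := by
  rw [chain_eq_runP]
  exact runP_slide (fun p q h => sig_comm_s15 h) (sig_braid (by omega) (by omega))
    (by omega) (by omega) (by omega)
/-! ### Part 2: conjugation of pure braid generators by Artin generators -/

section braidaux
variable {G : Type*} [Group G] {x y : G}

theorem braid_aux1 (h : x*y*x = y*x*y) : x * (y*(x*x)*y⁻¹) * x⁻¹ = y*y := by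
  have key : x*y*(x*x) = y*y*(x*y) := by
    calc x*y*(x*x) = (x*y*x)*x := by group
      _ = (y*x*y)*x := by rw [h]
      _ = y*(x*y*x) := by group
      _ = y*(y*x*y) := by rw [h]
      _ = y*y*(x*y) := by group
  calc x * (y*(x*x)*y⁻¹) * x⁻¹ = (x*y*(x*x))*y⁻¹*x⁻¹ := by group
    _ = (y*y*(x*y))*y⁻¹*x⁻¹ := by rw [key]
    _ = y*y := by group

theorem braid_aux2 (h : x*y*x = y*x*y) : x * (y*y) * x⁻¹ = y⁻¹ * (x*x) * y := by
  have key : y*(x*(y*y)) = x*x*y*x := by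
    calc y*(x*(y*y)) = (y*x*y)*y := by group
      _ = (x*y*x)*y := by rw [h]
      _ = x*(y*x*y) := by group
      _ = x*(x*y*x) := by rw [h]
      _ = x*x*y*x := by group
  calc x * (y*y) * x⁻¹ = y⁻¹*(y*(x*(y*y)))*x⁻¹ := by group
    _ = y⁻¹*(x*x*y*x)*x⁻¹ := by rw [key]
    _ = y⁻¹ * (x*x) * y := by group

end braidaux

theorem agen_succ {m i j : ℕ} (h : i < j) :
    Agen m i (j+1) = sig m j * Agen m i j * (sig m j)⁻¹ := by
  rw [Agen, Agen, chain_succ h]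
  group

theorem agen_pair (m k : ℕ) : Agen m k (k+1) = sig m k * sig m k := by
  rw [Agen, chain_of_le (by omega), one_mul, inv_one, mul_one, sq]

theorem comm_sig_agen {m k i j : ℕ} (hi : 1 ≤ i) (hij : i < j) (hj : j ≤ m)
    (hA : k + 2 ≤ i ∨ (i + 1 ≤ k ∧ k + 2 ≤ j) ∨ j + 1 ≤ k) :
    Commute (sig m k) (Agen m i j) := by
  rw [Agen]
  rcases hA with hc | ⟨hc1, hc2⟩ | hc
  · have h1 : Commute (sig m k) (chain m i j) := sig_comm_chain_lt (by omega)
    have h2 : Commute (sig m k) (sig m i) := sig_comm_s15 (by omega)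
    exact ((h1.mul_right (h2.pow_right 2)).mul_right h1.inv_right)
  · have hs : sig m k * chain m i j = chain m i j * sig m (k+1) :=
      sig_chain_slide (by omega) hc2 hj
    have h2 : Commute (sig m (k+1)) (sig m i) := (sig_comm_s15 (by omega)).symm
    have hs' : sig m (k+1) * (chain m i j)⁻¹ = (chain m i j)⁻¹ * sig m k := by
      calc sig m (k+1) * (chain m i j)⁻¹
          = (chain m i j)⁻¹ * (chain m i j * sig m (k+1)) * (chain m i j)⁻¹ := by group
        _ = (chain m i j)⁻¹ * (sig m k * chain m i j) * (chain m i j)⁻¹ := by rw [hs]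
        _ = (chain m i j)⁻¹ * sig m k := by group
    show sig m k * (chain m i j * (sig m i)^2 * (chain m i j)⁻¹)
        = (chain m i j * (sig m i)^2 * (chain m i j)⁻¹) * sig m k
    calc sig m k * (chain m i j * (sig m i)^2 * (chain m i j)⁻¹)
        = (sig m k * chain m i j) * (sig m i)^2 * (chain m i j)⁻¹ := by group
      _ = (chain m i j * sig m (k+1)) * (sig m i)^2 * (chain m i j)⁻¹ := by rw [hs]
      _ = chain m i j * (sig m (k+1) * (sig m i)^2) * (chain m i j)⁻¹ := by group
      _ = chain m i j * ((sig m i)^2 * sig m (k+1)) * (chain m i j)⁻¹ := by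
          rw [(h2.pow_right 2).eq]
      _ = chain m i j * (sig m i)^2 * (sig m (k+1) * (chain m i j)⁻¹) := by group
      _ = chain m i j * (sig m i)^2 * ((chain m i j)⁻¹ * sig m k) := by rw [hs']
      _ = (chain m i j * (sig m i)^2 * (chain m i j)⁻¹) * sig m k := by group
  · have h1 : Commute (sig m k) (chain m i j) := sig_comm_chain_gt (by omega)
    have h2 : Commute (sig m k) (sig m i) := (sig_comm_s15 (by omega)).symm
    exact ((h1.mul_right (h2.pow_right 2)).mul_right h1.inv_right)

theorem conj_agen_eq {m i j : ℕ} (hi : 1 ≤ i) (hij : i + 1 < j) (hj : j ≤ m) :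
    sig m i * Agen m i j * (sig m i)⁻¹ = Agen m (i+1) j := by
  have hbr : sig m i * sig m (i+1) * sig m i = sig m (i+1) * sig m i * sig m (i+1) :=
    sig_braid hi (by omega)
  have hcc : Commute (sig m i) (chain m (i+1) j) := sig_comm_chain_lt (le_refl _)
  rw [Agen, Agen, chain_peel hij]
  have inner := braid_aux1 hbr
  have hcc' : (chain m (i+1) j)⁻¹ * (sig m i)⁻¹ = (sig m i)⁻¹ * (chain m (i+1) j)⁻¹ := by
    rw [← mul_inv_rev, hcc.eq, mul_inv_rev]
  calc sig m i * (chain m (i+1) j * sig m (i+1) * (sig m i)^2 *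
          (chain m (i+1) j * sig m (i+1))⁻¹) * (sig m i)⁻¹
      = (sig m i * chain m (i+1) j) * (sig m (i+1) * (sig m i * sig m i) * (sig m (i+1))⁻¹) *
          ((chain m (i+1) j)⁻¹ * (sig m i)⁻¹) := by rw [sq]; group
    _ = (chain m (i+1) j * sig m i) * (sig m (i+1) * (sig m i * sig m i) * (sig m (i+1))⁻¹) *
          ((sig m i)⁻¹ * (chain m (i+1) j)⁻¹) := by rw [hcc.eq, hcc']
    _ = chain m (i+1) j * (sig m i * (sig m (i+1) * (sig m i * sig m i) * (sig m (i+1))⁻¹) *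
          (sig m i)⁻¹) * (chain m (i+1) j)⁻¹ := by group
    _ = chain m (i+1) j * (sig m (i+1) * sig m (i+1)) * (chain m (i+1) j)⁻¹ := by rw [inner]
    _ = chain m (i+1) j * (sig m (i+1))^2 * (chain m (i+1) j)⁻¹ := by rw [sq]

theorem conj_agen_twist {m k j : ℕ} (hk : 1 ≤ k) (hkj : k + 1 < j) (hj : j ≤ m) :
    sig m k * Agen m (k+1) j * (sig m k)⁻¹ =
      (Agen m (k+1) j)⁻¹ * Agen m k j * Agen m (k+1) j := by
  have hbr : sig m k * sig m (k+1) * sig m k = sig m (k+1) * sig m k * sig m (k+1) :=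
    sig_braid hk (by omega)
  have hcc : Commute (sig m k) (chain m (k+1) j) := sig_comm_chain_lt (le_refl _)
  have inner := braid_aux2 hbr
  rw [Agen, Agen, chain_peel hkj]
  have hcc' : (chain m (k+1) j)⁻¹ * (sig m k)⁻¹ = (sig m k)⁻¹ * (chain m (k+1) j)⁻¹ := by
    rw [← mul_inv_rev, hcc.eq, mul_inv_rev]
  calc sig m k * (chain m (k+1) j * (sig m (k+1))^2 * (chain m (k+1) j)⁻¹) * (sig m k)⁻¹
      = (sig m k * chain m (k+1) j) * (sig m (k+1) * sig m (k+1)) *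
        ((chain m (k+1) j)⁻¹ * (sig m k)⁻¹) := by rw [sq]; group
    _ = (chain m (k+1) j * sig m k) * (sig m (k+1) * sig m (k+1)) *
        ((sig m k)⁻¹ * (chain m (k+1) j)⁻¹) := by rw [hcc.eq, hcc']
    _ = chain m (k+1) j * (sig m k * (sig m (k+1) * sig m (k+1)) * (sig m k)⁻¹) *
        (chain m (k+1) j)⁻¹ := by group
    _ = chain m (k+1) j * ((sig m (k+1))⁻¹ * (sig m k * sig m k) * sig m (k+1)) *
        (chain m (k+1) j)⁻¹ := by rw [inner]
    _ = (chain m (k+1) j * (sig m (k+1))^2 * (chain m (k+1) j)⁻¹)⁻¹ *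
        (chain m (k+1) j * sig m (k+1) * (sig m k)^2 * (chain m (k+1) j * sig m (k+1))⁻¹) *
        (chain m (k+1) j * (sig m (k+1))^2 * (chain m (k+1) j)⁻¹) := by
          rw [sq, sq]; group
/-! ### Part 3: permutation side: generators, extension and restriction -/

/-- 1-indexed adjacent transposition (junk `1` out of range). -/
def sw (m k : ℕ) : Equiv.Perm (Fin m) :=
  if h : 1 ≤ k ∧ k ≤ m - 1 then Equiv.swap ⟨k-1, by omega⟩ ⟨k, by omega⟩ else 1

theorem sw_eq_swap {m k : ℕ} (h1 : 1 ≤ k) (h2 : k ≤ m - 1) :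
    sw m k = Equiv.swap (⟨k-1, by omega⟩ : Fin m) ⟨k, by omega⟩ := by
  rw [sw, dif_pos ⟨h1, h2⟩]

theorem toPerm_sig (m k : ℕ) : toPerm m (sig m k) = sw m k := by
  by_cases h : 1 ≤ k ∧ k ≤ m - 1
  · rw [sig, dif_pos h, sw, dif_pos h, σ, toPerm, PresentedGroup.toGroup.of, swapGen]
    congr 1
    exact Fin.ext (by simp; omega)
  · rw [sig, dif_neg h, sw, dif_neg h, map_one]

theorem sw_sq (m k : ℕ) : sw m k * sw m k = 1 := by
  by_cases h : 1 ≤ k ∧ k ≤ m - 1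
  · rw [sw, dif_pos h]; exact Equiv.swap_mul_self _ _
  · rw [sw, dif_neg h, one_mul]

theorem sw_braid {m k : ℕ} (h1 : 1 ≤ k) (h2 : k + 2 ≤ m) :
    sw m k * sw m (k+1) * sw m k = sw m (k+1) * sw m k * sw m (k+1) := by
  rw [sw_eq_swap h1 (by omega), sw_eq_swap (show 1 ≤ k+1 by omega) (by omega)]
  simp only [Nat.add_sub_cancel]
  exact swap_braid (by simp only [ne_eq, Fin.mk.injEq]; omega)
    (by simp only [ne_eq, Fin.mk.injEq]; omega) (by simp only [ne_eq, Fin.mk.injEq]; omega)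

theorem sw_comm {m k l : ℕ} (h : k + 2 ≤ l) : Commute (sw m k) (sw m l) := by
  by_cases hk : 1 ≤ k ∧ k ≤ m - 1
  · by_cases hl : 1 ≤ l ∧ l ≤ m - 1
    · rw [sw, dif_pos hk, sw, dif_pos hl]
      exact swap_commute (by simp only [ne_eq, Fin.mk.injEq]; omega)
        (by simp only [ne_eq, Fin.mk.injEq]; omega)
        (by simp only [ne_eq, Fin.mk.injEq]; omega) (by simp only [ne_eq, Fin.mk.injEq]; omega)
    · have e : sw m l = 1 := by rw [sw, dif_neg hl]
      rw [e]; exact Commute.one_right _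
  · have e : sw m k = 1 := by rw [sw, dif_neg hk]
    rw [e]; exact Commute.one_left _

/-- Extension of a permutation of `Fin m` to `Fin (m+1)` fixing `0`. -/
def extP {m : ℕ} (τ : Equiv.Perm (Fin m)) : Equiv.Perm (Fin (m+1)) :=
  Equiv.Perm.decomposeFin.symm (0, τ)

theorem extP_zero {m : ℕ} (τ : Equiv.Perm (Fin m)) : extP τ 0 = 0 :=
  Equiv.Perm.decomposeFin_symm_apply_zero 0 τ

theorem extP_succ {m : ℕ} (τ : Equiv.Perm (Fin m)) (i : Fin m) :
    extP τ i.succ = (τ i).succ := by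
  rw [extP, Equiv.Perm.decomposeFin_symm_apply_succ]
  simp

theorem extP_mul {m : ℕ} (τ ψ : Equiv.Perm (Fin m)) :
    extP (τ * ψ) = extP τ * extP ψ := by
  ext x
  refine Fin.cases ?_ (fun i => ?_) x
  · simp [Equiv.Perm.mul_apply, extP_zero]
  · simp [Equiv.Perm.mul_apply, extP_succ]

theorem extP_one {m : ℕ} : extP (1 : Equiv.Perm (Fin m)) = 1 := by
  ext x
  refine Fin.cases ?_ (fun i => ?_) x
  · simp [extP_zero]
  · simp [extP_succ]

theorem extP_swap {m : ℕ} (a b : Fin m) :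
    extP (Equiv.swap a b) = Equiv.swap a.succ b.succ := by
  ext x
  refine Fin.cases ?_ (fun i => ?_) x
  · rw [extP_zero, Equiv.swap_apply_of_ne_of_ne (Fin.succ_ne_zero a).symm
      (Fin.succ_ne_zero b).symm]
  · rw [extP_succ]
    rcases eq_or_ne i a with rfl | hia
    · rw [Equiv.swap_apply_left, Equiv.swap_apply_left]
    · rcases eq_or_ne i b with rfl | hib
      · rw [Equiv.swap_apply_right, Equiv.swap_apply_right]
      · rw [Equiv.swap_apply_of_ne_of_ne hia hib, Equiv.swap_apply_of_ne_of_ne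
          (fun hh => hia (Fin.succ_injective _ hh)) (fun hh => hib (Fin.succ_injective _ hh))]

theorem extP_sw {m k : ℕ} (h1 : 1 ≤ k) (h2 : k ≤ m - 1) :
    extP (sw m k) = sw (m+1) (k+1) := by
  rw [sw_eq_swap h1 h2, extP_swap, sw_eq_swap (show 1 ≤ k + 1 by omega) (by omega)]
  congr 1 <;> exact Fin.ext (by simp [Fin.succ]; omega)

/-- Restriction of a permutation of `Fin (m+1)` fixing `0` to `Fin m` (junk `1` otherwise). -/
def resP {m : ℕ} (β : Equiv.Perm (Fin (m+1))) : Equiv.Perm (Fin m) :=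
  if hβ : β 0 = 0 then
    { toFun := fun i => Fin.pred (β i.succ)
        (fun hc => Fin.succ_ne_zero i (β.injective (hc.trans hβ.symm)))
      invFun := fun i => Fin.pred (β⁻¹ i.succ)
        (fun hc => Fin.succ_ne_zero i (by
          have h2 := congrArg β hc
          rwa [← Equiv.Perm.mul_apply, mul_inv_cancel, Equiv.Perm.one_apply, hβ] at h2))
      left_inv := fun i => by simp
      right_inv := fun i => by simp }
  else 1

theorem resP_extP {m : ℕ} (τ : Equiv.Perm (Fin m)) : resP (extP τ) = τ := by
  rw [resP, dif_pos (extP_zero τ)]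
  ext i
  simp [extP_succ]

theorem extP_resP {m : ℕ} (β : Equiv.Perm (Fin (m+1))) (hβ : β 0 = 0) :
    extP (resP β) = β := by
  ext x
  refine Fin.cases ?_ (fun i => ?_) x
  · rw [extP_zero, hβ]
  · rw [extP_succ, resP, dif_pos hβ]
    simp
/-! ### Part 4: words in involutive generators satisfying braid relations
are governed by their permutation images -/

theorem key_present (m : ℕ) {G : Type*} [Group G] :
    ∀ (f : ℕ → G), (∀ k, f k * f k = 1) →
    (∀ k, 1 ≤ k → k + 2 ≤ m → f k * f (k+1) * f k = f (k+1) * f k * f (k+1)) →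
    (∀ p q, p + 2 ≤ q → Commute (f p) (f q)) →
    ∃ ρ : Equiv.Perm (Fin m) → G, ρ 1 = 1 ∧
      ∀ k, 1 ≤ k → k ≤ m - 1 → ∀ π, ρ (sw m k * π) = f k * ρ π := by
  induction m with
  | zero =>
    intro f _ _ _
    exact ⟨fun _ => 1, rfl, fun k hk1 hk2 _ => absurd (hk1.trans hk2) (by omega)⟩
  | succ m ih =>
    intro f hsq hbr hcm
    obtain ⟨ρ', hρ1, hρ2⟩ := ih (fun k => if k = 0 then 1 else f (k+1))
      (by
        intro k
        by_cases h : k = 0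
        · simp [h]
        · simp only [if_neg h]; exact hsq (k+1))
      (by
        intro k h1 h2
        simp only [if_neg (by omega : ¬ k = 0), if_neg (by omega : ¬ k + 1 = 0)]
        exact hbr (k+1) (by omega) (by omega))
      (by
        intro p q h
        by_cases hp : p = 0
        · simp only [hp, if_pos rfl]; exact Commute.one_left _
        · simp only [if_neg hp, if_neg (by omega : ¬ q = 0)]
          exact hcm (p+1) (q+1) (by omega))
    set CW : ℕ → Equiv.Perm (Fin (m+1)) := fun a => runP (sw (m+1)) a 1 with hCWdef
    set W : ℕ → G := fun a => runP f a 1 with hWdef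
    have hCW0 : CW 0 = 1 := runP_of_lt (by omega)
    have hCWtop : ∀ a, 1 ≤ a → CW a = sw (m+1) a * CW (a-1) :=
      fun a ha => runP_top (by omega) ha
    have hW0 : W 0 = 1 := runP_of_lt (by omega)
    have hWtop : ∀ a, 1 ≤ a → W a = f a * W (a-1) :=
      fun a ha => runP_top (by omega) ha
    have hCWapp : ∀ a, ∀ _ : a ≤ m, CW a 0 = ⟨a, by omega⟩ := by
      intro a
      induction a with
      | zero => intro _; rw [hCW0]; rfl
      | succ a iha =>
        intro ha
        rw [hCWtop (a+1) (by omega), Nat.add_sub_cancel, Equiv.Perm.mul_apply,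
          iha (by omega), sw_eq_swap (by omega) (by omega : a + 1 ≤ m + 1 - 1)]
        simp only [Nat.add_sub_cancel]
        exact Equiv.swap_apply_left _ _
    have rho_eq : ∀ (π : Equiv.Perm (Fin (m+1))) (a : ℕ) (τ : Equiv.Perm (Fin m)),
        a ≤ m → π = CW a * extP τ →
        W (π 0).val * ρ' (resP ((CW (π 0).val)⁻¹ * π)) = W a * ρ' τ := by
      intro π a τ ha hdec
      have h0 : π 0 = ⟨a, by omega⟩ := by
        rw [hdec, Equiv.Perm.mul_apply, extP_zero, hCWapp a ha]
      rw [h0]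
      show W a * ρ' (resP ((CW a)⁻¹ * π)) = W a * ρ' τ
      rw [hdec, inv_mul_cancel_left, resP_extP]
    refine ⟨fun π => W (π 0).val * ρ' (resP ((CW (π 0).val)⁻¹ * π)), ?_, ?_⟩
    · simp only []
      rw [rho_eq 1 0 1 (by omega) (by rw [hCW0, extP_one, mul_one]), hW0, hρ1, mul_one]
    · intro k hk1 hk2 π
      simp only []
      have hk2' : k ≤ m := by omega
      set a := (π 0).val with hadef
      have ha : a ≤ m := by omega
      have hβ0 : ((CW a)⁻¹ * π) 0 = 0 := by
        have hc : CW a 0 = π 0 := by rw [hCWapp a ha]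
        rw [Equiv.Perm.mul_apply, ← hc, ← Equiv.Perm.mul_apply, inv_mul_cancel, Equiv.Perm.one_apply]
      set τ0 := resP ((CW a)⁻¹ * π) with hτ0
      have hπdec : π = CW a * extP τ0 := by
        rw [hτ0, extP_resP _ hβ0, mul_inv_cancel_left]
      have hρπ : W (π 0).val * ρ' (resP ((CW (π 0).val)⁻¹ * π)) = W a * ρ' τ0 :=
        rho_eq π a τ0 ha hπdec
      rw [hρπ]
      rcases Nat.lt_trichotomy k a with hka | hka | hka
      · -- k < a : sliding case
        have hkm : k ≤ m - 1 := by omega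
        have hslide : sw (m+1) k * CW a = CW a * sw (m+1) (k+1) :=
          runP_slide (fun p q h => sw_comm h) (sw_braid hk1 (by omega)) hk1 (by omega) hka
        have hdec2 : sw (m+1) k * π = CW a * extP (sw m k * τ0) := by
          rw [extP_mul, extP_sw hk1 hkm]
          calc sw (m+1) k * π = sw (m+1) k * (CW a * extP τ0) := by rw [← hπdec]
            _ = (sw (m+1) k * CW a) * extP τ0 := by rw [mul_assoc]
            _ = (CW a * sw (m+1) (k+1)) * extP τ0 := by rw [hslide]
            _ = CW a * (sw (m+1) (k+1) * extP τ0) := by rw [mul_assoc]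
        rw [rho_eq _ a (sw m k * τ0) ha hdec2, hρ2 k hk1 hkm τ0]
        have hfslide : f k * W a = W a * f (k+1) :=
          runP_slide hcm (hbr k hk1 (by omega)) hk1 (by omega) hka
        simp only [if_neg (by omega : ¬ k = 0)]
        calc W a * (f (k+1) * ρ' τ0) = (W a * f (k+1)) * ρ' τ0 := by rw [mul_assoc]
          _ = (f k * W a) * ρ' τ0 := by rw [← hfslide]
          _ = f k * (W a * ρ' τ0) := by rw [mul_assoc]
      · -- k = a : absorption case
        subst hka
        have hdec2 : sw (m+1) a * π = CW (a-1) * extP τ0 := by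
          calc sw (m+1) a * π = sw (m+1) a * (CW a * extP τ0) := by rw [← hπdec]
            _ = sw (m+1) a * (sw (m+1) a * CW (a-1) * extP τ0) := by
                rw [← hCWtop a hk1]
            _ = (sw (m+1) a * sw (m+1) a) * (CW (a-1) * extP τ0) := by group
            _ = CW (a-1) * extP τ0 := by rw [sw_sq, one_mul]
        rw [rho_eq _ (a-1) τ0 (by omega) hdec2, hWtop a hk1]
        calc W (a-1) * ρ' τ0 = 1 * (W (a-1) * ρ' τ0) := by rw [one_mul]
          _ = (f a * f a) * (W (a-1) * ρ' τ0) := by rw [hsq a]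
          _ = f a * (f a * W (a-1) * ρ' τ0) := by group
      · -- k > a
        rcases Nat.eq_or_lt_of_le hka with hka' | hka'
        · -- k = a + 1 : extension case
          have hdec2 : sw (m+1) k * π = CW k * extP τ0 := by
            rw [hCWtop k (by omega), hπdec]
            have : k - 1 = a := by omega
            rw [this, mul_assoc]
          rw [rho_eq _ k τ0 (by omega) hdec2, hWtop k (by omega)]
          have : k - 1 = a := by omega
          rw [this, mul_assoc]
        · -- k ≥ a + 2 : commuting case
          have hc1 : Commute (sw (m+1) k) (CW a) :=
            commute_runP (fun p hp1 hp2 => (sw_comm (show p + 2 ≤ k by omega)).symm)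
          have e1 : k - 1 + 1 = k := by omega
          have hdec2 : sw (m+1) k * π = CW a * extP (sw m (k-1) * τ0) := by
            rw [extP_mul]
            have e2 : extP (sw m (k-1)) = sw (m+1) k := by
              rw [extP_sw (by omega) (by omega), e1]
            rw [e2]
            calc sw (m+1) k * π = sw (m+1) k * (CW a * extP τ0) := by rw [← hπdec]
              _ = (sw (m+1) k * CW a) * extP τ0 := by rw [mul_assoc]
              _ = (CW a * sw (m+1) k) * extP τ0 := by rw [hc1.eq]
              _ = CW a * (sw (m+1) k * extP τ0) := by rw [mul_assoc]
          rw [rho_eq _ a (sw m (k-1) * τ0) ha hdec2, hρ2 (k-1) (by omega) (by omega) τ0]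
          simp only [if_neg (by omega : ¬ k - 1 = 0), e1]
          have hc2 : Commute (f k) (W a) :=
            commute_runP (fun p hp1 hp2 => (hcm p k (by omega)).symm)
          calc W a * (f k * ρ' τ0) = (W a * f k) * ρ' τ0 := by rw [mul_assoc]
            _ = (f k * W a) * ρ' τ0 := by rw [← hc2.eq]
            _ = f k * (W a * ρ' τ0) := by rw [mul_assoc]
/-! ### Part 5: the pure braid group is generated by the `Agen` -/

theorem conj_eq_of_commute {G : Type*} [Group G] {x y : G} (h : Commute x y) :
    x * y * x⁻¹ = y := by rw [h.eq]; group

theorem conj_inv_eq_of_commute {G : Type*} [Group G] {x y : G} (h : Commute x y) :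
    x⁻¹ * y * x = y := by rw [(h.inv_left).eq]; group

theorem mem_normalizer_of_conj {G : Type*} [Group G] {S : Set G} {x : G}
    (h1 : ∀ a ∈ S, x * a * x⁻¹ ∈ Subgroup.closure S)
    (h2 : ∀ a ∈ S, x⁻¹ * a * x ∈ Subgroup.closure S) :
    x ∈ Subgroup.normalizer (Subgroup.closure S : Set G) := by
  rw [Subgroup.mem_normalizer_iff]
  intro h
  constructor
  · intro hh
    refine Subgroup.closure_induction (p := fun g _ => x * g * x⁻¹ ∈ Subgroup.closure S)
      h1 (by simpa using one_mem _) ?_ ?_ hh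
    · intro u v _ _ hu hv
      have e : x * (u * v) * x⁻¹ = (x * u * x⁻¹) * (x * v * x⁻¹) := by group
      rw [e]; exact mul_mem hu hv
    · intro u _ hu
      have e : x * u⁻¹ * x⁻¹ = (x * u * x⁻¹)⁻¹ := by group
      rw [e]; exact inv_mem hu
  · intro hh
    have e : h = x⁻¹ * (x * h * x⁻¹) * x := by group
    rw [e]
    refine Subgroup.closure_induction (p := fun g _ => x⁻¹ * g * x ∈ Subgroup.closure S)
      h2 (by simpa using one_mem _) ?_ ?_ hh
    · intro u v _ _ hu hv
      have e2 : x⁻¹ * (u * v) * x = (x⁻¹ * u * x) * (x⁻¹ * v * x) := by group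
      rw [e2]; exact mul_mem hu hv
    · intro u _ hu
      have e2 : x⁻¹ * u⁻¹ * x = (x⁻¹ * u * x)⁻¹ := by group
      rw [e2]; exact inv_mem hu

/-- The set of standard pure braid generators. -/
def AgenSet (m : ℕ) : Set (BraidGroup m) :=
  {b | ∃ i j : ℕ, 1 ≤ i ∧ i < j ∧ j ≤ m ∧ b = Agen m i j}

/-- The subgroup generated by the pure braid generators. -/
def GA (m : ℕ) : Subgroup (BraidGroup m) := Subgroup.closure (AgenSet m)

theorem agen_mem_GA {m i j : ℕ} (hi : 1 ≤ i) (hij : i < j) (hj : j ≤ m) :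
    Agen m i j ∈ GA m :=
  Subgroup.subset_closure ⟨i, j, hi, hij, hj, rfl⟩

theorem conj_sig_agen_mem {m k i j : ℕ} (hi : 1 ≤ i) (hij : i < j) (hj : j ≤ m)
    (hk1 : 1 ≤ k) (hk : k ≤ m - 1) :
    sig m k * Agen m i j * (sig m k)⁻¹ ∈ GA m ∧
    (sig m k)⁻¹ * Agen m i j * sig m k ∈ GA m := by
  by_cases hc1 : k + 2 ≤ i ∨ (i + 1 ≤ k ∧ k + 2 ≤ j) ∨ j + 1 ≤ k
  · have hcm := comm_sig_agen hi hij hj hc1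
    rw [conj_eq_of_commute hcm, conj_inv_eq_of_commute hcm]
    exact ⟨agen_mem_GA hi hij hj, agen_mem_GA hi hij hj⟩
  by_cases hc2 : k + 1 = i
  · -- k = i - 1
    have h1 : sig m k * Agen m (k+1) j * (sig m k)⁻¹ =
        (Agen m (k+1) j)⁻¹ * Agen m k j * Agen m (k+1) j :=
      conj_agen_twist hk1 (by omega) hj
    have h2 : sig m k * Agen m k j * (sig m k)⁻¹ = Agen m (k+1) j :=
      conj_agen_eq hk1 (by omega) hj
    have h2' : (sig m k)⁻¹ * Agen m (k+1) j * sig m k = Agen m k j := by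
      rw [← h2]; group
    rw [← hc2]
    constructor
    · rw [h1]
      exact mul_mem (mul_mem (inv_mem (agen_mem_GA (by omega) (by omega) hj))
        (agen_mem_GA hk1 (by omega) hj)) (agen_mem_GA (by omega) (by omega) hj)
    · rw [h2']
      exact agen_mem_GA hk1 (by omega) hj
  by_cases hc3 : k = i
  · subst hc3
    by_cases hcj : j = k + 1
    · subst hcj
      have hcm : Commute (sig m k) (Agen m k (k+1)) := by
        rw [agen_pair]
        exact (Commute.refl _).mul_right (Commute.refl _)
      rw [conj_eq_of_commute hcm, conj_inv_eq_of_commute hcm]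
      exact ⟨agen_mem_GA hi hij hj, agen_mem_GA hi hij hj⟩
    · -- k = i < j - 1
      have h2 : sig m k * Agen m k j * (sig m k)⁻¹ = Agen m (k+1) j :=
        conj_agen_eq hk1 (by omega) hj
      have h1 : sig m k * Agen m (k+1) j * (sig m k)⁻¹ =
          (Agen m (k+1) j)⁻¹ * Agen m k j * Agen m (k+1) j :=
        conj_agen_twist hk1 (by omega) hj
      have h3 : (sig m k)⁻¹ * Agen m (k+1) j * sig m k = Agen m k j := by
        rw [← h2]; group
      have h3' : (sig m k)⁻¹ * (Agen m (k+1) j)⁻¹ * sig m k = (Agen m k j)⁻¹ := by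
        rw [← h3]; group
      have h4 : (sig m k)⁻¹ * ((Agen m (k+1) j)⁻¹ * Agen m k j * Agen m (k+1) j) * sig m k
          = Agen m (k+1) j := by rw [← h1]; group
      have h5 : (sig m k)⁻¹ * Agen m k j * sig m k =
          Agen m k j * Agen m (k+1) j * (Agen m k j)⁻¹ := by
        calc (sig m k)⁻¹ * Agen m k j * sig m k
            = ((sig m k)⁻¹ * Agen m (k+1) j * sig m k) *
              ((sig m k)⁻¹ * ((Agen m (k+1) j)⁻¹ * Agen m k j * Agen m (k+1) j) * sig m k) *
              ((sig m k)⁻¹ * (Agen m (k+1) j)⁻¹ * sig m k) := by group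
          _ = Agen m k j * Agen m (k+1) j * (Agen m k j)⁻¹ := by rw [h3, h4, h3']
      constructor
      · rw [h2]; exact agen_mem_GA (by omega) (by omega) hj
      · rw [h5]
        exact mul_mem (mul_mem (agen_mem_GA hk1 (by omega) hj)
          (agen_mem_GA (by omega) (by omega) hj)) (inv_mem (agen_mem_GA hk1 (by omega) hj))
  by_cases hc5 : k + 1 = j
  · -- k = j - 1 > i
    have hsucc : Agen m i (k+1) = sig m k * Agen m i k * (sig m k)⁻¹ :=
      agen_succ (by omega)
    have hpair : Agen m k (k+1) = sig m k * sig m k := agen_pair m k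
    have hfwd : sig m k * Agen m i (k+1) * (sig m k)⁻¹ =
        Agen m k (k+1) * Agen m i k * (Agen m k (k+1))⁻¹ := by
      rw [hsucc, hpair]; group
    have hbwd : (sig m k)⁻¹ * Agen m i (k+1) * sig m k = Agen m i k := by
      rw [hsucc]; group
    rw [← hc5]
    constructor
    · rw [hfwd]
      exact mul_mem (mul_mem (agen_mem_GA hk1 (by omega) (by omega))
        (agen_mem_GA hi (by omega) (by omega)))
        (inv_mem (agen_mem_GA hk1 (by omega) (by omega)))
    · rw [hbwd]
      exact agen_mem_GA hi (by omega) (by omega)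
  · -- remaining possibility : k = j
    have hc6 : k = j := by omega
    subst hc6
    have hsucc : Agen m i (k+1) = sig m k * Agen m i k * (sig m k)⁻¹ :=
      agen_succ (by omega)
    have hpair : Agen m k (k+1) = sig m k * sig m k := agen_pair m k
    have hfwd : sig m k * Agen m i k * (sig m k)⁻¹ = Agen m i (k+1) := by
      rw [hsucc]
    have hbwd : (sig m k)⁻¹ * Agen m i k * sig m k =
        (Agen m k (k+1))⁻¹ * Agen m i (k+1) * Agen m k (k+1) := by
      rw [hsucc, hpair]; group
    constructor
    · rw [hfwd]; exact agen_mem_GA hi (by omega) (by omega)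
    · rw [hbwd]
      exact mul_mem (mul_mem (inv_mem (agen_mem_GA hk1 (by omega) (by omega)))
        (agen_mem_GA hi (by omega) (by omega))) (agen_mem_GA hk1 (by omega) (by omega))

theorem sig_mem_normalizer (m k : ℕ) : sig m k ∈ Subgroup.normalizer (GA m : Set (BraidGroup m)) := by
  by_cases hk : 1 ≤ k ∧ k ≤ m - 1
  · apply mem_normalizer_of_conj
    · rintro a ⟨i, j, hi, hij, hj, rfl⟩
      exact (conj_sig_agen_mem hi hij hj hk.1 hk.2).1
    · rintro a ⟨i, j, hi, hij, hj, rfl⟩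
      exact (conj_sig_agen_mem hi hij hj hk.1 hk.2).2
  · have e : sig m k = 1 := by rw [sig, dif_neg hk]
    rw [e]; exact one_mem _

theorem sig_of_fin {m : ℕ} (i : Fin (m-1)) : (σ i : BraidGroup m) = sig m ((i : ℕ) + 1) := by
  rw [sig, dif_pos ⟨by omega, by omega⟩]
  congr 1

theorem GA_normal (m : ℕ) : (GA m).Normal := by
  rw [← Subgroup.normalizer_eq_top_iff]
  rw [eq_top_iff]
  intro x _
  refine PresentedGroup.generated_by (braidRels m) _ ?_ x
  intro i
  have : (PresentedGroup.of i : BraidGroup m) = σ i := rfl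
  rw [this, sig_of_fin]
  exact sig_mem_normalizer m _

theorem pure_le_GA (m : ℕ) : PureBraid m ≤ GA m := by
  haveI : (GA m).Normal := GA_normal m
  set Q := BraidGroup m ⧸ GA m
  set q : BraidGroup m →* Q := QuotientGroup.mk' (GA m) with hq
  have hsq : ∀ k, q (sig m k) * q (sig m k) = 1 := by
    intro k
    by_cases hk : 1 ≤ k ∧ k ≤ m - 1
    · rw [← map_mul, ← agen_pair, QuotientGroup.mk'_apply, QuotientGroup.eq_one_iff]
      exact agen_mem_GA hk.1 (by omega) (by omega)
    · have e : sig m k = 1 := by rw [sig, dif_neg hk]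
      rw [e, map_one, one_mul]
  obtain ⟨ρ, hρ1, hρ2⟩ := key_present m (fun k => q (sig m k)) hsq
    (fun k h1 h2 => by rw [← map_mul, ← map_mul, ← map_mul, ← map_mul, sig_braid h1 h2])
    (fun p r h => (Commute.map (sig_comm_s15 h) q))
  have main : ∀ w : FreeGroup (Fin (m-1)), ∀ π : Equiv.Perm (Fin m),
      q (PresentedGroup.mk (braidRels m) w) * ρ π =
        ρ (toPerm m (PresentedGroup.mk (braidRels m) w) * π) := by
    intro w
    refine FreeGroup.induction_on w ?_ ?_ ?_ ?_
    · intro π; simp [hρ1]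
    · intro x π
      have e1 : PresentedGroup.mk (braidRels m) (FreeGroup.of x) = sig m ((x : ℕ) + 1) := by
        rw [← sig_of_fin]; rfl
      rw [e1, toPerm_sig]
      exact (hρ2 ((x : ℕ) + 1) (by omega) (by omega) π).symm
    · intro x hx π
      have e1 : PresentedGroup.mk (braidRels m) (FreeGroup.of x) = sig m ((x : ℕ) + 1) := by
        rw [← sig_of_fin]; rfl
      rw [map_inv, map_inv, map_inv, e1, toPerm_sig]
      have h2 := hρ2 ((x : ℕ) + 1) (by omega) (by omega) ((sw m ((x : ℕ) + 1))⁻¹ * π)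
      rw [mul_inv_cancel_left] at h2
      rw [h2]
      group
    · intro w1 w2 h1 h2 π
      rw [map_mul, map_mul, map_mul, mul_assoc, h2, h1, mul_assoc]
  intro g hg
  obtain ⟨w, rfl⟩ := PresentedGroup.mk_surjective (braidRels m) g
  have h1 := main w 1
  rw [hρ1, mul_one] at h1
  have hgperm : toPerm m (PresentedGroup.mk (braidRels m) w) = 1 := hg
  rw [hgperm, one_mul, hρ1] at h1
  rwa [hq, QuotientGroup.mk'_apply, QuotientGroup.eq_one_iff] at h1
/-! ### Part 6: subgroup-level computations -/

theorem ASym_eq_agen {m i j : ℕ} (hij : i < j) : ASym m i j = Agen m i j := by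
  rw [ASym, if_neg (Nat.ne_of_lt hij), Nat.min_eq_left (le_of_lt hij),
    Nat.max_eq_right (le_of_lt hij)]

theorem A_coe {m i j : ℕ} : ((A m i j : P m) : BraidGroup m) = ASym m i j := rfl

theorem A_symm (m i j : ℕ) : A m i j = A m j i := by
  apply Subtype.ext
  rw [A_coe, A_coe, ASym, ASym]
  by_cases h : i = j
  · rw [if_pos h, if_pos h.symm]
  · rw [if_neg h, if_neg (fun hh => h hh.symm), Nat.min_comm, Nat.max_comm]

theorem A_diag (m i : ℕ) : A m i i = 1 := by
  apply Subtype.ext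
  rw [A_coe, ASym, if_pos rfl]
  rfl

theorem A0_eq (m j : ℕ) :
    A₀ m j = (((List.range m).map (fun t => A m (t+1) j)).prod)⁻¹ := by
  apply Subtype.ext
  have h1 : (((((List.range m).map (fun t => A m (t+1) j)).prod)⁻¹ : P m) : BraidGroup m) =
      ((((List.range m).map (fun t => A m (t+1) j)).prod : P m) : BraidGroup m)⁻¹ := rfl
  rw [h1]
  have h2 : ((((List.range m).map (fun t => A m (t+1) j)).prod : P m) : BraidGroup m) =
      (((List.range m).map (fun t => ASym m (t+1) j)).prod) := by
    rw [show ((((List.range m).map (fun t => A m (t+1) j)).prod : P m) : BraidGroup m) =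
      (PureBraid m).subtype (((List.range m).map (fun t => A m (t+1) j)).prod) from rfl]
    rw [map_list_prod, List.map_map]
    rfl
  rw [h2]
  rfl

theorem prod_range_head {M : Type*} [Monoid M] (g : ℕ → M) (m : ℕ) (hm : 1 ≤ m) :
    ((List.range m).map g).prod = g 0 * ((List.range (m-1)).map (fun s => g (s+1))).prod := by
  obtain ⟨n, rfl⟩ : ∃ n, m = n + 1 := ⟨m - 1, by omega⟩
  rw [List.range_succ_eq_map, List.map_cons, List.prod_cons, List.map_map, Nat.add_sub_cancel]
  rfl

/-- Evaluation of a strand-removal homomorphism on a generator, symmetric version. -/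
theorem sr_eval {m k : ℕ} {dd : P m →* P (m-1)} (h : IsStrandRemoval m k dd)
    {i j : ℕ} (hi : 1 ≤ i) (hj : 1 ≤ j) (him : i ≤ m) (hjm : j ≤ m) (hij : i ≠ j) :
    dd (A m i j) = if k = i ∨ k = j then 1 else A (m-1) (phi k i) (phi k j) := by
  rcases Nat.lt_or_ge i j with hlt | hge
  · rw [h i j hi hlt hjm]
  · have hlt : j < i := by omega
    rw [A_symm, h j i hj hlt him]
    by_cases hk : k = i ∨ k = j
    · rw [if_pos (Or.symm hk), if_pos hk]
    · rw [if_neg (fun hh => hk (Or.symm hh)), if_neg hk, A_symm]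

theorem phi_one (x : ℕ) : phi 1 x = x - 1 := by
  rw [phi]
  split <;> omega

theorem d1_A0 {m : ℕ} (hm : 2 ≤ m) {d₁ : P m →* P (m-1)}
    (h : IsStrandRemoval m 1 d₁) {j : ℕ} (h2 : 2 ≤ j) (hj : j ≤ m) :
    d₁ (A₀ m j) = A₀ (m-1) (j-1) := by
  rw [A0_eq, map_inv, map_list_prod, List.map_map]
  have hterm : ∀ t ∈ List.range m, (d₁ ∘ (fun t => A m (t+1) j)) t =
      (fun t => if t = 0 then 1 else A (m-1) t (j-1)) t := by
    intro t ht
    rw [List.mem_range] at ht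
    simp only [Function.comp_apply]
    by_cases ht0 : t = 0
    · subst ht0
      rw [sr_eval h (by omega) (by omega) (by omega) hj (by omega), if_pos (Or.inl rfl),
        if_pos rfl]
    · by_cases htj : t + 1 = j
      · rw [htj, A_diag, map_one, if_neg ht0, show t = j - 1 by omega, A_diag]
      · rw [sr_eval h (by omega) (by omega) (by omega) hj (fun hh => htj hh),
          if_neg (by omega), if_neg ht0, phi_one, phi_one, Nat.add_sub_cancel]
  rw [List.map_congr_left hterm, prod_range_head _ m (by omega), if_pos rfl, one_mul,
    A0_eq, inv_inj]
  have e : (fun s => if s + 1 = 0 then (1 : P (m-1)) else A (m-1) (s+1) (j-1)) =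
      (fun s => A (m-1) (s+1) (j-1)) := by
    funext s
    rw [if_neg (Nat.succ_ne_zero s)]
  rw [e]

theorem theta_d1_A0_top {m : ℕ} (hm : 2 ≤ m) (θ : MulAut (P m)) (hθ : IsTheta m θ)
    {d₁ : P m →* P (m-1)} (hd₁ : IsStrandRemoval m 1 d₁) :
    d₁ (θ (A₀ m m)) = 1 := by
  have hcomp : ∀ x : P m, d₁ (θ x) = (d₁.comp θ.toMonoidHom) x := fun x => rfl
  rw [hcomp, A0_eq, map_inv, map_list_prod, List.map_map]
  have hterm : ∀ t ∈ List.range m, ((d₁.comp θ.toMonoidHom) ∘ (fun t => A m (t+1) m)) t =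
      (fun t => if t = 0 then A₀ (m-1) (m-1) else A (m-1) t (m-1)) t := by
    intro t ht
    rw [List.mem_range] at ht
    simp only [Function.comp_apply, MonoidHom.comp_apply, MulEquiv.coe_toMonoidHom]
    by_cases ht0 : t = 0
    · subst ht0
      rw [if_pos rfl]
      simp only [zero_add]
      rw [hθ.2 m (by omega) (le_refl m), map_mul, map_mul, map_inv,
        sr_eval hd₁ (by omega) (by omega) (by omega) (le_refl m) (by omega),
        if_pos (Or.inl rfl), d1_A0 hm hd₁ (by omega) (le_refl m), inv_one, one_mul, mul_one]
    · rw [if_neg ht0]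
      by_cases htm : t + 1 = m
      · rw [htm, A_diag, map_one, map_one, show t = m - 1 by omega, A_diag]
      · rw [hθ.1 (t+1) m (by omega) (by omega) (le_refl m),
          sr_eval hd₁ (by omega) (by omega) (by omega) (le_refl m) (fun hh => htm hh),
          if_neg (by omega), phi_one, phi_one, Nat.add_sub_cancel]
  rw [List.map_congr_left hterm, prod_range_head _ m (by omega), if_pos rfl]
  have e : (fun s => if s + 1 = 0 then A₀ (m-1) (m-1) else A (m-1) (s+1) (m-1)) =
      (fun s => A (m-1) (s+1) (m-1)) := by
    funext s
    rw [if_neg (Nat.succ_ne_zero s)]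
  rw [e]
  have e2 : ((List.range (m-1)).map (fun s => A (m-1) (s+1) (m-1))).prod =
      (A₀ (m-1) (m-1))⁻¹ := by
    rw [A0_eq, inv_inv]
  rw [e2, mul_inv_cancel, inv_one]
/-! ### Part 7: the stabilization section `B_n → B_(n+1)` and the key subgroups -/

section Stab
variable {n : ℕ}

/-- Extension of permutations along `Fin.castSucc`. -/
noncomputable def permExt (n : ℕ) : Equiv.Perm (Fin n) →* Equiv.Perm (Fin (n+1)) :=
  Equiv.Perm.viaEmbeddingHom ⟨Fin.castSucc, Fin.castSucc_injective n⟩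

theorem permExt_swap (a b : Fin n) :
    permExt n (Equiv.swap a b) = Equiv.swap a.castSucc b.castSucc := by
  have hemb : ∀ x : Fin n, (⟨Fin.castSucc, Fin.castSucc_injective n⟩ : Fin n ↪ Fin (n+1)) x
      = x.castSucc := fun _ => rfl
  ext x
  rw [permExt, Equiv.Perm.viaEmbeddingHom_apply]
  refine Fin.lastCases ?_ (fun y => ?_) x
  · rw [Equiv.Perm.viaEmbedding_apply_of_notMem]
    · rw [Equiv.swap_apply_of_ne_of_ne (Fin.ne_last_of_lt a.castSucc_lt_last).symm
        (Fin.ne_last_of_lt b.castSucc_lt_last).symm]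
    · rintro ⟨y, hy⟩
      rw [hemb] at hy
      exact Fin.ne_last_of_lt y.castSucc_lt_last hy
  · have := Equiv.Perm.viaEmbedding_apply (Equiv.swap a b)
      ⟨Fin.castSucc, Fin.castSucc_injective n⟩ y
    rw [hemb] at this
    rw [this]
    rcases eq_or_ne y a with rfl | hya
    · rw [Equiv.swap_apply_left, Equiv.swap_apply_left]; rfl
    · rcases eq_or_ne y b with rfl | hyb
      · rw [Equiv.swap_apply_right, Equiv.swap_apply_right]; rfl
      · rw [Equiv.swap_apply_of_ne_of_ne hya hyb, Equiv.swap_apply_of_ne_of_ne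
          (fun h => hya (Fin.castSucc_injective n h))
          (fun h => hyb (Fin.castSucc_injective n h))]
        rfl

/-- The stabilization homomorphism `B_n → B_(n+1)`. -/
def Shom (n : ℕ) : BraidGroup n →* BraidGroup (n+1) :=
  PresentedGroup.toGroup (f := fun i : Fin (n-1) => (σ ⟨i.1, by have := i.2; omega⟩ :
    BraidGroup (n+1))) (by
      rintro r (⟨i, j, hij, rfl⟩ | ⟨i, j, hij, rfl⟩) <;>
        simp only [map_mul, map_inv, FreeGroup.lift_apply_of, mul_inv_eq_one]
      · exact braid_rel _ _ (by simpa using hij)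
      · exact comm_rel _ _ (by simpa using hij))

theorem Shom_of (i : Fin (n-1)) :
    Shom n (σ i) = (σ ⟨i.1, by have := i.2; omega⟩ : BraidGroup (n+1)) :=
  PresentedGroup.toGroup.of _

theorem Shom_sig {k : ℕ} (hk : k ≤ n - 1) : Shom n (sig n k) = sig (n+1) k := by
  by_cases h : 1 ≤ k ∧ k ≤ n - 1
  · rw [sig, dif_pos h, sig, dif_pos ⟨h.1, by omega⟩]
    exact Shom_of _
  · have hk0 : k = 0 := by omega
    subst hk0
    rw [sig, dif_neg h, sig, dif_neg (by omega), map_one]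

theorem Shom_chain {i j : ℕ} (hj : j ≤ n) : Shom n (chain n i j) = chain (n+1) i j := by
  rw [chain, chain, map_list_prod, List.map_map]
  congr 1
  apply List.map_congr_left
  intro t _
  simp only [Function.comp_apply]
  exact Shom_sig (by omega)

theorem Shom_agen {i j : ℕ} (hi : 1 ≤ i) (hij : i < j) (hj : j ≤ n) :
    Shom n (Agen n i j) = Agen (n+1) i j := by
  rw [Agen, Agen, map_mul, map_mul, map_inv, map_pow, Shom_chain hj, Shom_sig (by omega)]

theorem toPerm_Shom (g : BraidGroup n) :
    toPerm (n+1) (Shom n g) = permExt n (toPerm n g) := by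
  have : (toPerm (n+1)).comp (Shom n) = (permExt n).comp (toPerm n) := by
    apply PresentedGroup.ext
    intro x
    rw [MonoidHom.comp_apply, MonoidHom.comp_apply]
    have e1 : (PresentedGroup.of x : BraidGroup n) = σ x := rfl
    rw [e1, Shom_of]
    rw [show toPerm (n+1) (σ ⟨x.1, by have := x.2; omega⟩) =
      swapGen (n+1) ⟨x.1, by have := x.2; omega⟩ from PresentedGroup.toGroup.of _]
    rw [show toPerm n (σ x) = swapGen n x from PresentedGroup.toGroup.of _]
    rw [swapGen, swapGen, permExt_swap]
    congr 1 <;> exact Fin.ext (by simp)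
  exact DFunLike.congr_fun this g

/-- The section `P_n → P_(n+1)`. -/
noncomputable def sP (n : ℕ) : P n →* P (n+1) where
  toFun g := ⟨Shom n g.1, by
    have h1 : toPerm (n+1) (Shom n g.1) = permExt n (toPerm n g.1) := toPerm_Shom g.1
    have h2 : toPerm n g.1 = 1 := g.2
    rw [show (Shom n g.1 ∈ PureBraid (n+1)) ↔ toPerm (n+1) (Shom n g.1) = 1 from Iff.rfl,
      h1, h2, map_one]⟩
  map_one' := Subtype.ext (map_one (Shom n))
  map_mul' g h := Subtype.ext (map_mul (Shom n) g.1 h.1)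

theorem sP_A {i j : ℕ} (hi : 1 ≤ i) (hij : i < j) (hj : j ≤ n) :
    sP n (A n i j) = A (n+1) i j := by
  apply Subtype.ext
  show Shom n (ASym n i j) = ASym (n+1) i j
  rw [ASym_eq_agen hij, ASym_eq_agen hij, Shom_agen hi hij hj]

end Stab

/-- The generating set `{A_(i,n+1)}` of the kernel, ambient version. -/
def XsetAmb (n : ℕ) : Set (BraidGroup (n+1)) :=
  {b | ∃ i : ℕ, 1 ≤ i ∧ i ≤ n ∧ b = Agen (n+1) i (n+1)}

/-- Ambient subgroup generated by the `A_(i,n+1)`. -/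
def HX (n : ℕ) : Subgroup (BraidGroup (n+1)) := Subgroup.closure (XsetAmb n)

/-- The generating set `{A_(i,n+1)}`, subgroup version. -/
def XsetP (n : ℕ) : Set (P (n+1)) :=
  {x | ∃ i : ℕ, 1 ≤ i ∧ i ≤ n ∧ x = A (n+1) i (n+1)}

/-- Subgroup of `P_(n+1)` generated by the `A_(i,n+1)`. -/
def HP (n : ℕ) : Subgroup (P (n+1)) := Subgroup.closure (XsetP n)

/-- The full generating set of `P_(n+1)`, subgroup version. -/
def AsetP (n : ℕ) : Set (P (n+1)) :=
  {x | ∃ i j : ℕ, 1 ≤ i ∧ i < j ∧ j ≤ n + 1 ∧ x = A (n+1) i j}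

theorem HX_le_pure (n : ℕ) : HX n ≤ PureBraid (n+1) := by
  rw [HX, Subgroup.closure_le]
  rintro b ⟨i, hi1, hi2, rfl⟩
  exact Agen_mem (n+1) i (n+1)

theorem mem_HP_of_mem_HX (n : ℕ) (x : P (n+1)) (hx : (x : BraidGroup (n+1)) ∈ HX n) :
    x ∈ HP n := by
  have key : ∀ b : BraidGroup (n+1), b ∈ HX n →
      ∀ hb' : b ∈ PureBraid (n+1), (⟨b, hb'⟩ : P (n+1)) ∈ HP n := by
    intro b hb
    refine Subgroup.closure_induction
      (p := fun c _ => ∀ hc : c ∈ PureBraid (n+1), (⟨c, hc⟩ : P (n+1)) ∈ HP n)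
      ?_ ?_ ?_ ?_ hb
    · rintro c ⟨i, hi1, hi2, rfl⟩ hc
      have : (⟨Agen (n+1) i (n+1), hc⟩ : P (n+1)) = A (n+1) i (n+1) :=
        Subtype.ext (ASym_eq_agen (by omega)).symm
      rw [this]
      exact Subgroup.subset_closure ⟨i, hi1, hi2, rfl⟩
    · intro hc
      have : (⟨(1 : BraidGroup (n+1)), hc⟩ : P (n+1)) = 1 := Subtype.ext rfl
      rw [this]; exact one_mem _
    · intro c e hc he ihc ihe hce
      have hcp : c ∈ PureBraid (n+1) := HX_le_pure n hc
      have hep : e ∈ PureBraid (n+1) := HX_le_pure n he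
      have : (⟨c * e, hce⟩ : P (n+1)) = ⟨c, hcp⟩ * ⟨e, hep⟩ := Subtype.ext rfl
      rw [this]; exact mul_mem (ihc hcp) (ihe hep)
    · intro c hc ihc hci
      have hcp : c ∈ PureBraid (n+1) := HX_le_pure n hc
      have : (⟨c⁻¹, hci⟩ : P (n+1)) = (⟨c, hcp⟩)⁻¹ := Subtype.ext rfl
      rw [this]; exact inv_mem (ihc hcp)
  have := key x.1 hx x.2
  rwa [Subtype.coe_eta] at this

theorem coe_mem_HX_of_mem_HP (n : ℕ) (x : P (n+1)) (hx : x ∈ HP n) :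
    (x : BraidGroup (n+1)) ∈ HX n := by
  have hx2 : x ∈ Subgroup.closure (XsetP n) := hx
  refine Subgroup.closure_induction (k := XsetP n)
    (p := fun y _ => (y : BraidGroup (n+1)) ∈ HX n) ?_ ?_ ?_ ?_ hx2
  · rintro y ⟨i, hi1, hi2, rfl⟩
    rw [A_coe, ASym_eq_agen (by omega)]
    exact Subgroup.subset_closure ⟨i, hi1, hi2, rfl⟩
  · exact one_mem _
  · intro y z _ _ hy hz; exact mul_mem hy hz
  · intro y _ hy; exact inv_mem hy

theorem mem_closure_AsetP (n : ℕ) (x : P (n+1)) : x ∈ Subgroup.closure (AsetP n) := by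
  have hGA : (x : BraidGroup (n+1)) ∈ GA (n+1) := pure_le_GA (n+1) x.2
  have key : ∀ b : BraidGroup (n+1), b ∈ GA (n+1) →
      ∀ hb' : b ∈ PureBraid (n+1), (⟨b, hb'⟩ : P (n+1)) ∈ Subgroup.closure (AsetP n) := by
    intro b hb
    refine Subgroup.closure_induction
      (p := fun c _ => ∀ hc : c ∈ PureBraid (n+1),
        (⟨c, hc⟩ : P (n+1)) ∈ Subgroup.closure (AsetP n))
      ?_ ?_ ?_ ?_ hb
    · rintro c ⟨i, j, hi, hij, hj, rfl⟩ hc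
      have : (⟨Agen (n+1) i j, hc⟩ : P (n+1)) = A (n+1) i j :=
        Subtype.ext (ASym_eq_agen hij).symm
      rw [this]
      exact Subgroup.subset_closure ⟨i, j, hi, hij, hj, rfl⟩
    · intro hc
      have : (⟨(1 : BraidGroup (n+1)), hc⟩ : P (n+1)) = 1 := Subtype.ext rfl
      rw [this]; exact one_mem _
    · intro c e hc he ihc ihe hce
      have hcp : c ∈ PureBraid (n+1) := (Subgroup.closure_le _).mpr
        (by rintro y ⟨i, j, hi, hij, hj, rfl⟩; exact Agen_mem (n+1) i j) hc
      have hep : e ∈ PureBraid (n+1) := (Subgroup.closure_le _).mpr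
        (by rintro y ⟨i, j, hi, hij, hj, rfl⟩; exact Agen_mem (n+1) i j) he
      have : (⟨c * e, hce⟩ : P (n+1)) = ⟨c, hcp⟩ * ⟨e, hep⟩ := Subtype.ext rfl
      rw [this]; exact mul_mem (ihc hcp) (ihe hep)
    · intro c hc ihc hci
      have hcp : c ∈ PureBraid (n+1) := (Subgroup.closure_le _).mpr
        (by rintro y ⟨i, j, hi, hij, hj, rfl⟩; exact Agen_mem (n+1) i j) hc
      have : (⟨c⁻¹, hci⟩ : P (n+1)) = (⟨c, hcp⟩)⁻¹ := Subtype.ext rfl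
      rw [this]; exact inv_mem (ihc hcp)
  have := key x.1 hGA x.2
  rwa [Subtype.coe_eta] at this
/-! ### Part 8: normality, kernel characterization, and the main theorem -/

theorem phi_lt {k x : ℕ} (h : x < k) : phi k x = x := by rw [phi, if_pos h]

theorem sig_mem_HX_normalizer (n k : ℕ) (hk : k ≤ n - 1) :
    sig (n+1) k ∈ Subgroup.normalizer (HX n : Set (BraidGroup (n+1))) := by
  by_cases hk1 : 1 ≤ k
  · apply mem_normalizer_of_conj
    · rintro a ⟨i, hi1, hi2, rfl⟩
      rcases (show k + 2 ≤ i ∨ k + 1 = i ∨ k = i ∨ i + 1 ≤ k by omega) with hc | hc | hc | hc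
      · rw [conj_eq_of_commute (comm_sig_agen hi1 (by omega) (le_refl _) (Or.inl hc))]
        exact Subgroup.subset_closure ⟨i, hi1, hi2, rfl⟩
      · subst hc
        rw [conj_agen_twist hk1 (by omega) (le_refl _)]
        exact mul_mem (mul_mem (inv_mem (Subgroup.subset_closure ⟨k+1, by omega, by omega, rfl⟩))
          (Subgroup.subset_closure ⟨k, hk1, by omega, rfl⟩))
          (Subgroup.subset_closure ⟨k+1, by omega, by omega, rfl⟩)
      · subst hc
        rw [conj_agen_eq hi1 (by omega) (le_refl _)]
        exact Subgroup.subset_closure ⟨k+1, by omega, by omega, rfl⟩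
      · rw [conj_eq_of_commute (comm_sig_agen hi1 (by omega) (le_refl _)
          (Or.inr (Or.inl ⟨hc, by omega⟩)))]
        exact Subgroup.subset_closure ⟨i, hi1, hi2, rfl⟩
    · rintro a ⟨i, hi1, hi2, rfl⟩
      rcases (show k + 2 ≤ i ∨ k + 1 = i ∨ k = i ∨ i + 1 ≤ k by omega) with hc | hc | hc | hc
      · rw [conj_inv_eq_of_commute (comm_sig_agen hi1 (by omega) (le_refl _) (Or.inl hc))]
        exact Subgroup.subset_closure ⟨i, hi1, hi2, rfl⟩
      · subst hc
        have h2 : sig (n+1) k * Agen (n+1) k (n+1) * (sig (n+1) k)⁻¹ = Agen (n+1) (k+1) (n+1) :=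
          conj_agen_eq hk1 (by omega) (le_refl _)
        have h2' : (sig (n+1) k)⁻¹ * Agen (n+1) (k+1) (n+1) * sig (n+1) k
            = Agen (n+1) k (n+1) := by rw [← h2]; group
        rw [h2']
        exact Subgroup.subset_closure ⟨k, hk1, by omega, rfl⟩
      · subst hc
        have h2 : sig (n+1) k * Agen (n+1) k (n+1) * (sig (n+1) k)⁻¹ = Agen (n+1) (k+1) (n+1) :=
          conj_agen_eq hi1 (by omega) (le_refl _)
        have h1 : sig (n+1) k * Agen (n+1) (k+1) (n+1) * (sig (n+1) k)⁻¹ =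
            (Agen (n+1) (k+1) (n+1))⁻¹ * Agen (n+1) k (n+1) * Agen (n+1) (k+1) (n+1) :=
          conj_agen_twist hi1 (by omega) (le_refl _)
        have h3 : (sig (n+1) k)⁻¹ * Agen (n+1) (k+1) (n+1) * sig (n+1) k
            = Agen (n+1) k (n+1) := by rw [← h2]; group
        have h3' : (sig (n+1) k)⁻¹ * (Agen (n+1) (k+1) (n+1))⁻¹ * sig (n+1) k
            = (Agen (n+1) k (n+1))⁻¹ := by rw [← h3]; group
        have h4 : (sig (n+1) k)⁻¹ * ((Agen (n+1) (k+1) (n+1))⁻¹ * Agen (n+1) k (n+1) *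
            Agen (n+1) (k+1) (n+1)) * sig (n+1) k = Agen (n+1) (k+1) (n+1) := by
          rw [← h1]; group
        have h5 : (sig (n+1) k)⁻¹ * Agen (n+1) k (n+1) * sig (n+1) k =
            Agen (n+1) k (n+1) * Agen (n+1) (k+1) (n+1) * (Agen (n+1) k (n+1))⁻¹ := by
          calc (sig (n+1) k)⁻¹ * Agen (n+1) k (n+1) * sig (n+1) k
              = ((sig (n+1) k)⁻¹ * Agen (n+1) (k+1) (n+1) * sig (n+1) k) *
                ((sig (n+1) k)⁻¹ * ((Agen (n+1) (k+1) (n+1))⁻¹ * Agen (n+1) k (n+1) *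
                  Agen (n+1) (k+1) (n+1)) * sig (n+1) k) *
                ((sig (n+1) k)⁻¹ * (Agen (n+1) (k+1) (n+1))⁻¹ * sig (n+1) k) := by group
            _ = Agen (n+1) k (n+1) * Agen (n+1) (k+1) (n+1) * (Agen (n+1) k (n+1))⁻¹ := by
                rw [h3, h4, h3']
        rw [h5]
        exact mul_mem (mul_mem (Subgroup.subset_closure ⟨k, hk1, by omega, rfl⟩)
          (Subgroup.subset_closure ⟨k+1, by omega, by omega, rfl⟩))
          (inv_mem (Subgroup.subset_closure ⟨k, hk1, by omega, rfl⟩))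
      · rw [conj_inv_eq_of_commute (comm_sig_agen hi1 (by omega) (le_refl _)
          (Or.inr (Or.inl ⟨hc, by omega⟩)))]
        exact Subgroup.subset_closure ⟨i, hi1, hi2, rfl⟩
  · have e : sig (n+1) k = 1 := by rw [sig, dif_neg (by omega)]
    rw [e]; exact one_mem _

theorem HP_normal (n : ℕ) : (HP n).Normal := by
  constructor
  intro h hh p
  have hp : (p : BraidGroup (n+1)) ∈ Subgroup.normalizer (HX n : Set (BraidGroup (n+1))) := by
    have hcl := mem_closure_AsetP n p
    refine Subgroup.closure_induction (k := AsetP n)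
      (p := fun y _ => (y : BraidGroup (n+1)) ∈ Subgroup.normalizer (HX n : Set (BraidGroup (n+1)))) ?_ ?_ ?_ ?_ hcl
    · rintro y ⟨i, j, hi, hij, hj, rfl⟩
      rw [A_coe, ASym_eq_agen hij]
      by_cases hjn : j = n + 1
      · subst hjn
        exact Subgroup.le_normalizer (Subgroup.subset_closure ⟨i, hi, by omega, rfl⟩)
      · have hchain : chain (n+1) i j ∈ Subgroup.normalizer (HX n : Set (BraidGroup (n+1))) := by
          rw [chain]
          apply list_prod_mem
          intro g hg
          simp only [List.mem_map, List.mem_range] at hg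
          obtain ⟨t, ht, rfl⟩ := hg
          exact sig_mem_HX_normalizer n _ (by omega)
        have hsig : sig (n+1) i ∈ Subgroup.normalizer (HX n : Set (BraidGroup (n+1))) :=
          sig_mem_HX_normalizer n i (by omega)
        rw [Agen]
        exact mul_mem (mul_mem hchain (pow_mem hsig 2)) (inv_mem hchain)
    · exact one_mem _
    · intro y z _ _ hy hz; exact mul_mem hy hz
    · intro y _ hy; exact inv_mem hy
  have h1 : (h : BraidGroup (n+1)) ∈ HX n := coe_mem_HX_of_mem_HP n h hh
  have h2 : ((p * h * p⁻¹ : P (n+1)) : BraidGroup (n+1)) ∈ HX n :=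
    (Subgroup.mem_normalizer_iff.mp hp (h : BraidGroup (n+1))).mp h1
  exact mem_HP_of_mem_HX n _ h2

theorem ker_le_HP (n : ℕ) (Dn : P (n+1) →* P n)
    (hDn : IsStrandRemoval (n+1) (n+1) Dn) (β : P (n+1)) (hβ : Dn β = 1) : β ∈ HP n := by
  haveI : (HP n).Normal := HP_normal n
  have key : ∀ x ∈ Subgroup.closure (AsetP n),
      QuotientGroup.mk' (HP n) (sP n (Dn x)) = QuotientGroup.mk' (HP n) x := by
    intro x hx
    refine Subgroup.closure_induction (k := AsetP n)
      (p := fun y _ => QuotientGroup.mk' (HP n) (sP n (Dn y)) = QuotientGroup.mk' (HP n) y)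
      ?_ ?_ ?_ ?_ hx
    · rintro y ⟨i, j, hi, hij, hj, rfl⟩
      show QuotientGroup.mk' (HP n) (sP n (Dn (A (n+1) i j))) =
        QuotientGroup.mk' (HP n) (A (n+1) i j)
      by_cases hjn : j = n + 1
      · subst hjn
        have hval : Dn (A (n+1) i (n+1)) = 1 := by
          have h2 := sr_eval hDn hi (by omega) (by omega) (le_refl (n+1)) (by omega)
          rw [if_pos (Or.inr rfl)] at h2
          exact h2
        rw [hval, map_one, map_one]
        symm
        rw [QuotientGroup.mk'_apply, QuotientGroup.eq_one_iff]
        exact Subgroup.subset_closure ⟨i, hi, by omega, rfl⟩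
      · have hval : Dn (A (n+1) i j) = A n i j := by
          have h2 := sr_eval hDn hi (by omega) (by omega) hj (by omega)
          rw [if_neg (by omega), phi_lt (show i < n + 1 by omega),
            phi_lt (show j < n + 1 by omega)] at h2
          exact h2
        rw [hval, sP_A hi hij (by omega)]
    · show QuotientGroup.mk' (HP n) (sP n (Dn 1)) = QuotientGroup.mk' (HP n) 1
      rw [map_one, map_one]
    · intro y z _ _ ihy ihz
      show QuotientGroup.mk' (HP n) (sP n (Dn (y * z))) = QuotientGroup.mk' (HP n) (y * z)
      rw [map_mul, map_mul, map_mul, map_mul]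
      rw [ihy, ihz]
    · intro y _ ihy
      show QuotientGroup.mk' (HP n) (sP n (Dn y⁻¹)) = QuotientGroup.mk' (HP n) y⁻¹
      rw [map_inv, map_inv, map_inv, map_inv, ihy]
  have h1 := key β (mem_closure_AsetP n β)
  rw [hβ, map_one, map_one] at h1
  have h2 : QuotientGroup.mk' (HP n) β = 1 := h1.symm
  rwa [QuotientGroup.mk'_apply, QuotientGroup.eq_one_iff] at h2
/-- For every `n ≥ 2` and every `β ∈ P (n+1)` with `d_{n+1} β = 1`, one has
`∂_n (∂_{n+1} β) = ∂_n (d_1 β)` (the key Delta-group identity on `Ker d_{n+1}`). -/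
theorem del_del_eq_del_d1_on_ker (n : ℕ) (hn : 2 ≤ n)
    (d : ℕ → (P n →* P (n - 1)))
    (hd : ∀ k, 1 ≤ k → k ≤ n → IsStrandRemoval n k (d k))
    (θ : MulAut (P n)) (hθ : IsTheta n θ)
    (D : ℕ → (P (n + 1) →* P n))
    (hD : ∀ k, 1 ≤ k → k ≤ n + 1 → IsStrandRemoval (n + 1) k (D k))
    (Θ : MulAut (P (n + 1))) (hΘ : IsTheta (n + 1) Θ)
    (β : P (n + 1)) (hβ : D (n + 1) β = 1) :
    del n d θ (del (n + 1) D Θ β) = del n d θ (D 1 β) := by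
  have hD1 : IsStrandRemoval (n+1) 1 (D 1) := hD 1 (le_refl 1) (by omega)
  have hd1 : IsStrandRemoval n 1 (d 1) := hd 1 (le_refl 1) (by omega)
  have hβHP : β ∈ HP n := ker_le_HP n (D (n+1)) (hD (n+1) (by omega) (le_refl _)) β hβ
  have hβcl : β ∈ Subgroup.closure (XsetP n) := hβHP
  have hdel : ∀ x : P (n+1), del (n+1) D Θ x = D 1 (Θ x) := fun _ => rfl
  have hdel' : ∀ x : P n, del n d θ x = d 1 (θ x) := fun _ => rfl
  refine Subgroup.closure_induction (k := XsetP n)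
    (p := fun y _ => del n d θ (del (n + 1) D Θ y) = del n d θ (D 1 y)) ?_ ?_ ?_ ?_ hβcl
  · rintro y ⟨i, hi1, hi2, rfl⟩
    by_cases hi1' : i = 1
    · subst hi1'
      -- the only nontrivial generator
      have hDA : D 1 (A (n+1) 1 (n+1)) = 1 := by
        have h2 := sr_eval hD1 (by omega) (by omega) (by omega) (le_refl (n+1))
          (by omega : (1:ℕ) ≠ n+1)
        rw [if_pos (Or.inl rfl)] at h2
        exact h2
      have hDA0 : D 1 (A₀ (n+1) (n+1)) = A₀ n n := by
        have h2 := d1_A0 (m := n+1) (by omega) hD1 (j := n+1) (by omega) (le_refl _)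
        simp only [Nat.add_sub_cancel] at h2
        exact h2
      have hstep : del (n+1) D Θ (A (n+1) 1 (n+1)) = A₀ n n := by
        rw [hdel, hΘ.2 (n+1) (by omega) (le_refl _), map_mul, map_mul, map_inv, hDA, hDA0]
        rw [inv_one, one_mul, mul_one]
      rw [hstep, hDA, map_one, hdel']
      exact theta_d1_A0_top hn θ hθ hd1
    · -- Θ fixes this generator
      rw [hdel, hΘ.1 i (n+1) (by omega) (by omega) (le_refl _)]
  · show del n d θ (del (n + 1) D Θ 1) = del n d θ (D 1 1)
    rw [map_one, map_one, map_one, map_one]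
  · intro y z _ _ ihy ihz
    show del n d θ (del (n + 1) D Θ (y * z)) = del n d θ (D 1 (y * z))
    rw [map_mul, map_mul, map_mul, map_mul]
    rw [show del n d θ (del (n + 1) D Θ y) = del n d θ (D 1 y) from ihy,
      show del n d θ (del (n + 1) D Θ z) = del n d θ (D 1 z) from ihz]
  · intro y _ ihy
    show del n d θ (del (n + 1) D Θ y⁻¹) = del n d θ (D 1 y⁻¹)
    rw [map_inv, map_inv, map_inv, map_inv]
    rw [show del n d θ (del (n + 1) D Θ y) = del n d θ (D 1 y) from ihy]

end Braids
end
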